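/- arXiv:1503.04057 — 9 statements merged into one kernel-verified Lean document; each statement's English description precedes it below -/
import Mathlib

section
/- There exist ĉ > 0 and M > 0, depending only on b, β and S (in particular independent of ε), such that for all ε > 0 and all c ∈ (0, ĉ) with ε/c > M, every nonconstant solution p = (u,v,w,q) of system (1) with lim_{t→−∞} p(t) = p₀, u(0) = u_m, and w > 0 on (−∞,0] satisfies v(t) > u(t) for all t ∈ ℝ and u(t) > 1 for some t. In particular no such solution is a homoclinic orbit, so if system (1) has a homoclinic orbit of this normalized form at a speed c < ĉ, then ε/c ≤ M. -/
set_option maxHeartbeats 1000000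

open Set


open Filter Topology

noncomputable section

/-- `SolOne b β S ε c u v w q` : `p = (u,v,w,q)` solves system (1):
`u' = (v−u)/c, v' = w, w' = b²(v − q S(u)), q' = (ε/c)(1 − q − β q S(u))`. -/
def SolOne (b β : ℝ) (S : ℝ → ℝ) (ε c : ℝ) (u v w q : ℝ → ℝ) : Prop :=
  ∀ t : ℝ,
    HasDerivAt u ((v t - u t) / c) t ∧
    HasDerivAt v (w t) t ∧
    HasDerivAt w (b ^ 2 * (v t - q t * S (u t))) t ∧
    HasDerivAt q (ε / c * (1 - q t - β * (q t * S (u t)))) t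

/-- `SolFast b S q₀ c u v w` : `r = (u,v,w)` solves the fast system (2):
`u' = (v−u)/c, v' = w, w' = b²(v − q₀ S(u))`. -/
def SolFast (b : ℝ) (S : ℝ → ℝ) (q₀ c : ℝ) (u v w : ℝ → ℝ) : Prop :=
  ∀ t : ℝ,
    HasDerivAt u ((v t - u t) / c) t ∧
    HasDerivAt v (w t) t ∧
    HasDerivAt w (b ^ 2 * (v t - q₀ * S (u t))) t

/-- `(u,v,w,q)` is a nonconstant curve. -/
def Nonconst4 (u v w q : ℝ → ℝ) : Prop :=
  ∃ t s : ℝ, (u t, v t, w t, q t) ≠ (u s, v s, w s, q s)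

/-- `(u,v,w)` is a nonconstant curve. -/
def Nonconst3 (u v w : ℝ → ℝ) : Prop :=
  ∃ t s : ℝ, (u t, v t, w t) ≠ (u s, v s, w s)

/-- System (1) has a homoclinic orbit (travelling pulse) at speed `c`:
a nonconstant solution tending to `p₀ = (u₀,u₀,0,q₀)` at both `±∞`. -/
def Homoclinic (b β : ℝ) (S : ℝ → ℝ) (ε c u₀ q₀ : ℝ) : Prop :=
  ∃ u v w q : ℝ → ℝ,
    SolOne b β S ε c u v w q ∧ Nonconst4 u v w q ∧
    Tendsto (fun t => (u t, v t, w t, q t)) atBot (𝓝 (u₀, u₀, 0, q₀)) ∧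
    Tendsto (fun t => (u t, v t, w t, q t)) atTop (𝓝 (u₀, u₀, 0, q₀))

/-- `c₀` is a front speed: the fast system (2) at speed `c₀` has a nonconstant
solution from `(u₀,u₀,0)` at `−∞` to `(uP,uP,0)` at `+∞` with `w > 0` on `ℝ`. -/
def FrontSpeed (b : ℝ) (S : ℝ → ℝ) (q₀ u₀ uP c₀ : ℝ) : Prop :=
  0 < c₀ ∧
  ∃ u v w : ℝ → ℝ,
    SolFast b S q₀ c₀ u v w ∧ Nonconst3 u v w ∧
    Tendsto (fun t => (u t, v t, w t)) atBot (𝓝 (u₀, u₀, 0)) ∧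
    (∀ t : ℝ, 0 < w t) ∧
    Tendsto (fun t => (u t, v t, w t)) atTop (𝓝 (uP, uP, 0))

/-- Normalized fast solution at speed `c`: a nonconstant solution of (2) with
`r(−∞) = (u₀,u₀,0)`, `u(0) = u_m` and `w > 0` on `(−∞,0]`. -/
def NormalizedFast (b : ℝ) (S : ℝ → ℝ) (q₀ u₀ uM c : ℝ) (u v w : ℝ → ℝ) : Prop :=
  SolFast b S q₀ c u v w ∧ Nonconst3 u v w ∧
  Tendsto (fun t => (u t, v t, w t)) atBot (𝓝 (u₀, u₀, 0)) ∧
  u 0 = uM ∧ (∀ t : ℝ, t ≤ 0 → 0 < w t)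

/-- If `f` has derivative `d` at `t` and `f s < f t` for all `s < t`, then `d ≥ 0`. -/
private lemma deriv_nonneg_of_left_lt {f : ℝ → ℝ} {d t : ℝ} (h : HasDerivAt f d t)
    (hm : ∀ s, s < t → f s < f t) : 0 ≤ d := by
  by_contra hd
  push_neg at hd
  have hs : Tendsto (slope f t) (𝓝[<] t) (𝓝 d) :=
    (hasDerivAt_iff_tendsto_slope.1 h).mono_left
      (nhdsWithin_mono t fun x hx => ne_of_lt hx)
  have h1 : ∀ᶠ s in 𝓝[<] t, slope f t s < 0 := hs.eventually (gt_mem_nhds hd)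
  obtain ⟨s, hs0, hst⟩ := (h1.and eventually_mem_nhdsWithin).exists
  have hpos : 0 < slope f t s := by
    rw [slope_def_field]
    exact div_pos_of_neg_of_neg (by linarith [hm s hst]) (by have := mem_Iio.1 hst; linarith)
  linarith

private lemma deriv_nonpos_of_left_gt {f : ℝ → ℝ} {d t : ℝ} (h : HasDerivAt f d t)
    (hm : ∀ s, s < t → f t < f s) : d ≤ 0 := by
  have := deriv_nonneg_of_left_lt (h.neg) (fun s hs => by simpa using hm s hs)
  linarith

/-- If `f` is continuous and `a ≤ f s` for all `s < t`, then `a ≤ f t`. -/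
private lemma cont_le_of_left {f : ℝ → ℝ} (hf : Continuous f) {t a : ℝ}
    (h : ∀ s, s < t → a ≤ f s) : a ≤ f t := by
  have : Tendsto f (𝓝[<] t) (𝓝 (f t)) := (hf.tendsto t).mono_left nhdsWithin_le_nhds
  exact ge_of_tendsto this (eventually_mem_nhdsWithin.mono fun s hs => h s hs)

private lemma cont_ge_of_left {f : ℝ → ℝ} (hf : Continuous f) {t a : ℝ}
    (h : ∀ s, s < t → f s ≤ a) : f t ≤ a := by
  have := cont_le_of_left (f := fun x => -f x) (hf.neg) (t := t) (a := -a)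
    (fun s hs => by simpa using h s hs)
  simpa using this




/-- Lemma 10 of the paper. -/
theorem small_c_large_eps_over_c_no_pulse
    (b β u₀ q₀ u_m uP u_knee : ℝ) (S : ℝ → ℝ)
    (hb : 0 < b) (hβ : 0 < β)
    (hS : ContDiff ℝ 1 S)
    (hS' : ∀ x : ℝ, 0 < deriv S x)
    (hSpos : ∀ x : ℝ, 0 < S x) (hSlt : ∀ x : ℝ, S x < 1)
    -- (C1): unique equilibrium p₀ = (u₀,u₀,0,q₀)
    (hq₀ : q₀ = 1 / (1 + β * S u₀)) (hu₀ : u₀ = q₀ * S u₀)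
    (hC1 : ∀ u q : ℝ, u = q * S u → q = 1 / (1 + β * S u) → u = u₀ ∧ q = q₀)
    -- (C2): h(u) = u/S(u) has one local max then one local min (at u_knee), no other critical points
    (hC2 : ∃ u_max : ℝ, u_max < u_knee ∧ IsLocalMax (fun x : ℝ => x / S x) u_max ∧
      IsLocalMin (fun x : ℝ => x / S x) u_knee ∧
      ∀ x : ℝ, deriv (fun y : ℝ => y / S y) x = 0 → x = u_max ∨ x = u_knee)
    -- (C3): h(u) = q₀ has exactly three solutions u₀ < u_m < uP
    (hlt₁ : u₀ < u_m) (hlt₂ : u_m < uP)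
    (hC3 : ∀ x : ℝ, x / S x = q₀ ↔ x = u₀ ∨ x = u_m ∨ x = uP)
    -- (C4)
    (hC4 : 0 < ∫ x in u₀..uP, (q₀ * S x - x)) :
    ∃ chat M : ℝ, 0 < chat ∧ 0 < M ∧
      (∀ ε c : ℝ, 0 < ε → 0 < c → c < chat → M < ε / c →
        ∀ u v w q : ℝ → ℝ,
          SolOne b β S ε c u v w q → Nonconst4 u v w q →
          Tendsto (fun t => (u t, v t, w t, q t)) atBot (𝓝 (u₀, u₀, 0, q₀)) →
          u 0 = u_m → (∀ t : ℝ, t ≤ 0 → 0 < w t) →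
          (∀ t : ℝ, u t < v t) ∧ (∃ t : ℝ, 1 < u t)) ∧
      (∀ ε c : ℝ, 0 < ε → 0 < c → c < chat →
        (∃ u v w q : ℝ → ℝ,
          SolOne b β S ε c u v w q ∧ Nonconst4 u v w q ∧
          Tendsto (fun t => (u t, v t, w t, q t)) atBot (𝓝 (u₀, u₀, 0, q₀)) ∧
          Tendsto (fun t => (u t, v t, w t, q t)) atTop (𝓝 (u₀, u₀, 0, q₀)) ∧
          u 0 = u_m ∧ (∀ t : ℝ, t ≤ 0 → 0 < w t)) →
        ε / c ≤ M) := by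
  have hScont : Continuous S := hS.continuous
  have hSd : ∀ x : ℝ, HasDerivAt S (deriv S x) x := fun x => ((hS.differentiable one_ne_zero) x).hasDerivAt
  have hS'cont : Continuous (deriv S) := hS.continuous_deriv le_rfl
  set Q : ℝ → ℝ := fun x => (1 + β * S x)⁻¹ with hQdef
  have hden : ∀ x, 0 < 1 + β * S x := fun x => by nlinarith [hSpos x]
  have hQpos : ∀ x, 0 < Q x := fun x => inv_pos.2 (hden x)
  have hQlt1 : ∀ x, Q x < 1 := fun x => by
    rw [hQdef]
    have h1 : (1:ℝ) < 1 + β * S x := by nlinarith [hSpos x]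
    exact inv_lt_one_of_one_lt₀ h1
  have hQcont : Continuous Q := (continuous_const.add (continuous_const.mul hScont)).inv₀
    (fun x => ne_of_gt (hden x))
  have hQS_lt1 : ∀ x, Q x * S x < 1 := fun x => by nlinarith [hQpos x, hQlt1 x, hSpos x, hSlt x]
  have hq₀Q : q₀ = Q u₀ := by rw [hq₀, hQdef, one_div]
  have hq₀pos : 0 < q₀ := hq₀Q ▸ hQpos u₀
  have hq₀lt1 : q₀ < 1 := hq₀Q ▸ hQlt1 u₀
  have hu₀pos : 0 < u₀ := by rw [hu₀]; exact mul_pos hq₀pos (hSpos u₀)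
  have hu₀lt1 : u₀ < 1 := by nlinarith [hSpos u₀, hSlt u₀, hq₀pos, hq₀lt1]
  have hu_m_eq : u_m = q₀ * S u_m := by
    have h := (hC3 u_m).2 (Or.inr (Or.inl rfl))
    rw [div_eq_iff (ne_of_gt (hSpos u_m))] at h
    linarith
  have hu_m_lt1 : u_m < 1 := by nlinarith [hSpos u_m, hSlt u_m, hq₀pos, hq₀lt1]
  set g : ℝ → ℝ := fun x => x - Q x * S x with hgdef
  have hgcont : Continuous g := continuous_id.sub (hQcont.mul hScont)
  have hgzero : ∀ x, g x = 0 → x = u₀ := by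
    intro x hx
    have h1 : x = Q x * S x := by
      have : x - Q x * S x = 0 := hx
      linarith
    exact (hC1 x (Q x) h1 (by rw [hQdef, one_div])).1
  have hgpos : ∀ x, x ∈ Icc u_m (1:ℝ) → 0 < g x := by
    intro x hx
    rcases lt_trichotomy (g x) 0 with hneg | h0 | hpos
    · exfalso
      have hg2 : 0 < g 2 := by
        have := hQS_lt1 2
        simp only [hgdef]
        linarith
      have hx2 : x ≤ 2 := le_trans hx.2 one_le_two
      have h0m : (0:ℝ) ∈ Icc (g x) (g 2) := ⟨le_of_lt hneg, le_of_lt hg2⟩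
      obtain ⟨y, hy, hy0⟩ := intermediate_value_Icc hx2 hgcont.continuousOn h0m
      have := hgzero y hy0
      have := hx.1
      have := hy.1
      linarith
    · exact absurd (hgzero x h0) (by intro h; have := hx.1; linarith)
    · exact hpos
  have hIcc_ne : (Icc u_m (1:ℝ)).Nonempty := ⟨u_m, le_refl _, le_of_lt hu_m_lt1⟩
  obtain ⟨xm, hxm_mem, hxm⟩ := isCompact_Icc.exists_isMinOn hIcc_ne hgcont.continuousOn
  set m := g xm with hmdef
  have hmpos : 0 < m := hgpos xm hxm_mem
  have hm_le : ∀ x, x ∈ Icc u_m (1:ℝ) → m ≤ g x := fun x hx => hxm hx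
  set δ := m / 2 with hδdef
  have hδpos : 0 < δ := half_pos hmpos
  have hIcc2_ne : (Icc u₀ (1:ℝ)).Nonempty := ⟨u₀, le_refl _, le_of_lt hu₀lt1⟩
  obtain ⟨xs, hxs_mem, hxs⟩ := isCompact_Icc.exists_isMaxOn hIcc2_ne hS'cont.continuousOn
  set SM := deriv S xs with hSMdef
  have hSMpos : 0 < SM := hS' xs
  have hSM_le : ∀ x, x ∈ Icc u₀ (1:ℝ) → deriv S x ≤ SM := fun x hx => hxs hx
  set Cq := β * SM with hCqdef
  have hCqpos : 0 < Cq := mul_pos hβ hSMpos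
  set W₀ := Real.sqrt (2 * b ^ 2 * (1 - u₀)) with hW₀def
  have hW₀pos : 0 < W₀ := Real.sqrt_pos.2 (by nlinarith [hu₀lt1, pow_pos hb 2])
  have hW₀sq : W₀ ^ 2 = 2 * b ^ 2 * (1 - u₀) := Real.sq_sqrt (by nlinarith [hu₀lt1, pow_pos hb 2])
  set M := Cq * W₀ / δ + 1 with hMdef
  have hMpos : 0 < M := by positivity
  clear_value Q g m δ SM Cq W₀ M
  have key : ∀ ε c : ℝ, 0 < ε → 0 < c → c < 1 → M < ε / c →
      ∀ u v w q : ℝ → ℝ,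
        (∀ t : ℝ,
          HasDerivAt u ((v t - u t) / c) t ∧
          HasDerivAt v (w t) t ∧
          HasDerivAt w (b ^ 2 * (v t - q t * S (u t))) t ∧
          HasDerivAt q (ε / c * (1 - q t - β * (q t * S (u t))))  t) →
        Tendsto (fun t => (u t, v t, w t, q t)) atBot (𝓝 (u₀, u₀, 0, q₀)) →
        u 0 = u_m → (∀ t : ℝ, t ≤ 0 → 0 < w t) →
        (∀ t : ℝ, u t < v t) ∧ (∃ t : ℝ, 1 < u t) := by
    intro ε c hε hc hc1 hMεc u v w q hsol htend hu0 hw0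
    have hεc : 0 < ε / c := div_pos hε hc
    have hc0 : c ≠ 0 := ne_of_gt hc
    have hu' : ∀ t, HasDerivAt u ((v t - u t) / c) t := fun t => (hsol t).1
    have hv' : ∀ t, HasDerivAt v (w t) t := fun t => (hsol t).2.1
    have hw' : ∀ t, HasDerivAt w (b ^ 2 * (v t - q t * S (u t))) t := fun t => (hsol t).2.2.1
    have hq' : ∀ t, HasDerivAt q (ε / c * (1 - q t - β * (q t * S (u t)))) t :=
      fun t => (hsol t).2.2.2
    have hucont : Continuous u := by
      have : Differentiable ℝ u := fun t => (hu' t).differentiableAt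
      exact this.continuous
    have hvcont : Continuous v := by
      have : Differentiable ℝ v := fun t => (hv' t).differentiableAt
      exact this.continuous
    have hwcont : Continuous w := by
      have : Differentiable ℝ w := fun t => (hw' t).differentiableAt
      exact this.continuous
    have hqcont : Continuous q := by
      have : Differentiable ℝ q := fun t => (hq' t).differentiableAt
      exact this.continuous
    have htu : Tendsto u atBot (𝓝 u₀) := by
      have h := (continuous_fst.tendsto ((u₀ : ℝ), u₀, (0:ℝ), q₀)).comp htend
      simpa [Function.comp_def] using h
    have htv : Tendsto v atBot (𝓝 u₀) := by
      have h := ((continuous_fst.comp continuous_snd).tendsto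
        ((u₀ : ℝ), u₀, (0:ℝ), q₀)).comp htend
      simpa [Function.comp_def] using h
    have htw : Tendsto w atBot (𝓝 0) := by
      have h := ((continuous_fst.comp (continuous_snd.comp continuous_snd)).tendsto
        ((u₀ : ℝ), u₀, (0:ℝ), q₀)).comp htend
      simpa [Function.comp_def] using h
    have htq : Tendsto q atBot (𝓝 q₀) := by
      have h := ((continuous_snd.comp (continuous_snd.comp continuous_snd)).tendsto
        ((u₀ : ℝ), u₀, (0:ℝ), q₀)).comp htend
      simpa [Function.comp_def] using h
    -- q stays in (0,1)
    have hq_lt1 : ∀ t, q t < 1 := by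
      by_contra hcon
      push_neg at hcon
      obtain ⟨tb, htb⟩ := hcon
      set B : Set ℝ := {t | 1 ≤ q t} with hBdef
      have hBclosed : IsClosed B := isClosed_le continuous_const hqcont
      obtain ⟨a, ha⟩ := eventually_atBot.1 (htq.eventually (gt_mem_nhds hq₀lt1))
      have hBbdd : BddBelow B := by
        refine ⟨a, fun t ht => ?_⟩
        by_contra hlt
        push_neg at hlt
        exact absurd ht (not_le.2 (ha t (le_of_lt hlt)))
      set ts := sInf B with htsdef
      have htsB : ts ∈ B := hBclosed.csInf_mem ⟨tb, htb⟩ hBbdd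
      have hgood : ∀ s, s < ts → q s < 1 := by
        intro s hs
        have hsB : s ∉ B := notMem_of_lt_csInf hs hBbdd
        simpa [hBdef] using hsB
      have hd : 0 ≤ ε / c * (1 - q ts - β * (q ts * S (u ts))) :=
        deriv_nonneg_of_left_lt (hq' ts) (fun s hs => lt_of_lt_of_le (hgood s hs) htsB)
      have hts1 : (1:ℝ) ≤ q ts := htsB
      have h1 : 0 < β * (q ts * S (u ts)) :=
        mul_pos hβ (mul_pos (by linarith only [hts1]) (hSpos (u ts)))
      have h2 : 1 - q ts - β * (q ts * S (u ts)) < 0 := by linarith only [hts1, h1]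
      have h3 : ε / c * (1 - q ts - β * (q ts * S (u ts))) < 0 :=
        mul_neg_of_pos_of_neg hεc h2
      linarith only [hd, h3]
    have hq_pos : ∀ t, 0 < q t := by
      by_contra hcon
      push_neg at hcon
      obtain ⟨tb, htb⟩ := hcon
      set B : Set ℝ := {t | q t ≤ 0} with hBdef
      have hBclosed : IsClosed B := isClosed_le hqcont continuous_const
      obtain ⟨a, ha⟩ := eventually_atBot.1 (htq.eventually (lt_mem_nhds hq₀pos))
      have hBbdd : BddBelow B := by
        refine ⟨a, fun t ht => ?_⟩
        by_contra hlt
        push_neg at hlt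
        exact absurd ht (not_le.2 (ha t (le_of_lt hlt)))
      set ts := sInf B with htsdef
      have htsB : ts ∈ B := hBclosed.csInf_mem ⟨tb, htb⟩ hBbdd
      have hgood : ∀ s, s < ts → 0 < q s := by
        intro s hs
        have hsB : s ∉ B := notMem_of_lt_csInf hs hBbdd
        simpa [hBdef] using hsB
      have hd : ε / c * (1 - q ts - β * (q ts * S (u ts))) ≤ 0 :=
        deriv_nonpos_of_left_gt (hq' ts) (fun s hs => lt_of_le_of_lt htsB (hgood s hs))
      have hts0 : q ts ≤ 0 := htsB
      have h1 : β * (q ts * S (u ts)) ≤ 0 :=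
        mul_nonpos_of_nonneg_of_nonpos (le_of_lt hβ)
          (mul_nonpos_of_nonpos_of_nonneg hts0 (le_of_lt (hSpos (u ts))))
      have h2 : 0 < 1 - q ts - β * (q ts * S (u ts)) := by linarith only [hts0, h1]
      have h3 : 0 < ε / c * (1 - q ts - β * (q ts * S (u ts))) := mul_pos hεc h2
      linarith only [hd, h3]
    -- psi and its derivative
    set QD : ℝ → ℝ := fun x => -(β * deriv S x) / (1 + β * S x) ^ 2 with hQDdef
    have hQder : ∀ x, HasDerivAt Q (QD x) x := by
      intro x
      rw [hQdef]
      exact (((hSd x).const_mul β).const_add 1).inv (ne_of_gt (hden x))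
    have hψ' : ∀ t, HasDerivAt (fun t => q t - Q (u t))
        (ε / c * (1 - q t - β * (q t * S (u t))) - QD (u t) * ((v t - u t) / c)) t := fun t =>
      (hq' t).sub ((hQder (u t)).comp t (hu' t))
    set ψ : ℝ → ℝ := fun t => q t - Q (u t) with hψdef
    have hψcont : Continuous ψ := hqcont.sub (hQcont.comp hucont)
    have hψbot : Tendsto ψ atBot (𝓝 0) := by
      have h := htq.sub ((hQcont.tendsto u₀).comp htu)
      rw [hψdef]
      simpa [← hq₀Q] using h
    clear_value QD ψ
    -- exp factor
    have hexp' : ∀ t : ℝ, HasDerivAt (fun t : ℝ => Real.exp (t / c)) (Real.exp (t / c) * (1 / c)) t :=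
      fun t => (Real.hasDerivAt_exp _).comp t ((hasDerivAt_id t).div_const c)
    have hexpbot : Tendsto (fun t : ℝ => Real.exp (t / c)) atBot (𝓝 0) :=
      Real.tendsto_exp_atBot.comp (tendsto_id.atBot_div_const hc)
    have hexpcont : Continuous (fun t : ℝ => Real.exp (t / c)) :=
      Real.continuous_exp.comp (continuous_id.div_const c)
    -- v - u > 0 as long as w > 0 in the past
    have hzpos : ∀ T : ℝ, (∀ s, s < T → 0 < w s) → ∀ s, s ≤ T → 0 < v s - u s := by
      intro T hwp s hsT
      set f : ℝ → ℝ := fun t => (v t - u t) * Real.exp (t / c) with hfdef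
      have hfder : ∀ t, HasDerivAt f (w t * Real.exp (t / c)) t := by
        intro t
        have hz : HasDerivAt (fun t => v t - u t) (w t - (v t - u t) / c) t :=
          (hv' t).sub (hu' t)
        have h := hz.mul (hexp' t)
        rw [hfdef]
        refine h.congr_deriv ?_
        field_simp
        ring
      have hfcont : Continuous f := ((hvcont.sub hucont).mul hexpcont)
      have hmono : StrictMonoOn f (Iic T) := by
        apply strictMonoOn_of_deriv_pos (convex_Iic T) hfcont.continuousOn
        intro x hx
        rw [interior_Iic] at hx
        rw [(hfder x).deriv]
        exact mul_pos (hwp x hx) (Real.exp_pos _)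
      have hfbot : Tendsto f atBot (𝓝 0) := by
        have h1 : Tendsto (fun t => v t - u t) atBot (𝓝 0) := by
          simpa using htv.sub htu
        simpa using h1.mul hexpbot
      have hfs1 : 0 ≤ f (s - 1) := by
        apply le_of_tendsto hfbot
        rw [eventually_atBot]
        exact ⟨s - 2, fun r hr => le_of_lt
          (hmono (by simp only [mem_Iic]; linarith) (by simp only [mem_Iic]; linarith)
            (by linarith))⟩
      have hlt : f (s - 1) < f s :=
        hmono (by simp only [mem_Iic]; linarith) (by simp only [mem_Iic]; linarith) (by linarith)
      have hfs : 0 < f s := lt_of_le_of_lt hfs1 hlt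
      by_contra hcon
      push_neg at hcon
      have : f s ≤ 0 := by
        rw [hfdef]
        exact mul_nonpos_of_nonpos_of_nonneg (by linarith) (le_of_lt (Real.exp_pos _))
      linarith
    -- monotonicity of u and v
    have humono : ∀ T : ℝ, (∀ s, s < T → 0 < w s) → StrictMonoOn u (Iic T) := by
      intro T hwp
      apply strictMonoOn_of_deriv_pos (convex_Iic T) hucont.continuousOn
      intro x hx
      rw [interior_Iic] at hx
      rw [(hu' x).deriv]
      exact div_pos (hzpos T hwp x (le_of_lt hx)) hc
    have hvmono : ∀ T : ℝ, (∀ s, s < T → 0 < w s) → StrictMonoOn v (Iic T) := by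
      intro T hwp
      apply strictMonoOn_of_deriv_pos (convex_Iic T) hvcont.continuousOn
      intro x hx
      rw [interior_Iic] at hx
      rw [(hv' x).deriv]
      exact hwp x hx
    have hu_gt : ∀ T : ℝ, (∀ s, s < T → 0 < w s) → ∀ s, s ≤ T → u₀ < u s := by
      intro T hwp s hsT
      have hmono := humono T hwp
      have h1 : u₀ ≤ u (s - 1) := by
        apply le_of_tendsto htu
        rw [eventually_atBot]
        exact ⟨s - 2, fun r hr => le_of_lt
          (hmono (by simp only [mem_Iic]; linarith) (by simp only [mem_Iic]; linarith)
            (by linarith))⟩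
      have h2 : u (s - 1) < u s :=
        hmono (by simp only [mem_Iic]; linarith) (by simp only [mem_Iic]; linarith) (by linarith)
      linarith
    have hwnn : ∀ T : ℝ, (∀ s, s < T → 0 < w s) → ∀ s, s ≤ T → 0 ≤ w s := by
      intro T hwp s hsT
      rcases lt_or_eq_of_le hsT with h | h
      · exact le_of_lt (hwp s h)
      · subst h
        exact cont_le_of_left hwcont (fun r hr => le_of_lt (hwp r hr))
    -- energy bound: w ≤ W₀ while v ≤ 1
    have hWbound : ∀ T : ℝ, (∀ s, s < T → 0 < w s) → (∀ s, s ≤ T → v s ≤ 1) →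
        ∀ s, s ≤ T → w s ≤ W₀ := by
      intro T hwp hv1 s hsT
      set G : ℝ → ℝ := fun t => w t ^ 2 / 2 - b ^ 2 * v t with hGdef
      have hGder : ∀ t, HasDerivAt G
          (w t * (b ^ 2 * (v t - q t * S (u t))) - b ^ 2 * w t) t := by
        intro t
        have h1 : HasDerivAt (fun t => w t ^ 2 / 2)
            (w t * (b ^ 2 * (v t - q t * S (u t)))) t := by
          have h2 := ((hw' t).pow 2).div_const 2
          refine h2.congr_deriv ?_
          push_cast
          ring
        exact h1.sub ((hv' t).const_mul (b ^ 2))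
      have hGcont : Continuous G := ((hwcont.pow 2).div_const 2).sub (continuous_const.mul hvcont)
      have hGanti : AntitoneOn G (Iic T) := by
        apply antitoneOn_of_deriv_nonpos (convex_Iic T) hGcont.continuousOn
        · intro x hx
          exact (hGder x).differentiableAt.differentiableWithinAt
        · intro x hx
          rw [interior_Iic] at hx
          rw [(hGder x).deriv]
          have h1 := hwnn T hwp x (le_of_lt hx)
          have h2 := hv1 x (le_of_lt hx)
          have h3 : 0 < q x * S (u x) := mul_pos (hq_pos x) (hSpos (u x))
          have h4 : v x - q x * S (u x) - 1 ≤ 0 := by linarith only [h2, h3]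
          have h5 : w x * (v x - q x * S (u x) - 1) ≤ 0 :=
            mul_nonpos_of_nonneg_of_nonpos h1 h4
          have h6 : b ^ 2 * (w x * (v x - q x * S (u x) - 1)) ≤ 0 :=
            mul_nonpos_of_nonneg_of_nonpos (le_of_lt (pow_pos hb 2)) h5
          linarith only [h6]
      have hGbot : Tendsto G atBot (𝓝 (0 - b ^ 2 * u₀)) := by
        have h1 := ((htw.pow 2).div_const 2).sub (htv.const_mul (b ^ 2))
        simpa using h1
      have hGle : G s ≤ 0 - b ^ 2 * u₀ := by
        apply ge_of_tendsto hGbot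
        rw [eventually_atBot]
        refine ⟨s - 1, fun r hr => hGanti (by simp only [mem_Iic]; linarith) (mem_Iic.2 hsT)
          (by linarith)⟩
      have hsq : w s ^ 2 ≤ 2 * b ^ 2 * (1 - u₀) := by
        have hvs := hv1 s hsT
        have h0 : w s ^ 2 / 2 - b ^ 2 * v s ≤ 0 - b ^ 2 * u₀ := hGle
        have h7 : b ^ 2 * v s ≤ b ^ 2 * 1 :=
          mul_le_mul_of_nonneg_left hvs (le_of_lt (pow_pos hb 2))
        linarith only [h0, h7]
      have hwge := hwnn T hwp s hsT
      by_contra hcon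
      push_neg at hcon
      have h7 : W₀ ^ 2 < w s ^ 2 := by
        apply pow_lt_pow_left₀ hcon (le_of_lt hW₀pos)
        norm_num
      linarith only [h7, hsq, hW₀sq]
    -- bound on v - u while v ≤ 1
    have hzbound : ∀ T : ℝ, (∀ s, s < T → 0 < w s) → (∀ s, s ≤ T → v s ≤ 1) →
        ∀ s, s ≤ T → v s - u s ≤ c * W₀ := by
      intro T hwp hv1 s hsT
      set F : ℝ → ℝ := fun t => (v t - u t - c * W₀) * Real.exp (t / c) with hFdef
      have hFder : ∀ t, HasDerivAt F ((w t - W₀) * Real.exp (t / c)) t := by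
        intro t
        have hz : HasDerivAt (fun t => v t - u t - c * W₀)
            (w t - (v t - u t) / c) t := ((hv' t).sub (hu' t)).sub_const _
        have h := hz.mul (hexp' t)
        rw [hFdef]
        refine h.congr_deriv ?_
        field_simp
        ring
      have hFcont : Continuous F := ((hvcont.sub hucont).sub continuous_const).mul hexpcont
      have hFanti : AntitoneOn F (Iic T) := by
        apply antitoneOn_of_deriv_nonpos (convex_Iic T) hFcont.continuousOn
        · intro x hx
          exact (hFder x).differentiableAt.differentiableWithinAt
        · intro x hx
          rw [interior_Iic] at hx
          rw [(hFder x).deriv]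
          exact mul_nonpos_of_nonpos_of_nonneg
            (by linarith [hWbound T hwp hv1 x (le_of_lt hx)]) (le_of_lt (Real.exp_pos _))
      have hFbot : Tendsto F atBot (𝓝 0) := by
        have h1 : Tendsto (fun t => v t - u t - c * W₀) atBot (𝓝 (u₀ - u₀ - c * W₀)) :=
          (htv.sub htu).sub_const _
        have := h1.mul hexpbot
        simpa using this
      have hFle : F s ≤ 0 := by
        apply ge_of_tendsto hFbot
        rw [eventually_atBot]
        exact ⟨s - 1, fun r hr => hFanti (by simp only [mem_Iic]; linarith) (mem_Iic.2 hsT)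
          (by linarith)⟩
      by_contra hcon
      push_neg at hcon
      have : 0 < F s := mul_pos (by linarith) (Real.exp_pos _)
      linarith
    -- THE MAIN INVARIANT: w stays positive, and ψ < δ while v ≤ 1
    have hBempty : ∀ t : ℝ, 0 < w t ∧ (v t ≤ 1 → ψ t < δ) := by
      by_contra hcon
      push_neg at hcon
      obtain ⟨tb, htb⟩ := hcon
      set B : Set ℝ := {t | w t ≤ 0 ∨ (v t ≤ 1 ∧ δ ≤ ψ t)} with hBdef
      have htbB : tb ∈ B := by
        by_cases hwtb : w tb ≤ 0
        · exact Or.inl hwtb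
        · exact Or.inr (htb (lt_of_not_ge hwtb))
      have hBclosed : IsClosed B :=
        (isClosed_le hwcont continuous_const).union
          ((isClosed_le hvcont continuous_const).inter (isClosed_le continuous_const hψcont))
      obtain ⟨a1, ha1⟩ := eventually_atBot.1 (hψbot.eventually (gt_mem_nhds hδpos))
      have hBbdd : BddBelow B := by
        refine ⟨min a1 0, fun t ht => ?_⟩
        by_contra hlt
        push_neg at hlt
        rcases ht with h | ⟨_, h2⟩
        · exact absurd (hw0 t (le_of_lt (lt_of_lt_of_le hlt (min_le_right _ _)))) (not_lt.2 h)
        · exact absurd (ha1 t (le_of_lt (lt_of_lt_of_le hlt (min_le_left _ _)))) (not_lt.2 h2)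
      set ts := sInf B with htsdef
      have htsB : ts ∈ B := hBclosed.csInf_mem ⟨tb, htbB⟩ hBbdd
      have hgood : ∀ s, s < ts → 0 < w s ∧ (v s ≤ 1 → ψ s < δ) := by
        intro s hs
        have hsB : s ∉ B := notMem_of_lt_csInf hs hBbdd
        rw [hBdef] at hsB
        simp only [mem_setOf_eq] at hsB
        push_neg at hsB
        exact hsB
      have hwlt : ∀ s, s < ts → 0 < w s := fun s hs => (hgood s hs).1
      by_cases hwts : w ts ≤ 0
      · -- w vanishes at ts
        have hwts0 : w ts = 0 := le_antisymm hwts (hwnn ts hwlt ts le_rfl)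
        have hd : b ^ 2 * (v ts - q ts * S (u ts)) ≤ 0 :=
          deriv_nonpos_of_left_gt (hw' ts) (fun s hs => by rw [hwts0]; exact hwlt s hs)
        by_cases hvts : 1 < v ts
        · have h1 : q ts * S (u ts) < q ts * 1 :=
            mul_lt_mul_of_pos_left (hSlt (u ts)) (hq_pos ts)
          have h2 : 0 < b ^ 2 * (v ts - q ts * S (u ts)) :=
            mul_pos (pow_pos hb 2) (by linarith only [h1, hvts, hq_lt1 ts])
          linarith only [h2, hd]
        · push_neg at hvts
          have hv1 : ∀ s, s ≤ ts → v s ≤ 1 := by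
            intro s hsT
            rcases lt_or_eq_of_le hsT with h | h
            · exact le_of_lt (lt_of_lt_of_le
                ((hvmono ts hwlt) (mem_Iic.2 (le_of_lt h)) (mem_Iic.2 le_rfl) h) hvts)
            · subst h; exact hvts
          have hψle : ψ ts ≤ δ := cont_ge_of_left hψcont
            (fun s hs => le_of_lt ((hgood s hs).2 (hv1 s (le_of_lt hs))))
          have hts_pos : 0 < ts := by
            by_contra h
            push_neg at h
            have := hw0 ts h
            rw [hwts0] at this
            exact lt_irrefl 0 this
          have hum_le : u_m ≤ u ts := by
            rw [← hu0]
            exact le_of_lt ((humono ts hwlt) (mem_Iic.2 (le_of_lt hts_pos))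
              (mem_Iic.2 le_rfl) hts_pos)
          have hz_ts := hzpos ts hwlt ts le_rfl
          have hu_le1 : u ts ≤ 1 := by linarith
          have hmg := hm_le (u ts) ⟨hum_le, hu_le1⟩
          have hq_le : q ts ≤ Q (u ts) + δ := by
            simp only [hψdef] at hψle
            linarith only [hψle]
          have hSu := hSpos (u ts)
          have hSu1 := hSlt (u ts)
          have hgu : m ≤ u ts - Q (u ts) * S (u ts) := by
            simp only [hgdef] at hmg
            exact hmg
          have h7 : q ts * S (u ts) ≤ (Q (u ts) + δ) * S (u ts) :=
            mul_le_mul_of_nonneg_right hq_le (le_of_lt hSu)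
          have h8 : δ * S (u ts) ≤ δ * 1 :=
            mul_le_mul_of_nonneg_left (le_of_lt hSu1) (le_of_lt hδpos)
          have hδm : δ = m / 2 := hδdef
          have hδ2 : δ ≤ v ts - q ts * S (u ts) := by
            linarith only [h7, h8, hz_ts, hgu, hδm]
          have h9 : 0 < b ^ 2 * δ := mul_pos (pow_pos hb 2) hδpos
          have h10 : b ^ 2 * δ ≤ b ^ 2 * (v ts - q ts * S (u ts)) :=
            mul_le_mul_of_nonneg_left hδ2 (le_of_lt (pow_pos hb 2))
          linarith only [h9, h10, hd]
      · -- ψ crossing at ts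
        push_neg at hwts
        obtain ⟨hvts, hψts⟩ : v ts ≤ 1 ∧ δ ≤ ψ ts := htsB.resolve_left (not_le.2 hwts)
        have hv1 : ∀ s, s ≤ ts → v s ≤ 1 := by
          intro s hsT
          rcases lt_or_eq_of_le hsT with h | h
          · exact le_of_lt (lt_of_lt_of_le
              ((hvmono ts hwlt) (mem_Iic.2 (le_of_lt h)) (mem_Iic.2 le_rfl) h) hvts)
          · subst h; exact hvts
        have hψlt : ∀ s, s < ts → ψ s < δ := fun s hs => (hgood s hs).2 (hv1 s (le_of_lt hs))
        have hψeq : ψ ts = δ :=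
          le_antisymm (cont_ge_of_left hψcont fun s hs => le_of_lt (hψlt s hs)) hψts
        have hd : 0 ≤ ε / c * (1 - q ts - β * (q ts * S (u ts))) - QD (u ts) * ((v ts - u ts) / c) :=
          deriv_nonneg_of_left_lt (hψ' ts) (fun s hs => by rw [hψeq]; exact hψlt s hs)
        have hzb := hzbound ts hwlt hv1 ts le_rfl
        have hz_ts := hzpos ts hwlt ts le_rfl
        have hu0lt := hu_gt ts hwlt ts le_rfl
        have hule1 : u ts ≤ 1 := by linarith
        have hSMle := hSM_le (u ts) ⟨le_of_lt hu0lt, hule1⟩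
        have hS'p := hS' (u ts)
        have hqQ : q ts - Q (u ts) = δ := by
          rw [hψdef] at hψeq
          exact hψeq
        -- first term of the derivative
        have hQval : Q (u ts) * (1 + β * S (u ts)) = 1 := by
          rw [hQdef]
          exact inv_mul_cancel₀ (ne_of_gt (hden (u ts)))
        have halg : 1 - q ts - β * (q ts * S (u ts)) = -(δ * (1 + β * S (u ts))) := by
          linear_combination (-(1 + β * S (u ts))) * hqQ - hQval
        have hterm1 : ε / c * (1 - q ts - β * (q ts * S (u ts))) ≤ -(ε / c * δ) := by
          rw [halg]
          have h1 : δ * 1 ≤ δ * (1 + β * S (u ts)) := by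
            apply mul_le_mul_of_nonneg_left _ (le_of_lt hδpos)
            linarith only [mul_pos hβ (hSpos (u ts))]
          have h2 := mul_le_mul_of_nonneg_left h1 (le_of_lt hεc)
          linarith only [h2]
        -- second term
        have hterm2 : -QD (u ts) * ((v ts - u ts) / c) ≤ Cq * W₀ := by
          have h1 : -QD (u ts) = β * deriv S (u ts) / (1 + β * S (u ts)) ^ 2 := by
            simp only [hQDdef]
            ring
          have hden2 : 1 ≤ (1 + β * S (u ts)) ^ 2 := by
            have hb1 : (1:ℝ) ≤ 1 + β * S (u ts) := by
              linarith only [mul_pos hβ (hSpos (u ts))]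
            have h := mul_le_mul hb1 hb1 (by norm_num) (by linarith only [hb1])
            rw [pow_two]
            linarith only [h]
          have hzc : (v ts - u ts) / c ≤ W₀ := by
            rw [div_le_iff₀ hc]
            linarith only [hzb]
          have hzc0 : 0 ≤ (v ts - u ts) / c := le_of_lt (div_pos hz_ts hc)
          have h2 : -QD (u ts) ≤ Cq := by
            rw [h1, hCqdef]
            calc β * deriv S (u ts) / (1 + β * S (u ts)) ^ 2
                ≤ β * deriv S (u ts) := div_le_self (by positivity) hden2
              _ ≤ β * SM := mul_le_mul_of_nonneg_left hSMle (le_of_lt hβ)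
          have h3 : 0 ≤ -QD (u ts) := by
            rw [h1]
            positivity
          exact mul_le_mul h2 hzc hzc0 (le_of_lt hCqpos)
        have hcomb : ε / c * δ ≤ Cq * W₀ := by linarith only [hd, hterm1, hterm2]
        have hM2 : Cq * W₀ / δ + 1 < ε / c := by rw [← hMdef]; exact hMεc
        have h11 : Cq * W₀ / δ < ε / c := by linarith only [hM2]
        have h12 : Cq * W₀ / δ * δ < ε / c * δ := mul_lt_mul_of_pos_right h11 hδpos
        rw [div_mul_cancel₀ _ (ne_of_gt hδpos)] at h12
        linarith only [h12, hcomb]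
    have hwall : ∀ t, 0 < w t := fun t => (hBempty t).1
    have hgoalA : ∀ t, u t < v t := by
      intro t
      have h := hzpos (t + 1) (fun s _ => hwall s) t (by linarith)
      linarith only [h]
    refine ⟨hgoalA, ?_⟩
    have humonoG : StrictMono u := strictMono_of_deriv_pos (fun x => by
      rw [(hu' x).deriv]
      exact div_pos (by linarith only [hgoalA x]) hc)
    have hvmonoG : StrictMono v := strictMono_of_deriv_pos (fun x => by
      rw [(hv' x).deriv]
      exact hwall x)
    have hv_big : ∃ t, 1 < v t := by
      by_contra hno
      push_neg at hno
      have hψall : ∀ t, ψ t < δ := fun t => (hBempty t).2 (hno t)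
      have hwd : ∀ t, 0 ≤ t → b ^ 2 * δ ≤ b ^ 2 * (v t - q t * S (u t)) := by
        intro t ht
        have hum : u_m ≤ u t := by
          have := humonoG.monotone ht
          rwa [hu0] at this
        have hu1 : u t ≤ 1 := le_trans (le_of_lt (hgoalA t)) (hno t)
        have hmg := hm_le (u t) ⟨hum, hu1⟩
        simp only [hgdef] at hmg
        have hψt := hψall t
        simp only [hψdef] at hψt
        have hq_le : q t ≤ Q (u t) + δ := by linarith only [hψt]
        have hSu := hSpos (u t)
        have hSu1 := hSlt (u t)
        have h7 : q t * S (u t) ≤ (Q (u t) + δ) * S (u t) :=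
          mul_le_mul_of_nonneg_right hq_le (le_of_lt hSu)
        have h8 : δ * S (u t) ≤ δ * 1 :=
          mul_le_mul_of_nonneg_left (le_of_lt hSu1) (le_of_lt hδpos)
        have hδm : δ = m / 2 := hδdef
        have hz := hgoalA t
        have hδ2 : δ ≤ v t - q t * S (u t) := by linarith only [h7, h8, hz, hmg, hδm]
        exact mul_le_mul_of_nonneg_left hδ2 (le_of_lt (pow_pos hb 2))
      set k := b ^ 2 * δ with hkdef
      have hkpos : 0 < k := mul_pos (pow_pos hb 2) hδpos
      have hmono2 : MonotoneOn (fun t => w t - k * t) (Ici 0) := by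
        apply monotoneOn_of_deriv_nonneg (convex_Ici 0)
        · exact (hwcont.sub ((continuous_const.mul continuous_id : Continuous fun t : ℝ => k * t))).continuousOn
        · intro x hx
          exact ((hw' x).sub ((hasDerivAt_id x).const_mul k)).differentiableAt.differentiableWithinAt
        · intro x hx
          rw [interior_Ici] at hx
          have hder : HasDerivAt (fun t => w t - k * t)
              (b ^ 2 * (v x - q x * S (u x)) - k * 1) x :=
            (hw' x).sub ((hasDerivAt_id x).const_mul k)
          rw [hder.deriv]
          have h := hwd x (le_of_lt hx)
          linarith only [h]
      set T1 := (W₀ + 1) / k with hT1def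
      have hT1nn : 0 ≤ T1 := le_of_lt (div_pos (by linarith only [hW₀pos]) hkpos)
      have hgrow : w 0 - k * 0 ≤ w T1 - k * T1 :=
        hmono2 (mem_Ici.2 le_rfl) (mem_Ici.2 hT1nn) hT1nn
      have hkT1 : k * T1 = W₀ + 1 := by
        rw [hT1def]
        field_simp
      have hWb := hWbound (T1 + 1) (fun s _ => hwall s) (fun s _ => hno s) T1 (by linarith)
      have hw0' := hwall 0
      linarith only [hgrow, hkT1, hWb, hw0']
    obtain ⟨t₁, ht₁⟩ := hv_big
    set k₂ := b ^ 2 * (v t₁ - 1) with hk₂def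
    have hk₂pos : 0 < k₂ := mul_pos (pow_pos hb 2) (by linarith only [ht₁])
    have hw2 : ∀ t, t₁ ≤ t → k₂ ≤ b ^ 2 * (v t - q t * S (u t)) := by
      intro t ht
      have h1 : v t₁ ≤ v t := hvmonoG.monotone ht
      have h2 : q t * S (u t) < q t * 1 := mul_lt_mul_of_pos_left (hSlt (u t)) (hq_pos t)
      have h3 : q t < 1 := hq_lt1 t
      have h4 : v t₁ - 1 ≤ v t - q t * S (u t) := by linarith only [h1, h2, h3]
      rw [hk₂def]
      exact mul_le_mul_of_nonneg_left h4 (le_of_lt (pow_pos hb 2))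
    have hwlin : ∀ t, t₁ ≤ t → k₂ * (t - t₁) ≤ w t := by
      have hmono3 : MonotoneOn (fun t => w t - k₂ * t) (Ici t₁) := by
        apply monotoneOn_of_deriv_nonneg (convex_Ici t₁)
        · exact (hwcont.sub ((continuous_const.mul continuous_id : Continuous fun t : ℝ => k₂ * t))).continuousOn
        · intro x hx
          exact ((hw' x).sub ((hasDerivAt_id x).const_mul k₂)).differentiableAt.differentiableWithinAt
        · intro x hx
          rw [interior_Ici] at hx
          have hder : HasDerivAt (fun t => w t - k₂ * t)
              (b ^ 2 * (v x - q x * S (u x)) - k₂ * 1) x :=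
            (hw' x).sub ((hasDerivAt_id x).const_mul k₂)
          rw [hder.deriv]
          have := hw2 x (le_of_lt hx)
          linarith only [this]
      intro t ht
      have h : w t₁ - k₂ * t₁ ≤ w t - k₂ * t := hmono3 (mem_Ici.2 le_rfl) (mem_Ici.2 ht) ht
      have hw1 := hwall t₁
      linarith only [h, hw1]
    have hvquad : ∀ t, t₁ ≤ t → v t₁ + k₂ * (t - t₁) ^ 2 / 2 ≤ v t := by
      have hmono4 : MonotoneOn (fun t => v t - k₂ * (t - t₁) ^ 2 / 2) (Ici t₁) := by
        apply monotoneOn_of_deriv_nonneg (convex_Ici t₁)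
        · exact (hvcont.sub ((continuous_const.mul ((continuous_id.sub continuous_const).pow 2)).div_const 2)).continuousOn
        · intro x hx
          have hder : HasDerivAt (fun t => v t - k₂ * (t - t₁) ^ 2 / 2) (w x - k₂ * (x - t₁)) x := by
            have h := (hv' x).sub (((((hasDerivAt_id x).sub_const t₁).pow 2).const_mul k₂).div_const 2)
            refine h.congr_deriv ?_
            push_cast
            simp only [id_eq]
            ring
          exact hder.differentiableAt.differentiableWithinAt
        · intro x hx
          rw [interior_Ici] at hx
          have hder : HasDerivAt (fun t => v t - k₂ * (t - t₁) ^ 2 / 2) (w x - k₂ * (x - t₁)) x := by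
            have h := (hv' x).sub (((((hasDerivAt_id x).sub_const t₁).pow 2).const_mul k₂).div_const 2)
            refine h.congr_deriv ?_
            push_cast
            simp only [id_eq]
            ring
          rw [hder.deriv]
          linarith only [hwlin x (le_of_lt hx)]
      intro t ht
      have h : v t₁ - k₂ * (t₁ - t₁) ^ 2 / 2 ≤ v t - k₂ * (t - t₁) ^ 2 / 2 :=
        hmono4 (mem_Ici.2 le_rfl) (mem_Ici.2 ht) ht
      linarith only [h]
    set t₃ := t₁ + Real.sqrt (6 / k₂) with ht₃def
    have ht₃ge : t₁ ≤ t₃ := by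
      rw [ht₃def]
      linarith only [Real.sqrt_nonneg (6 / k₂)]
    have hsq6 : Real.sqrt (6 / k₂) ^ 2 = 6 / k₂ :=
      Real.sq_sqrt (le_of_lt (div_pos (by norm_num) hk₂pos))
    have hv3 : 3 ≤ v t₃ := by
      have h := hvquad t₃ ht₃ge
      have heq : k₂ * (t₃ - t₁) ^ 2 / 2 = 3 := by
        rw [ht₃def]
        have h2 : (t₁ + Real.sqrt (6 / k₂) - t₁) = Real.sqrt (6 / k₂) := by ring
        rw [h2, hsq6]
        field_simp
        ring
      linarith only [h, heq, ht₁]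
    have hv3' : ∀ t, t₃ ≤ t → 3 ≤ v t := fun t ht => le_trans hv3 (hvmonoG.monotone ht)
    by_contra hnoB
    push_neg at hnoB
    have hmono5 : MonotoneOn (fun t => u t - 2 / c * t) (Ici t₃) := by
      apply monotoneOn_of_deriv_nonneg (convex_Ici t₃)
      · exact (hucont.sub ((continuous_const.mul continuous_id : Continuous fun t : ℝ => 2 / c * t))).continuousOn
      · intro x hx
        exact ((hu' x).sub ((hasDerivAt_id x).const_mul (2 / c))).differentiableAt.differentiableWithinAt
      · intro x hx
        rw [interior_Ici] at hx
        have hder : HasDerivAt (fun t => u t - 2 / c * t) ((v x - u x) / c - 2 / c * 1) x :=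
          (hu' x).sub ((hasDerivAt_id x).const_mul (2 / c))
        rw [hder.deriv]
        have h1 := hv3' x (le_of_lt hx)
        have h2 := hnoB x
        have h3 : 2 / c ≤ (v x - u x) / c := (div_le_div_iff_of_pos_right hc).2 (by linarith only [h1, h2])
        linarith only [h3]
    have hfin : u t₃ - 2 / c * t₃ ≤ u (t₃ + c) - 2 / c * (t₃ + c) :=
      hmono5 (mem_Ici.2 le_rfl) (mem_Ici.2 (by linarith only [hc] : t₃ ≤ t₃ + c))
        (by linarith only [hc])
    have h2c : 2 / c * (t₃ + c) - 2 / c * t₃ = 2 := by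
      field_simp
      ring
    have hut₃ : u₀ < u t₃ := hu_gt (t₃ + 1) (fun s _ => hwall s) t₃ (by linarith)
    have hfin2 := hnoB (t₃ + c)
    linarith only [hfin, h2c, hut₃, hu₀pos, hfin2]
  refine ⟨1, M, one_pos, hMpos, ?_, ?_⟩
  · intro ε c hε hc hc1 hMεc u v w q hsol hnc htend hu0 hw0
    exact key ε c hε hc hc1 hMεc u v w q hsol htend hu0 hw0
  · rintro ε c hε hc hc1 ⟨u, v, w, q, hsol, hnc, hbot, htop, hu0, hw0⟩
    by_contra hgt
    push_neg at hgt
    obtain ⟨hA, hB⟩ := key ε c hε hc hc1 hgt u v w q hsol hbot hu0 hw0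
    have humono : StrictMono u := strictMono_of_deriv_pos (fun x => by
      rw [((hsol x).1).deriv]
      exact div_pos (by linarith only [hA x]) hc)
    have htu_top : Tendsto u atTop (𝓝 u₀) := by
      have h := (continuous_fst.tendsto ((u₀ : ℝ), u₀, (0:ℝ), q₀)).comp htop
      simpa [Function.comp_def] using h
    have hle : u 0 ≤ u₀ := by
      apply ge_of_tendsto htu_top
      rw [eventually_atTop]
      exact ⟨1, fun s hs => (humono (by linarith : (0:ℝ) < s)).le⟩
    rw [hu0] at hle
    linarith only [hle, hlt₁]
end
end

section
/- For any ε ≥ 0 and c > 0, the open regions {(u,v,w,q) ∈ ℝ⁴ : v < 0, w < 0, 1/(1+β) < q < 1} and {(u,v,w,q) ∈ ℝ⁴ : v > 1, w > 0, 1/(1+β) < q < 1} are positively invariant for system (1): if a solution p of (1) lies in one of these regions at some time t₀, then p(t) lies in the same region for all t ≥ t₀. -/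
open Filter Topology

noncomputable section

private lemma left_slope_nonneg' (f : ℝ → ℝ) {d s T : ℝ} (hd : HasDerivAt f d T)
    (hsT : s < T) (h : ∀ t, s < t → t < T → f t ≤ f T) : 0 ≤ d := by
  have hW : HasDerivWithinAt f d (Set.Iio T) T := hd.hasDerivWithinAt
  rw [hasDerivWithinAt_iff_tendsto_slope] at hW
  have hset : Set.Iio T \ {T} = Set.Iio T := by
    ext x; simp only [Set.mem_diff, Set.mem_Iio, Set.mem_singleton_iff]
    exact ⟨fun h => h.1, fun h => ⟨h, ne_of_lt h⟩⟩
  rw [hset] at hW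
  have hev : ∀ᶠ t in 𝓝[<] T, 0 ≤ slope f T t := by
    filter_upwards [Ioo_mem_nhdsLT_of_mem ⟨hsT, le_refl T⟩] with t ht
    rw [slope_def_field, div_nonneg_iff]
    right
    exact ⟨by simpa [sub_nonpos] using h t ht.1 ht.2, by linarith [ht.2]⟩
  exact ge_of_tendsto hW hev

private lemma left_slope_nonpos' (f : ℝ → ℝ) {d s T : ℝ} (hd : HasDerivAt f d T)
    (hsT : s < T) (h : ∀ t, s < t → t < T → f T ≤ f t) : d ≤ 0 := by
  have h2 : (0:ℝ) ≤ -d := left_slope_nonneg' (fun x => -f x) hd.neg hsT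
    (fun t h1 h2 => neg_le_neg (h t h1 h2))
  linarith

private lemma left_limit_le (f : ℝ → ℝ) {a s T : ℝ} (hf : Continuous f) (hsT : s < T)
    (h : ∀ t, s < t → t < T → f t ≤ a) : f T ≤ a := by
  have ht : Tendsto f (𝓝[<] T) (𝓝 (f T)) :=
    (hf.tendsto T).mono_left nhdsWithin_le_nhds
  refine le_of_tendsto ht ?_
  filter_upwards [Ioo_mem_nhdsLT_of_mem ⟨hsT, le_refl T⟩] with t htt
  exact h t htt.1 htt.2

private lemma le_left_limit (f : ℝ → ℝ) {a s T : ℝ} (hf : Continuous f) (hsT : s < T)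
    (h : ∀ t, s < t → t < T → a ≤ f t) : a ≤ f T := by
  have h2 : -f T ≤ -a :=
    left_limit_le (fun x => -f x) hf.neg hsT (fun t h1 h2 => neg_le_neg (h t h1 h2))
  linarith

private lemma qbounds (β ε c : ℝ) (S u q : ℝ → ℝ) (hβ : 0 < β) (hε : 0 ≤ ε) (hc : 0 < c)
    (hSpos : ∀ x, 0 < S x) (hSlt : ∀ x, S x < 1)
    (hq : ∀ t, HasDerivAt q (ε / c * (1 - q t - β * (q t * S (u t)))) t)
    {t₀ T : ℝ} (hT : t₀ < T)
    (hmem : ∀ s, t₀ ≤ s → s < T → 1 / (1 + β) < q s ∧ q s < 1) :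
    1 / (1 + β) < q T ∧ q T < 1 := by
  have hβ1 : (0:ℝ) < 1 + β := by linarith
  rcases eq_or_lt_of_le hε with h0 | hεpos
  · have hq0 : ∀ t, HasDerivAt q 0 t := by
      intro t; simpa [← h0] using hq t
    have hconst : q T = q t₀ :=
      is_const_of_deriv_eq_zero (fun t => (hq0 t).differentiableAt)
        (fun t => (hq0 t).deriv) T t₀
    rw [hconst]; exact hmem t₀ le_rfl hT
  · have hqc : Continuous q := continuous_iff_continuousAt.mpr fun t => (hq t).continuousAt
    have hεc : 0 < ε / c := div_pos hεpos hc
    have hle1 : q T ≤ 1 := left_limit_le q hqc hT (fun t h1 h2 => (hmem t h1.le h2).2.le)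
    have hge : 1 / (1 + β) ≤ q T :=
      le_left_limit q hqc hT (fun t h1 h2 => (hmem t h1.le h2).1.le)
    have hqTpos : 0 < q T := lt_of_lt_of_le (by positivity) hge
    constructor
    · rcases eq_or_lt_of_le hge with heq | h; swap
      · exact h
      exfalso
      have hd : ε / c * (1 - q T - β * (q T * S (u T))) ≤ 0 :=
        left_slope_nonpos' q (hq T) hT
          (fun t h1 h2 => by rw [← heq]; exact (hmem t h1.le h2).1.le)
      have hqe : q T * (1 + β) = 1 := by
        rw [← heq]; field_simp
      have hS1 := hSlt (u T)
      nlinarith [mul_pos hβ (mul_pos hqTpos (sub_pos.mpr hS1)), mul_pos hεc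
        (mul_pos hβ (mul_pos hqTpos (sub_pos.mpr hS1)))]
    · rcases eq_or_lt_of_le hle1 with heq | h; swap
      · exact h
      exfalso
      have hd : 0 ≤ ε / c * (1 - q T - β * (q T * S (u T))) :=
        left_slope_nonneg' q (hq T) hT
          (fun t h1 h2 => by rw [heq]; exact (hmem t h1.le h2).2.le)
      have hS0 := hSpos (u T)
      nlinarith [mul_pos hεc (mul_pos hβ hS0)]

/-- Proposition 1 of the paper: two positively invariant regions. -/
theorem invariant_regions
    (b β : ℝ) (S : ℝ → ℝ)
    (hb : 0 < b) (hβ : 0 < β)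
    (hS : ContDiff ℝ 1 S)
    (hS' : ∀ x : ℝ, 0 < deriv S x)
    (hSpos : ∀ x : ℝ, 0 < S x) (hSlt : ∀ x : ℝ, S x < 1)
    (ε c : ℝ) (hε : 0 ≤ ε) (hc : 0 < c)
    (u v w q : ℝ → ℝ) (hp : SolOne b β S ε c u v w q) (t₀ : ℝ) :
    ((v t₀ < 0 ∧ w t₀ < 0 ∧ 1 / (1 + β) < q t₀ ∧ q t₀ < 1) →
      ∀ t : ℝ, t₀ ≤ t → v t < 0 ∧ w t < 0 ∧ 1 / (1 + β) < q t ∧ q t < 1) ∧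
    ((1 < v t₀ ∧ 0 < w t₀ ∧ 1 / (1 + β) < q t₀ ∧ q t₀ < 1) →
      ∀ t : ℝ, t₀ ≤ t → 1 < v t ∧ 0 < w t ∧ 1 / (1 + β) < q t ∧ q t < 1) := by
  have hv' : ∀ t, HasDerivAt v (w t) t := fun t => (hp t).2.1
  have hw' : ∀ t, HasDerivAt w (b ^ 2 * (v t - q t * S (u t))) t := fun t => (hp t).2.2.1
  have hq' : ∀ t, HasDerivAt q (ε / c * (1 - q t - β * (q t * S (u t)))) t :=
    fun t => (hp t).2.2.2
  have hvc : Continuous v := continuous_iff_continuousAt.mpr fun t => (hv' t).continuousAt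
  have hwc : Continuous w := continuous_iff_continuousAt.mpr fun t => (hw' t).continuousAt
  have hqc : Continuous q := continuous_iff_continuousAt.mpr fun t => (hq' t).continuousAt
  have hβ1 : (0:ℝ) < 1 + β := by linarith
  constructor
  · rintro ⟨h1, h2, h3, h4⟩ t ht
    by_contra hPt
    set A : Set ℝ :=
      {s | t₀ ≤ s ∧ ¬(v s < 0 ∧ w s < 0 ∧ 1 / (1 + β) < q s ∧ q s < 1)} with hAdef
    have hne : A.Nonempty := ⟨t, ht, hPt⟩
    have hbd : BddBelow A := ⟨t₀, fun s hs => hs.1⟩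
    set T := sInf A with hTdef
    have hT0 : t₀ ≤ T := le_csInf hne fun s hs => hs.1
    have hbefore : ∀ s, t₀ ≤ s → s < T →
        v s < 0 ∧ w s < 0 ∧ 1 / (1 + β) < q s ∧ q s < 1 := by
      intro s hs1 hs2
      by_contra h3'
      exact absurd (csInf_le hbd ⟨hs1, h3'⟩) (not_le.mpr hs2)
    have hPT : v T < 0 ∧ w T < 0 ∧ 1 / (1 + β) < q T ∧ q T < 1 := by
      rcases eq_or_lt_of_le hT0 with heq | hlt
      · rw [← heq]; exact ⟨h1, h2, h3, h4⟩
      · have hqT := qbounds β ε c S u q hβ hε hc hSpos hSlt hq' hlt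
          (fun s a bb => (hbefore s a bb).2.2)
        have hqTpos : 0 < q T := lt_trans (div_pos one_pos hβ1) hqT.1
        have hvT : v T ≤ v t₀ := by
          have hanti : AntitoneOn v (Set.Icc t₀ T) := by
            apply antitoneOn_of_deriv_nonpos (convex_Icc t₀ T) hvc.continuousOn
              (fun x _ => (hv' x).differentiableAt.differentiableWithinAt)
            intro x hx
            rw [interior_Icc] at hx
            rw [(hv' x).deriv]
            exact (hbefore x hx.1.le hx.2).2.1.le
          exact hanti (Set.left_mem_Icc.mpr hT0) (Set.right_mem_Icc.mpr hT0) hT0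
        have hvTn : v T < 0 := lt_of_le_of_lt hvT h1
        have hwTle : w T ≤ 0 :=
          left_limit_le w hwc hlt (fun s a bb => (hbefore s a.le bb).2.1.le)
        have hwTn : w T < 0 := by
          rcases lt_or_eq_of_le hwTle with h | h
          · exact h
          exfalso
          have hd : 0 ≤ b ^ 2 * (v T - q T * S (u T)) :=
            left_slope_nonneg' w (hw' T) hlt
              (fun s a bb => by rw [h]; exact (hbefore s a.le bb).2.1.le)
          have hpos : 0 < b ^ 2 * (q T * S (u T) - v T) :=
            mul_pos (pow_pos hb 2)
              (by nlinarith [mul_pos hqTpos (hSpos (u T))])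
          nlinarith
        exact ⟨hvTn, hwTn, hqT.1, hqT.2⟩
    have hU : {s : ℝ | v s < 0 ∧ w s < 0 ∧ 1 / (1 + β) < q s ∧ q s < 1} ∈ 𝓝 T := by
      have ho : IsOpen {s : ℝ | v s < 0 ∧ w s < 0 ∧ 1 / (1 + β) < q s ∧ q s < 1} := by
        have e1 : IsOpen {s : ℝ | v s < 0} := isOpen_Iio.preimage hvc
        have e2 : IsOpen {s : ℝ | w s < 0} := isOpen_Iio.preimage hwc
        have e3 : IsOpen {s : ℝ | 1 / (1 + β) < q s} := isOpen_Ioi.preimage hqc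
        have e4 : IsOpen {s : ℝ | q s < 1} := isOpen_Iio.preimage hqc
        have : {s : ℝ | v s < 0 ∧ w s < 0 ∧ 1 / (1 + β) < q s ∧ q s < 1} =
            {s : ℝ | v s < 0} ∩ ({s : ℝ | w s < 0} ∩
              ({s : ℝ | 1 / (1 + β) < q s} ∩ {s : ℝ | q s < 1})) := by
          ext x; simp [Set.mem_inter_iff, and_assoc]
        rw [this]
        exact e1.inter (e2.inter (e3.inter e4))
      exact ho.mem_nhds hPT
    obtain ⟨δ, hδ, hball⟩ := Metric.mem_nhds_iff.mp hU
    obtain ⟨a, haA, halt⟩ := (csInf_lt_iff hbd hne).mp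
      (show sInf A < T + δ by rw [← hTdef]; linarith)
    have haT : T ≤ a := csInf_le hbd haA
    have hmem : a ∈ Metric.ball T δ := by
      rw [Metric.mem_ball, Real.dist_eq, abs_of_nonneg (sub_nonneg.mpr haT)]
      linarith
    exact haA.2 (hball hmem)
  · rintro ⟨h1, h2, h3, h4⟩ t ht
    by_contra hPt
    set A : Set ℝ :=
      {s | t₀ ≤ s ∧ ¬(1 < v s ∧ 0 < w s ∧ 1 / (1 + β) < q s ∧ q s < 1)} with hAdef
    have hne : A.Nonempty := ⟨t, ht, hPt⟩
    have hbd : BddBelow A := ⟨t₀, fun s hs => hs.1⟩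
    set T := sInf A with hTdef
    have hT0 : t₀ ≤ T := le_csInf hne fun s hs => hs.1
    have hbefore : ∀ s, t₀ ≤ s → s < T →
        1 < v s ∧ 0 < w s ∧ 1 / (1 + β) < q s ∧ q s < 1 := by
      intro s hs1 hs2
      by_contra h3'
      exact absurd (csInf_le hbd ⟨hs1, h3'⟩) (not_le.mpr hs2)
    have hPT : 1 < v T ∧ 0 < w T ∧ 1 / (1 + β) < q T ∧ q T < 1 := by
      rcases eq_or_lt_of_le hT0 with heq | hlt
      · rw [← heq]; exact ⟨h1, h2, h3, h4⟩
      · have hqT := qbounds β ε c S u q hβ hε hc hSpos hSlt hq' hlt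
          (fun s a bb => (hbefore s a bb).2.2)
        have hqTpos : 0 < q T := lt_trans (div_pos one_pos hβ1) hqT.1
        have hvT : v t₀ ≤ v T := by
          have hmono : MonotoneOn v (Set.Icc t₀ T) := by
            apply monotoneOn_of_deriv_nonneg (convex_Icc t₀ T) hvc.continuousOn
              (fun x _ => (hv' x).differentiableAt.differentiableWithinAt)
            intro x hx
            rw [interior_Icc] at hx
            rw [(hv' x).deriv]
            exact (hbefore x hx.1.le hx.2).2.1.le
          exact hmono (Set.left_mem_Icc.mpr hT0) (Set.right_mem_Icc.mpr hT0) hT0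
        have hvTn : 1 < v T := lt_of_lt_of_le h1 hvT
        have hwTle : 0 ≤ w T :=
          le_left_limit w hwc hlt (fun s a bb => (hbefore s a.le bb).2.1.le)
        have hwTn : 0 < w T := by
          rcases lt_or_eq_of_le hwTle with h | h
          · exact h
          exfalso
          have hd : b ^ 2 * (v T - q T * S (u T)) ≤ 0 :=
            left_slope_nonpos' w (hw' T) hlt
              (fun s a bb => by rw [← h]; exact (hbefore s a.le bb).2.1.le)
          have hqS : q T * S (u T) < 1 := by
            nlinarith [hSpos (u T), hSlt (u T), hqT.2]
          have hpos : 0 < b ^ 2 * (v T - q T * S (u T)) :=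
            mul_pos (pow_pos hb 2) (by linarith)
          linarith
        exact ⟨hvTn, hwTn, hqT.1, hqT.2⟩
    have hU : {s : ℝ | 1 < v s ∧ 0 < w s ∧ 1 / (1 + β) < q s ∧ q s < 1} ∈ 𝓝 T := by
      have ho : IsOpen {s : ℝ | 1 < v s ∧ 0 < w s ∧ 1 / (1 + β) < q s ∧ q s < 1} := by
        have e1 : IsOpen {s : ℝ | 1 < v s} := isOpen_Ioi.preimage hvc
        have e2 : IsOpen {s : ℝ | 0 < w s} := isOpen_Ioi.preimage hwc
        have e3 : IsOpen {s : ℝ | 1 / (1 + β) < q s} := isOpen_Ioi.preimage hqc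
        have e4 : IsOpen {s : ℝ | q s < 1} := isOpen_Iio.preimage hqc
        have : {s : ℝ | 1 < v s ∧ 0 < w s ∧ 1 / (1 + β) < q s ∧ q s < 1} =
            {s : ℝ | 1 < v s} ∩ ({s : ℝ | 0 < w s} ∩
              ({s : ℝ | 1 / (1 + β) < q s} ∩ {s : ℝ | q s < 1})) := by
          ext x; simp [Set.mem_inter_iff, and_assoc]
        rw [this]
        exact e1.inter (e2.inter (e3.inter e4))
      exact ho.mem_nhds hPT
    obtain ⟨δ, hδ, hball⟩ := Metric.mem_nhds_iff.mp hU
    obtain ⟨a, haA, halt⟩ := (csInf_lt_iff hbd hne).mp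
      (show sInf A < T + δ by rw [← hTdef]; linarith)
    have haT : T ≤ a := csInf_le hbd haA
    have hmem : a ∈ Metric.ball T δ := by
      rw [Metric.mem_ball, Real.dist_eq, abs_of_nonneg (sub_nonneg.mpr haT)]
      linarith
    exact haA.2 (hball hmem)
end
end

section
/- Let ε > 0 and c > 0, and let p = (u,v,w,q) be a nonconstant solution of system (1) with lim_{t→−∞} p(t) = p₀ and such that q'(t) < 0 for all sufficiently negative t. If u' ≥ 0 on an interval (−∞, τ], then q' < 0 on (−∞, τ). -/
open Filter Topology

noncomputable section

/-- Lemma 7 of the paper. -/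
theorem q_decreasing_while_u_nondecreasing
    (b β u₀ q₀ u_m uP u_knee : ℝ) (S : ℝ → ℝ)
    (hb : 0 < b) (hβ : 0 < β)
    (hS : ContDiff ℝ 1 S)
    (hS' : ∀ x : ℝ, 0 < deriv S x)
    (hSpos : ∀ x : ℝ, 0 < S x) (hSlt : ∀ x : ℝ, S x < 1)
    -- (C1): unique equilibrium p₀ = (u₀,u₀,0,q₀)
    (hq₀ : q₀ = 1 / (1 + β * S u₀)) (hu₀ : u₀ = q₀ * S u₀)
    (hC1 : ∀ u q : ℝ, u = q * S u → q = 1 / (1 + β * S u) → u = u₀ ∧ q = q₀)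
    -- (C2): h(u) = u/S(u) has one local max then one local min (at u_knee), no other critical points
    (hC2 : ∃ u_max : ℝ, u_max < u_knee ∧ IsLocalMax (fun x : ℝ => x / S x) u_max ∧
      IsLocalMin (fun x : ℝ => x / S x) u_knee ∧
      ∀ x : ℝ, deriv (fun y : ℝ => y / S y) x = 0 → x = u_max ∨ x = u_knee)
    -- (C3): h(u) = q₀ has exactly three solutions u₀ < u_m < uP
    (hlt₁ : u₀ < u_m) (hlt₂ : u_m < uP)
    (hC3 : ∀ x : ℝ, x / S x = q₀ ↔ x = u₀ ∨ x = u_m ∨ x = uP)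
    -- (C4)
    (hC4 : 0 < ∫ x in u₀..uP, (q₀ * S x - x))
    (ε c : ℝ) (hε : 0 < ε) (hc : 0 < c)
    (u v w q : ℝ → ℝ) (hp : SolOne b β S ε c u v w q)
    (hnc : Nonconst4 u v w q)
    (hlim : Tendsto (fun t => (u t, v t, w t, q t)) atBot (𝓝 (u₀, u₀, 0, q₀)))
    (hq' : ∀ᶠ t in atBot, deriv q t < 0)
    (τ : ℝ) (hu' : ∀ t : ℝ, t ≤ τ → 0 ≤ deriv u t) :
    ∀ t : ℝ, t < τ → deriv q t < 0 := by
  -- basic derivative facts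
  have hu'' : ∀ t, HasDerivAt u ((v t - u t) / c) t := fun t => (hp t).1
  have hq'' : ∀ t, HasDerivAt q (ε / c * (1 - q t - β * (q t * S (u t)))) t :=
    fun t => (hp t).2.2.2
  have hSdiff : ∀ x : ℝ, HasDerivAt S (deriv S x) x := fun x =>
    ((hS.differentiable one_ne_zero) x).hasDerivAt
  set D : ℝ → ℝ := fun t => 1 + β * S (u t) with hDdef
  have hDpos : ∀ t, 0 < D t := fun t => by
    have := hSpos (u t); simp only [hDdef]; nlinarith
  have hDne : ∀ t, D t ≠ 0 := fun t => ne_of_gt (hDpos t)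
  have hDder : ∀ t, HasDerivAt D (β * (deriv S (u t) * ((v t - u t) / c))) t := by
    intro t
    have h1 : HasDerivAt (fun t => S (u t)) (deriv S (u t) * ((v t - u t) / c)) t :=
      (hSdiff (u t)).comp t (hu'' t)
    simpa [hDdef] using (h1.const_mul β).const_add 1
  set ψ : ℝ → ℝ := fun t => q t - (D t)⁻¹ with hψdef
  have hψder : ∀ t, HasDerivAt ψ
      (ε / c * (1 - q t - β * (q t * S (u t)))
        + β * (deriv S (u t) * ((v t - u t) / c)) / (D t) ^ 2) t := by
    intro t
    have h2 := (hDder t).inv (hDne t)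
    have := (hq'' t).sub h2
    refine this.congr_deriv ?_
    ring
  set K : ℝ → ℝ := fun t => ε / c * D t with hKdef
  have hKcont : Continuous K := by
    have hucont : Continuous u := continuous_iff_continuousAt.2 fun t => (hu'' t).continuousAt
    exact continuous_const.mul (continuous_const.add
      (continuous_const.mul (hS.continuous.comp hucont)))
  set F : ℝ → ℝ := fun t => ∫ s in (0:ℝ)..t, K s with hFdef
  have hFder : ∀ t, HasDerivAt F (K t) t := fun t =>
    (hKcont.integral_hasStrictDerivAt 0 t).hasDerivAt
  set φ : ℝ → ℝ := fun t => ψ t * Real.exp (F t) with hφdef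
  have hφder : ∀ t, HasDerivAt φ
      ((β * (deriv S (u t) * ((v t - u t) / c)) / (D t) ^ 2) * Real.exp (F t)) t := by
    intro t
    have h3 := (hψder t).mul (hFder t).exp
    refine h3.congr_deriv ?_
    have hDt := hDne t
    simp only [hψdef, hKdef, hDdef] at hDt ⊢
    field_simp
    ring
  -- φ is monotone on Iic τ
  have hmono : MonotoneOn φ (Set.Iic τ) := by
    apply monotoneOn_of_deriv_nonneg (convex_Iic τ)
    · exact fun x _ => ((hφder x).continuousAt).continuousWithinAt
    · exact fun x _ => ((hφder x).differentiableAt).differentiableWithinAt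
    · intro x hx
      rw [interior_Iic] at hx
      rw [(hφder x).deriv]
      have hudx : 0 ≤ (v x - u x) / c := by
        have := hu' x (le_of_lt hx)
        rwa [(hu'' x).deriv] at this
      have := hS' (u x)
      have := sq_nonneg (D x)
      have := (Real.exp_pos (F x)).le
      positivity
  -- relate deriv q to ψ
  have hderivq : ∀ t, deriv q t = -(ε / c * (D t * ψ t)) := by
    intro t
    rw [(hq'' t).deriv]
    have hDt := hDne t
    simp only [hψdef, hDdef] at hDt ⊢
    field_simp
    ring
  intro t ht
  obtain ⟨s₀, hs₀⟩ := eventually_atBot.1 hq'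
  set s := min t s₀ with hs
  have hψs : 0 < ψ s := by
    have h4 := hs₀ s (min_le_right _ _)
    rw [hderivq s] at h4
    have hεc : 0 < ε / c := div_pos hε hc
    have h5 : 0 < ε / c * (D s * ψ s) := by linarith
    have h6 : 0 < D s * ψ s := (mul_pos_iff_of_pos_left hεc).1 h5
    have h7 : 0 < (D s)⁻¹ * (D s * ψ s) :=
      mul_pos (inv_pos.2 (hDpos s)) h6
    rwa [inv_mul_cancel_left₀ (hDne s)] at h7
  have hφs : 0 < φ s := mul_pos hψs (Real.exp_pos _)
  have hst : s ≤ t := min_le_left _ _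
  have hφt : 0 < φ t :=
    lt_of_lt_of_le hφs (hmono (le_trans hst ht.le) ht.le hst)
  have hψt : 0 < ψ t := by
    by_contra h
    push_neg at h
    have : φ t ≤ 0 := mul_nonpos_of_nonpos_of_nonneg h (Real.exp_pos _).le
    linarith
  rw [hderivq t]
  have hεc : 0 < ε / c := div_pos hε hc
  have := mul_pos hεc (mul_pos (hDpos t) hψt)
  linarith
end
end

section
/- Let ε > 0 and c > 0, and let p = (u,v,w,q) be a nonconstant solution of system (1) with lim_{t→−∞} p(t) = p₀ such that, for all sufficiently negative t, u₀ < u(t) < v(t), w(t) > 0, q(t) < q₀, and q'(t) < 0. Then there exists τ ∈ ℝ such that w > 0 on (−∞, τ] and u(τ) = u_m. -/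
open Filter Topology
open Set

noncomputable section

lemma eventually_left_lt {f : ℝ → ℝ} {x d : ℝ} (hf : HasDerivAt f d x) (hd : 0 < d) :
    ∀ᶠ t in 𝓝[<] x, f t < f x := by
  have h1 : Tendsto (slope f x) (𝓝[≠] x) (𝓝 d) := hasDerivAt_iff_tendsto_slope.mp hf
  have h2 : ∀ᶠ t in 𝓝[≠] x, 0 < slope f x t := h1.eventually (eventually_gt_nhds hd)
  have h3 : 𝓝[<] x ≤ 𝓝[≠] x :=
    nhdsWithin_mono x fun y (hy : y ∈ Iio x) => ne_of_lt hy
  filter_upwards [h2.filter_mono h3, self_mem_nhdsWithin] with t ht hlt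
  rw [slope_def_field] at ht
  rcases div_pos_iff.mp ht with ⟨h4, h5⟩ | ⟨h4, h5⟩
  · exfalso; have : t < x := hlt; linarith
  · linarith

lemma eventually_left_gt {f : ℝ → ℝ} {x d : ℝ} (hf : HasDerivAt f d x) (hd : d < 0) :
    ∀ᶠ t in 𝓝[<] x, f x < f t := by
  have := eventually_left_lt (f := fun t => -f t) (hf.neg) (by linarith)
  filter_upwards [this] with t ht
  have : -f t < -f x := ht
  linarith

lemma le_left_lim {f : ℝ → ℝ} {a b L : ℝ} (hab : a < b) (hf : Continuous f)
    (h : ∀ r, a < r → r < b → L ≤ f r) : L ≤ f b := by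
  have h1 : Tendsto f (𝓝[<] b) (𝓝 (f b)) := (hf.tendsto b).mono_left nhdsWithin_le_nhds
  refine ge_of_tendsto h1 ?_
  exact Filter.eventually_of_mem (Ioo_mem_nhdsLT hab) fun r hr => h r hr.1 hr.2

lemma hfun_gt_q₀ (S : ℝ → ℝ) (u₀ q₀ u_m uP u_knee : ℝ)
    (hS : ContDiff ℝ 1 S) (hSpos : ∀ x : ℝ, 0 < S x)
    (hu₀ : u₀ = q₀ * S u₀)
    (hC2 : ∃ u_max : ℝ, u_max < u_knee ∧ IsLocalMax (fun x : ℝ => x / S x) u_max ∧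
      IsLocalMin (fun x : ℝ => x / S x) u_knee ∧
      ∀ x : ℝ, deriv (fun y : ℝ => y / S y) x = 0 → x = u_max ∨ x = u_knee)
    (hlt₁ : u₀ < u_m) (hlt₂ : u_m < uP)
    (hC3 : ∀ x : ℝ, x / S x = q₀ ↔ x = u₀ ∨ x = u_m ∨ x = uP) :
    ∀ x : ℝ, u₀ < x → x < u_m → q₀ < x / S x := by
  obtain ⟨u_max, hmk, hlocmax, hlocmin, hcrit⟩ := hC2
  set hfun : ℝ → ℝ := fun x => x / S x with hfun_def
  have hS0 : ∀ x : ℝ, S x ≠ 0 := fun x => (hSpos x).ne'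
  have hhc : Continuous hfun := continuous_id.div (hS.continuous) hS0
  have hval₀ : hfun u₀ = q₀ := by
    show u₀ / S u₀ = q₀
    rw [div_eq_iff (hS0 u₀)]; linarith
  have hvalm : hfun u_m = q₀ := (hC3 u_m).mpr (Or.inr (Or.inl rfl))
  have hvalP : hfun uP = q₀ := (hC3 uP).mpr (Or.inr (Or.inr rfl))
  obtain ⟨c₂, hc₂m, hc₂d⟩ :=
    exists_deriv_eq_zero hlt₂ hhc.continuousOn (hvalm.trans hvalP.symm)
  have hknee : u_m < u_knee := by
    rcases hcrit c₂ hc₂d with h | h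
    · have := hc₂m.1; linarith [hmk, h ▸ this]
    · exact h ▸ hc₂m.1
  intro x hx1 hx2
  by_contra hle
  push_neg at hle
  have hne : hfun x ≠ q₀ := by
    intro he
    rcases (hC3 x).mp he with h | h | h <;> (subst h; linarith)
  have hltq : hfun x < q₀ := lt_of_le_of_ne hle hne
  obtain ⟨cmin, hcmem, hcmin⟩ :=
    isCompact_Icc.exists_isMinOn (nonempty_Icc.2 hlt₁.le) hhc.continuousOn
  have h1 : hfun cmin ≤ hfun x := hcmin ⟨hx1.le, hx2.le⟩
  have hc1 : u₀ < cmin := by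
    rcases eq_or_lt_of_le hcmem.1 with h | h
    · exfalso; rw [← h, hval₀] at h1; linarith
    · exact h
  have hc2 : cmin < u_m := by
    rcases eq_or_lt_of_le hcmem.2 with h | h
    · exfalso; rw [h, hvalm] at h1; linarith
    · exact h
  have hloc : IsLocalMin hfun cmin := hcmin.isLocalMin (Icc_mem_nhds hc1 hc2)
  rcases hcrit cmin hloc.deriv_eq_zero with hcm | hcm
  · have hloc' : IsLocalMax hfun cmin := hcm ▸ hlocmax
    have heq : ∀ᶠ y in 𝓝 cmin, hfun y = hfun cmin :=
      (hloc'.and hloc).mono fun y hy => le_antisymm hy.1 hy.2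
    obtain ⟨δ, hδ, hball⟩ := Metric.eventually_nhds_iff.mp heq
    have hcrit3 : ∀ y : ℝ, |y - cmin| < δ / 2 → (y = u_max ∨ y = u_knee) := by
      intro y hy
      apply hcrit
      have hev : hfun =ᶠ[𝓝 y] fun _ => hfun cmin := by
        refine Metric.eventually_nhds_iff.mpr ⟨δ / 2, half_pos hδ, fun z hz => ?_⟩
        apply hball
        rw [Real.dist_eq] at hz ⊢
        calc |z - cmin| = |(z - y) + (y - cmin)| := by ring_nf
          _ ≤ |z - y| + |y - cmin| := abs_add_le _ _
          _ < δ / 2 + δ / 2 := add_lt_add hz hy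
          _ = δ := by ring
      rw [hev.deriv_eq, deriv_const]
    have k1 := hcrit3 (cmin - δ / 4)
      (by rw [show cmin - δ/4 - cmin = -(δ/4) by ring, abs_neg, abs_of_pos (by linarith)]; linarith)
    have k2 := hcrit3 (cmin + δ / 4)
      (by rw [show cmin + δ/4 - cmin = δ/4 by ring, abs_of_pos (by linarith)]; linarith)
    have k3 := hcrit3 cmin (by rw [sub_self, abs_zero]; linarith)
    rcases k1 with k1 | k1 <;> rcases k2 with k2 | k2 <;> rcases k3 with k3 | k3 <;> linarith
  · rw [hcm] at hc2; linarith

/-- Lemma 2c of the paper. -/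
theorem w_positive_until_u_m
    (b β u₀ q₀ u_m uP u_knee : ℝ) (S : ℝ → ℝ)
    (hb : 0 < b) (hβ : 0 < β)
    (hS : ContDiff ℝ 1 S)
    (hS' : ∀ x : ℝ, 0 < deriv S x)
    (hSpos : ∀ x : ℝ, 0 < S x) (hSlt : ∀ x : ℝ, S x < 1)
    -- (C1): unique equilibrium p₀ = (u₀,u₀,0,q₀)
    (hq₀ : q₀ = 1 / (1 + β * S u₀)) (hu₀ : u₀ = q₀ * S u₀)
    (hC1 : ∀ u q : ℝ, u = q * S u → q = 1 / (1 + β * S u) → u = u₀ ∧ q = q₀)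
    -- (C2): h(u) = u/S(u) has one local max then one local min (at u_knee), no other critical points
    (hC2 : ∃ u_max : ℝ, u_max < u_knee ∧ IsLocalMax (fun x : ℝ => x / S x) u_max ∧
      IsLocalMin (fun x : ℝ => x / S x) u_knee ∧
      ∀ x : ℝ, deriv (fun y : ℝ => y / S y) x = 0 → x = u_max ∨ x = u_knee)
    -- (C3): h(u) = q₀ has exactly three solutions u₀ < u_m < uP
    (hlt₁ : u₀ < u_m) (hlt₂ : u_m < uP)
    (hC3 : ∀ x : ℝ, x / S x = q₀ ↔ x = u₀ ∨ x = u_m ∨ x = uP)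
    -- (C4)
    (hC4 : 0 < ∫ x in u₀..uP, (q₀ * S x - x))
    (ε c : ℝ) (hε : 0 < ε) (hc : 0 < c)
    (u v w q : ℝ → ℝ) (hp : SolOne b β S ε c u v w q)
    (hnc : Nonconst4 u v w q)
    (hlim : Tendsto (fun t => (u t, v t, w t, q t)) atBot (𝓝 (u₀, u₀, 0, q₀)))
    (hbehav : ∀ᶠ t in atBot,
      u₀ < u t ∧ u t < v t ∧ 0 < w t ∧ q t < q₀ ∧ deriv q t < 0) :
    ∃ τ : ℝ, (∀ t : ℝ, t ≤ τ → 0 < w t) ∧ u τ = u_m := by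
  have hp' : ∀ t : ℝ,
      HasDerivAt u ((v t - u t) / c) t ∧
      HasDerivAt v (w t) t ∧
      HasDerivAt w (b ^ 2 * (v t - q t * S (u t))) t ∧
      HasDerivAt q (ε / c * (1 - q t - β * (q t * S (u t)))) t := hp
  have hucont : Continuous u :=
    continuous_iff_continuousAt.mpr fun t => (hp' t).1.differentiableAt.continuousAt
  have hvcont : Continuous v :=
    continuous_iff_continuousAt.mpr fun t => (hp' t).2.1.differentiableAt.continuousAt
  have hwcont : Continuous w :=
    continuous_iff_continuousAt.mpr fun t => (hp' t).2.2.1.differentiableAt.continuousAt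
  have hqcont : Continuous q :=
    continuous_iff_continuousAt.mpr fun t => (hp' t).2.2.2.differentiableAt.continuousAt
  have hSmono : StrictMono S := strictMono_of_deriv_pos hS'
  have hK : ∀ x : ℝ, u₀ < x → x < u_m → q₀ * S x < x := by
    intro x h1 h2
    have := hfun_gt_q₀ S u₀ q₀ u_m uP u_knee hS hSpos hu₀ hC2 hlt₁ hlt₂ hC3 x h1 h2
    rw [lt_div_iff₀ (hSpos x)] at this
    linarith
  have hden : 0 < 1 + β * S u₀ := by nlinarith [hSpos u₀]
  have hq₀pos : 0 < q₀ := by rw [hq₀]; positivity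
  have hq₀one : q₀ * (1 + β * S u₀) = 1 := by rw [hq₀]; field_simp
  have hulim : Tendsto u atBot (𝓝 u₀) := (continuous_fst.tendsto _).comp hlim
  have hum_ev : ∀ᶠ t in atBot, u t < u_m := hulim.eventually (eventually_lt_nhds hlt₁)
  obtain ⟨T, hT⟩ := eventually_atBot.mp (hbehav.and hum_ev)
  set F : Set ℝ := {r | u r ≤ u₀ ∨ v r ≤ u r ∨ w r ≤ 0 ∨ q₀ ≤ q r} with hFdef
  have hFc : IsClosed F :=
    (isClosed_le hucont continuous_const).union ((isClosed_le hvcont hucont).union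
      ((isClosed_le hwcont continuous_const).union (isClosed_le continuous_const hqcont)))
  have key : ∀ t₂ : ℝ, (∀ r, T ≤ r → r < t₂ → u r < u_m) →
      ∀ s, T ≤ s → s < t₂ → (u₀ < u s ∧ u s < v s ∧ 0 < w s ∧ q s < q₀) := by
    intro t₂ hm
    have main : ∀ s, T ≤ s → s < t₂ → s ∉ F := by
      intro s hsT hst hsF
      set G : Set ℝ := F ∩ Icc T s with hGdef
      have hGc : IsClosed G := hFc.inter isClosed_Icc
      have hGne : G.Nonempty := ⟨s, hsF, hsT, le_rfl⟩
      have hGbd : BddBelow G := ⟨T, fun r hr => hr.2.1⟩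
      set t₁ := sInf G with ht₁def
      have ht₁G : t₁ ∈ G := hGc.csInf_mem hGne hGbd
      have ht₁T : T ≤ t₁ := ht₁G.2.1
      have ht₁s : t₁ ≤ s := ht₁G.2.2
      have hTnF : T ∉ F := by
        intro hTF
        rcases hTF with h | h | h | h
        · exact absurd (hT T le_rfl).1.1 (not_lt.2 h)
        · exact absurd (hT T le_rfl).1.2.1 (not_lt.2 h)
        · exact absurd (hT T le_rfl).1.2.2.1 (not_lt.2 h)
        · exact absurd (hT T le_rfl).1.2.2.2.1 (not_lt.2 h)
      have hTt₁ : T < t₁ :=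
        lt_of_le_of_ne ht₁T fun he => hTnF (by rw [he]; exact ht₁G.1)
      have good : ∀ r, T ≤ r → r < t₁ → (u₀ < u r ∧ u r < v r ∧ 0 < w r ∧ q r < q₀) := by
        intro r h1 h2
        have hrnF : r ∉ F := fun hrF =>
          absurd (csInf_le hGbd ⟨hrF, h1, h2.le.trans ht₁s⟩) (not_le.2 h2)
        simp only [hFdef, mem_setOf_eq, not_or, not_le] at hrnF
        exact hrnF
      have humb : ∀ r, T ≤ r → r ≤ t₁ → u r < u_m := fun r h1 h2 =>
        hm r h1 (lt_of_le_of_lt (h2.trans ht₁s) hst)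
      have humono : StrictMonoOn u (Icc T t₁) := by
        apply strictMonoOn_of_deriv_pos (convex_Icc T t₁) hucont.continuousOn
        intro x hx
        rw [interior_Icc] at hx
        rw [(hp' x).1.deriv]
        exact div_pos (sub_pos.2 (good x hx.1.le hx.2).2.1) hc
      have hut₁ : u₀ < u t₁ :=
        lt_trans (hT T le_rfl).1.1 (humono ⟨le_rfl, ht₁T⟩ ⟨ht₁T, le_rfl⟩ hTt₁)
      have hwmono : StrictMonoOn w (Icc T t₁) := by
        apply strictMonoOn_of_deriv_pos (convex_Icc T t₁) hwcont.continuousOn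
        intro x hx
        rw [interior_Icc] at hx
        rw [(hp' x).2.2.1.deriv]
        obtain ⟨g1, g2, g3, g4⟩ := good x hx.1.le hx.2
        have h5 : q x * S (u x) < q₀ * S (u x) := mul_lt_mul_of_pos_right g4 (hSpos _)
        have h6 : q₀ * S (u x) < u x := hK (u x) g1 (humb x hx.1.le hx.2.le)
        have h7 : 0 < v x - q x * S (u x) := by linarith
        exact mul_pos (pow_pos hb 2) h7
      have hwt₁ : 0 < w t₁ :=
        lt_trans (hT T le_rfl).1.2.2.1 (hwmono ⟨le_rfl, ht₁T⟩ ⟨ht₁T, le_rfl⟩ hTt₁)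
      have hIoo : Ioo T t₁ ∈ 𝓝[<] t₁ := Ioo_mem_nhdsLT hTt₁
      rcases ht₁G.1 with hcase | hcase | hcase | hcase
      · linarith
      · -- v t₁ ≤ u t₁
        have hge : (0:ℝ) ≤ v t₁ - u t₁ :=
          le_left_lim (f := fun r => v r - u r) (b := t₁) hTt₁ (hvcont.sub hucont) fun r h1 h2 => by
            show (0:ℝ) ≤ v r - u r
            have := (good r h1.le h2).2.1; linarith
        have heq : v t₁ - u t₁ = 0 := le_antisymm (by linarith) hge
        have hd : HasDerivAt (fun r => v r - u r) (w t₁ - (v t₁ - u t₁) / c) t₁ :=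
          (hp' t₁).2.1.sub (hp' t₁).1
        rw [heq, zero_div, sub_zero] at hd
        have hev := eventually_left_lt hd hwt₁
        obtain ⟨r, hr1, hr2⟩ := (hev.and (Filter.eventually_of_mem hIoo fun r hr => hr)).exists
        have hr1' : v r - u r < v t₁ - u t₁ := hr1
        have := (good r hr2.1.le hr2.2).2.1
        linarith
      · linarith
      · -- q₀ ≤ q t₁
        have hge : (0:ℝ) ≤ q₀ - q t₁ :=
          le_left_lim (f := fun r => q₀ - q r) (b := t₁) hTt₁ (continuous_const.sub hqcont) fun r h1 h2 => by
            show (0:ℝ) ≤ q₀ - q r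
            have := (good r h1.le h2).2.2.2; linarith
        have heq : q t₁ = q₀ := le_antisymm (by linarith) hcase
        have hd := (hp' t₁).2.2.2
        have hdneg : ε / c * (1 - q t₁ - β * (q t₁ * S (u t₁))) < 0 := by
          have hSgt : S u₀ < S (u t₁) := hSmono hut₁
          have h8 : 1 - q t₁ - β * (q t₁ * S (u t₁)) < 0 := by
            rw [heq]
            nlinarith [mul_pos hβ (mul_pos hq₀pos (sub_pos.2 hSgt))]
          exact mul_neg_of_pos_of_neg (div_pos hε hc) h8
        have hev := eventually_left_gt hd hdneg
        obtain ⟨r, hr1, hr2⟩ := (hev.and (Filter.eventually_of_mem hIoo fun r hr => hr)).exists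
        have hr1' : q t₁ < q r := hr1
        have := (good r hr2.1.le hr2.2).2.2.2
        rw [heq] at hr1'
        linarith
    intro s h1 h2
    have := main s h1 h2
    simp only [hFdef, mem_setOf_eq, not_or, not_le] at this
    exact this
  -- the solution must reach u_m
  have hhit : ∃ t, T ≤ t ∧ u t = u_m := by
    by_contra hno
    push_neg at hno
    have hlt_all : ∀ t, T ≤ t → u t < u_m := by
      intro t ht'
      rcases lt_trichotomy (u t) u_m with h | h | h
      · exact h
      · exact absurd h (hno t ht')
      · obtain ⟨r, hrm, hru⟩ := intermediate_value_Icc ht' hucont.continuousOn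
          (⟨(hT T le_rfl).2.le, h.le⟩ : u_m ∈ Icc (u T) (u t))
        exact absurd hru (hno r hrm.1)
    have hgood : ∀ s, T ≤ s → (u₀ < u s ∧ u s < v s ∧ 0 < w s ∧ q s < q₀) :=
      fun s hs => key (s + 1) (fun r h1 _ => hlt_all r h1) s hs (by linarith)
    have hwmono : StrictMonoOn w (Ici T) := by
      apply strictMonoOn_of_deriv_pos (convex_Ici T) hwcont.continuousOn
      intro x hx
      rw [interior_Ici] at hx
      rw [(hp' x).2.2.1.deriv]
      obtain ⟨g1, g2, g3, g4⟩ := hgood x hx.le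
      have h5 : q x * S (u x) < q₀ * S (u x) := mul_lt_mul_of_pos_right g4 (hSpos _)
      have h6 : q₀ * S (u x) < u x := hK (u x) g1 (hlt_all x hx.le)
      have h7 : 0 < v x - q x * S (u x) := by linarith
      exact mul_pos (pow_pos hb 2) h7
    set δ := w T with hδdef
    have hδpos : 0 < δ := (hT T le_rfl).1.2.2.1
    have hwge : ∀ t, T ≤ t → δ ≤ w t := by
      intro t ht'
      rcases eq_or_lt_of_le ht' with h | h
      · rw [← h]
      · exact (hwmono self_mem_Ici ht' h).le
    have hvmono : MonotoneOn (fun t => v t - δ * t) (Ici T) := by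
      apply monotoneOn_of_deriv_nonneg (convex_Ici T)
      · exact (hvcont.sub (continuous_const.mul continuous_id)).continuousOn
      · intro x hx
        exact ((hp' x).2.1.sub ((hasDerivAt_id x).const_mul δ)).differentiableAt.differentiableWithinAt
      · intro x hx
        rw [interior_Ici] at hx
        have hdv : HasDerivAt (fun t => v t - δ * t) (w x - δ * 1) x :=
          (hp' x).2.1.sub ((hasDerivAt_id x).const_mul δ)
        rw [hdv.deriv]
        have := hwge x hx.le
        linarith [mul_one δ]
    set M := max 0 ((u_m + c - v T) / δ) with hMdef
    set T₂ := T + M + 1 with hT₂def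
    have hT₂T : T ≤ T₂ := by
      have : (0:ℝ) ≤ M := le_max_left _ _
      linarith [hT₂def]
    have hvT₂ : u_m + c < v T₂ := by
      have h1 : v T - δ * T ≤ v T₂ - δ * T₂ := hvmono self_mem_Ici hT₂T hT₂T
      have h2 : (u_m + c - v T) / δ ≤ M := le_max_right _ _
      have h3 : u_m + c - v T ≤ δ * M := by
        rw [div_le_iff₀ hδpos] at h2; linarith
      have h4 : δ * T₂ = δ * T + δ * M + δ := by rw [hT₂def]; ring
      linarith
    have hvmono2 : StrictMonoOn v (Ici T) := by
      apply strictMonoOn_of_deriv_pos (convex_Ici T) hvcont.continuousOn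
      intro x hx
      rw [interior_Ici] at hx
      rw [(hp' x).2.1.deriv]
      exact lt_of_lt_of_le hδpos (hwge x hx.le)
    have hvge : ∀ t, T₂ ≤ t → u_m + c < v t := by
      intro t ht'
      rcases eq_or_lt_of_le ht' with h | h
      · rw [← h]; exact hvT₂
      · exact lt_trans hvT₂ (hvmono2 hT₂T (hT₂T.trans ht') h)
    have humono2 : MonotoneOn (fun t => u t - t) (Ici T₂) := by
      apply monotoneOn_of_deriv_nonneg (convex_Ici T₂)
      · exact (hucont.sub continuous_id).continuousOn
      · intro x hx
        exact ((hp' x).1.sub (hasDerivAt_id x)).differentiableAt.differentiableWithinAt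
      · intro x hx
        rw [interior_Ici] at hx
        have hdu : HasDerivAt (fun t => u t - t) ((v x - u x) / c - 1) x :=
          (hp' x).1.sub (hasDerivAt_id x)
        rw [hdu.deriv]
        have h1 := hvge x hx.le
        have h2 := hlt_all x (hT₂T.trans hx.le)
        have h3 : 1 ≤ (v x - u x) / c := by
          rw [le_div_iff₀ hc]; linarith
        linarith
    set t₃ := T₂ + (u_m - u T₂) + 1 with ht₃def
    have hu2 := hlt_all T₂ hT₂T
    have ht₃ : T₂ ≤ t₃ := by linarith [ht₃def]
    have h5 : u T₂ - T₂ ≤ u t₃ - t₃ := humono2 self_mem_Ici ht₃ ht₃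
    have hfin := hlt_all t₃ (hT₂T.trans ht₃)
    linarith [ht₃def]
  -- definition of τ
  obtain ⟨t₀, ht₀T, ht₀⟩ := hhit
  set A : Set ℝ := {t | T ≤ t ∧ u t = u_m} with hAdef
  have hAc : IsClosed A :=
    (isClosed_le continuous_const continuous_id).inter (isClosed_eq hucont continuous_const)
  have hAne : A.Nonempty := ⟨t₀, ht₀T, ht₀⟩
  have hAbd : BddBelow A := ⟨T, fun r hr => hr.1⟩
  set τ := sInf A with hτdef
  have hτA : τ ∈ A := hAc.csInf_mem hAne hAbd
  have hτT : T ≤ τ := hτA.1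
  have huτ : u τ = u_m := hτA.2
  have hTτ : T < τ := by
    rcases eq_or_lt_of_le hτT with he | he
    · exfalso
      have := (hT T le_rfl).2
      rw [he] at this
      exact absurd huτ (ne_of_lt this)
    · exact he
  have hbefore : ∀ s, T ≤ s → s < τ → u s < u_m := by
    intro s h1 h2
    rcases lt_trichotomy (u s) u_m with h | h | h
    · exact h
    · exact absurd (csInf_le hAbd ⟨h1, h⟩) (not_le.2 h2)
    · obtain ⟨r, hrm, hru⟩ := intermediate_value_Icc h1 hucont.continuousOn
        (⟨(hT T le_rfl).2.le, h.le⟩ : u_m ∈ Icc (u T) (u s))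
      exact absurd (csInf_le hAbd ⟨hrm.1, hru⟩) (not_le.2 (lt_of_le_of_lt hrm.2 h2))
  have hgoodτ : ∀ s, T ≤ s → s < τ → (u₀ < u s ∧ u s < v s ∧ 0 < w s ∧ q s < q₀) :=
    key τ hbefore
  have hwmonoτ : StrictMonoOn w (Icc T τ) := by
    apply strictMonoOn_of_deriv_pos (convex_Icc T τ) hwcont.continuousOn
    intro x hx
    rw [interior_Icc] at hx
    rw [(hp' x).2.2.1.deriv]
    obtain ⟨g1, g0, g3, g4⟩ := hgoodτ x hx.1.le hx.2
    have h5 : q x * S (u x) < q₀ * S (u x) := mul_lt_mul_of_pos_right g4 (hSpos _)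
    have h6 : q₀ * S (u x) < u x := hK (u x) g1 (hbefore x hx.1.le hx.2)
    have h7 : 0 < v x - q x * S (u x) := by linarith
    exact mul_pos (pow_pos hb 2) h7
  refine ⟨τ, ?_, huτ⟩
  intro t ht
  rcases le_or_gt t T with h | h
  · exact (hT t h).1.2.2.1
  · rcases eq_or_lt_of_le ht with h2 | h2
    · rw [h2]
      exact lt_trans (hT T le_rfl).1.2.2.1 (hwmonoτ ⟨le_rfl, hτT⟩ ⟨hτT, le_rfl⟩ hTτ)
    · exact (hgoodτ t h.le h2).2.2.1
end
end

section
/- Let ε > 0 and c > 0, and let p = (u,v,w,q) be a nonconstant solution of system (1). Suppose that at some time τ one of the following four sets of conditions holds: (i) u'(τ) = 0, v'(τ) = 0, w'(τ) ≤ 0, q'(τ) ≤ 0, and u(τ) ≥ u₀; (ii) u'(τ) = 0, v'(τ) < 0, w'(τ) = 0, q'(τ) = 0, and u(τ) ≥ u₀; (iii) u'(τ) = 0, v'(τ) ≤ 0, q'(τ) > 0, and u(τ) = u₀; or (iv) u'(τ) = 0, v'(τ) ≤ 0, w'(τ) > 0, q'(τ) ≥ 0, and u(τ) ≥ u₀.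 Then it is not the case that lim_{t→−∞} p(t) = p₀. -/
open Filter Topology

noncomputable section

open Set Real

/-- If `f y < f x` for all `y ∈ [a, x)`, then the derivative of `f` at `x` is nonneg. -/
lemma deriv_nonneg_of_lt_left {f : ℝ → ℝ} {d a x : ℝ} (hf : HasDerivAt f d x)
    (hax : a < x) (h : ∀ y, a ≤ y → y < x → f y < f x) : 0 ≤ d := by
  have hs : Tendsto (slope f x) (𝓝[≠] x) (𝓝 d) := hasDerivAt_iff_tendsto_slope.mp hf
  have hsub : 𝓝[<] x ≤ 𝓝[≠] x := nhdsWithin_mono _ fun y hy => ne_of_lt hy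
  have h1 : Tendsto (slope f x) (𝓝[<] x) (𝓝 d) := hs.mono_left hsub
  have h2 : ∀ᶠ y in 𝓝[<] x, 0 ≤ slope f x y := by
    filter_upwards [Ioo_mem_nhdsLT_of_mem (⟨hax, le_rfl⟩ : x ∈ Ioc a x)] with y hy
    have hfy : f y < f x := h y (le_of_lt hy.1) hy.2
    have hyx : y - x < 0 := sub_neg.mpr hy.2
    rw [slope_def_field, div_nonneg_iff]
    right
    constructor
    · linarith
    · linarith
  exact ge_of_tendsto h1 h2

lemma deriv_nonpos_of_gt_left {f : ℝ → ℝ} {d a x : ℝ} (hf : HasDerivAt f d x)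
    (hax : a < x) (h : ∀ y, a ≤ y → y < x → f x < f y) : d ≤ 0 := by
  have := deriv_nonneg_of_lt_left (f := fun y => -f y) (d := -d) hf.neg hax
    (fun y hy1 hy2 => by simpa using (h y hy1 hy2))
  linarith

lemma exists_lt_of_deriv_neg' {f : ℝ → ℝ} {d x : ℝ} (hf : HasDerivAt f d x)
    (hd : d < 0) : ∃ y, x < y ∧ f y < f x := by
  have hs : Tendsto (slope f x) (𝓝[≠] x) (𝓝 d) := hasDerivAt_iff_tendsto_slope.mp hf
  have hsub : 𝓝[>] x ≤ 𝓝[≠] x := nhdsWithin_mono _ fun y hy => ne_of_gt hy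
  have h1 : Tendsto (slope f x) (𝓝[>] x) (𝓝 d) := hs.mono_left hsub
  have h2 : ∀ᶠ y in 𝓝[>] x, slope f x y < 0 := h1.eventually (eventually_lt_nhds hd)
  have h3 : ∀ᶠ y in 𝓝[>] x, x < y := eventually_mem_nhdsWithin
  obtain ⟨y, hy1, hy2⟩ := (h2.and h3).exists
  refine ⟨y, hy2, ?_⟩
  rw [slope_def_field] at hy1
  have hxy : 0 < y - x := sub_pos.mpr hy2
  by_contra hcon
  push_neg at hcon
  have : 0 ≤ (f y - f x) / (y - x) := div_nonneg (by linarith) (le_of_lt hxy)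
  linarith

/-- A differentiable function whose derivative is eventually `≤ -δ < 0` cannot converge
at `+∞`. -/
lemma no_limit_of_deriv_le_neg {f g : ℝ → ℝ} {s₁ δ l : ℝ}
    (hf : ∀ s, HasDerivAt f (g s) s) (hδ : 0 < δ)
    (hg : ∀ s, s₁ ≤ s → g s ≤ -δ) (hl : Tendsto f atTop (𝓝 l)) : False := by
  have hderiv : ∀ s, HasDerivAt (fun y => f y + δ * y) (g s + δ) s := fun s =>
    (hf s).add ((hasDerivAt_id s).const_mul δ |>.congr_deriv (by ring))
  have hanti : AntitoneOn (fun y => f y + δ * y) (Ici s₁) := by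
    apply antitoneOn_of_deriv_nonpos (convex_Ici s₁)
    · exact fun x _ => ((hderiv x).continuousAt).continuousWithinAt
    · exact fun x _ => (hderiv x).differentiableAt.differentiableWithinAt
    · intro x hx
      rw [(hderiv x).deriv]
      rw [interior_Ici] at hx
      have := hg x (le_of_lt hx)
      linarith
  have hbound : ∀ s, s₁ ≤ s → f s ≤ f s₁ + δ * s₁ - δ * s := by
    intro s hs
    have := hanti (self_mem_Ici) (mem_Ici.mpr hs) hs
    simp only at this
    linarith
  have hev : ∀ᶠ s in atTop, l - 1 < f s := by
    have : Iio (l + 1) ∩ Ioi (l - 1) ∈ 𝓝 l := by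
      apply inter_mem (Iio_mem_nhds (by linarith)) (Ioi_mem_nhds (by linarith))
    filter_upwards [hl this] with s hsm
    exact hsm.2
  obtain ⟨s, hs1, hs2⟩ := ((eventually_ge_atTop (max s₁ ((f s₁ + δ * s₁ - (l - 1)) / δ))).and hev).exists
  have hss : s₁ ≤ s := le_trans (le_max_left _ _) hs1
  have hs3 : (f s₁ + δ * s₁ - (l - 1)) / δ ≤ s := le_trans (le_max_right _ _) hs1
  have := hbound s hss
  rw [div_le_iff₀ hδ] at hs3
  linarith

/-- Barrier lemma: a positivity-preserving (backward) linear differential inequality system.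
If each derivative is bounded by `L * M` whenever all components are `≤ M` (`M > 0`), and all
components start `≤ 0`, then they stay `≤ 0` for all `s ≥ 0`. -/
lemma barrier_le_zero {L : ℝ} {c₁ c₂ c₃ c₄ d₁ d₂ d₃ d₄ : ℝ → ℝ}
    (h₁ : ∀ s, HasDerivAt c₁ (d₁ s) s) (h₂ : ∀ s, HasDerivAt c₂ (d₂ s) s)
    (h₃ : ∀ s, HasDerivAt c₃ (d₃ s) s) (h₄ : ∀ s, HasDerivAt c₄ (d₄ s) s)
    (hbound : ∀ s, 0 ≤ s → ∀ M, 0 < M → c₁ s ≤ M → c₂ s ≤ M → c₃ s ≤ M → c₄ s ≤ M →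
      d₁ s ≤ L * M ∧ d₂ s ≤ L * M ∧ d₃ s ≤ L * M ∧ d₄ s ≤ L * M)
    (h01 : c₁ 0 ≤ 0) (h02 : c₂ 0 ≤ 0) (h03 : c₃ 0 ≤ 0) (h04 : c₄ 0 ≤ 0) :
    ∀ s, 0 ≤ s → c₁ s ≤ 0 ∧ c₂ s ≤ 0 ∧ c₃ s ≤ 0 ∧ c₄ s ≤ 0 := by
  set B : ℝ := max L 0 + 1 with hB
  have hBL : L < B := lt_of_le_of_lt (le_max_left _ _) (by linarith)
  have hcont : ∀ (f g : ℝ → ℝ), (∀ s, HasDerivAt f (g s) s) → Continuous f := by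
    intro f g hfg
    exact continuous_iff_continuousAt.mpr fun x => (hfg x).continuousAt
  have hc₁ := hcont _ _ h₁
  have hc₂ := hcont _ _ h₂
  have hc₃ := hcont _ _ h₃
  have hc₄ := hcont _ _ h₄
  set m : ℝ → ℝ := fun s => max (max (c₁ s) (c₂ s)) (max (c₃ s) (c₄ s)) with hm
  have hmc : Continuous m := ((hc₁.max hc₂).max (hc₃.max hc₄))
  -- main claim with barrier η e^{Bs}
  have main : ∀ T, 0 < T → ∀ η, 0 < η → ∀ s, s ∈ Icc (0:ℝ) T →
      m s < η * Real.exp (B * s) := by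
    intro T hT η hη
    by_contra hcon
    push_neg at hcon
    obtain ⟨s₀, hs₀, hbad⟩ := hcon
    set ebar : ℝ → ℝ := fun s => η * Real.exp (B * s) with hebar
    have hebarc : Continuous ebar :=
      continuous_const.mul (Real.continuous_exp.comp (continuous_const.mul continuous_id))
    have hebarpos : ∀ s, 0 < ebar s := fun s => mul_pos hη (Real.exp_pos _)
    set A : Set ℝ := {s | s ∈ Icc (0:ℝ) T ∧ ebar s ≤ m s} with hA
    have hAne : A.Nonempty := ⟨s₀, hs₀, hbad⟩
    have hclosed : IsClosed A := by
      have hset : A = Icc (0:ℝ) T ∩ {s | ebar s ≤ m s} := rfl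
      rw [hset]
      exact isClosed_Icc.inter (isClosed_le hebarc hmc)
    have hbdd : BddBelow A := ⟨0, fun x hx => hx.1.1⟩
    set sstar := sInf A with hsstar
    have hmem : sstar ∈ A := hclosed.csInf_mem hAne hbdd
    have hs0 : 0 ≤ sstar := hmem.1.1
    have hsT : sstar ≤ T := hmem.1.2
    have hm0 : m 0 ≤ 0 := by
      simp only [hm]
      exact max_le (max_le h01 h02) (max_le h03 h04)
    have hspos : 0 < sstar := by
      rcases eq_or_lt_of_le hs0 with h | h
      · exfalso
        have h0A := hmem.2
        rw [← h] at h0A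
        have h0e : ebar 0 = η := by simp [hebar]
        rw [h0e] at h0A
        linarith
      · exact h
    have hbefore : ∀ y, 0 ≤ y → y < sstar → m y < ebar y := by
      intro y hy0 hys
      by_contra hcon2
      push_neg at hcon2
      have hyA : y ∈ A := ⟨⟨hy0, le_trans (le_of_lt hys) hsT⟩, hcon2⟩
      exact absurd (csInf_le hbdd hyA) (not_le.mpr hys)
    -- at sstar, m sstar ≤ ebar sstar by continuity from the left
    have hle : m sstar ≤ ebar sstar := by
      have h1 : Tendsto (fun y => m y - ebar y) (𝓝[<] sstar) (𝓝 (m sstar - ebar sstar)) :=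
        ((hmc.sub hebarc).tendsto sstar).mono_left nhdsWithin_le_nhds
      have h2 : ∀ᶠ y in 𝓝[<] sstar, m y - ebar y ≤ 0 := by
        filter_upwards [Ioo_mem_nhdsLT_of_mem (⟨hspos, le_rfl⟩ : sstar ∈ Ioc 0 sstar)] with y hy
        have := hbefore y (le_of_lt hy.1) hy.2
        linarith
      have := le_of_tendsto h1 h2
      linarith
    have heq : m sstar = ebar sstar := le_antisymm hle hmem.2
    -- all components ≤ ebar sstar at sstar, and one equals it
    have hcomp : c₁ sstar ≤ ebar sstar ∧ c₂ sstar ≤ ebar sstar ∧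
        c₃ sstar ≤ ebar sstar ∧ c₄ sstar ≤ ebar sstar := by
      have e1 : c₁ sstar ≤ m sstar := le_trans (le_max_left _ _) (le_max_left _ _)
      have e2 : c₂ sstar ≤ m sstar := le_trans (le_max_right _ _) (le_max_left _ _)
      have e3 : c₃ sstar ≤ m sstar := le_trans (le_max_left _ _) (le_max_right _ _)
      have e4 : c₄ sstar ≤ m sstar := le_trans (le_max_right _ _) (le_max_right _ _)
      exact ⟨le_trans e1 hle, le_trans e2 hle, le_trans e3 hle, le_trans e4 hle⟩
    have hM : 0 < ebar sstar := hebarpos sstar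
    obtain ⟨hd1, hd2, hd3, hd4⟩ :=
      hbound sstar hs0 (ebar sstar) hM hcomp.1 hcomp.2.1 hcomp.2.2.1 hcomp.2.2.2
    -- derivative of ebar
    have hebar' : HasDerivAt ebar (B * ebar sstar) sstar := by
      have h0 : HasDerivAt (fun s : ℝ => B * s) B sstar := by
        simpa using (hasDerivAt_id sstar).const_mul B
      have h1 : HasDerivAt (fun s : ℝ => Real.exp (B * s)) (Real.exp (B * sstar) * B) sstar :=
        (Real.hasDerivAt_exp (B * sstar)).comp sstar h0
      have := h1.const_mul η
      refine this.congr_deriv ?_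
      simp only [hebar]
      ring
    -- pick the component achieving the max
    have hpick : ebar sstar ≤ c₁ sstar ∨ ebar sstar ≤ c₂ sstar ∨
        ebar sstar ≤ c₃ sstar ∨ ebar sstar ≤ c₄ sstar := by
      have := hmem.2
      simp only [hm, max_le_iff] at *
      rcases le_max_iff.mp this with h | h
      · rcases le_max_iff.mp h with h | h
        · exact Or.inl h
        · exact Or.inr (Or.inl h)
      · rcases le_max_iff.mp h with h | h
        · exact Or.inr (Or.inr (Or.inl h))
        · exact Or.inr (Or.inr (Or.inr h))
    have final : ∀ (f g : ℝ → ℝ), (∀ s, HasDerivAt f (g s) s) →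
        g sstar ≤ L * ebar sstar → (∀ y, 0 ≤ y → y < sstar → f y ≤ m y) →
        ebar sstar ≤ f sstar → False := by
      intro f g hfg hgL hfm hfs
      have hd : HasDerivAt (fun y => f y - ebar y) (g sstar - B * ebar sstar) sstar :=
        (hfg sstar).sub hebar'
      have hlt : ∀ y, 0 ≤ y → y < sstar → (fun y => f y - ebar y) y <
          (fun y => f y - ebar y) sstar := by
        intro y hy0 hys
        have h1 := hfm y hy0 hys
        have h2 := hbefore y hy0 hys
        have h3 : ebar sstar ≤ f sstar := hfs
        simp only
        linarith
      have := deriv_nonneg_of_lt_left hd hspos hlt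
      nlinarith
    rcases hpick with h | h | h | h
    · exact final c₁ d₁ h₁ hd1
        (fun y hy0 hys => le_trans (le_max_left _ _) (le_max_left _ _)) h
    · exact final c₂ d₂ h₂ hd2
        (fun y hy0 hys => le_trans (le_max_right _ _) (le_max_left _ _)) h
    · exact final c₃ d₃ h₃ hd3
        (fun y hy0 hys => le_trans (le_max_left _ _) (le_max_right _ _)) h
    · exact final c₄ d₄ h₄ hd4
        (fun y hy0 hys => le_trans (le_max_right _ _) (le_max_right _ _)) h
  -- conclude
  intro s hs
  have hms : m s ≤ 0 := by
    by_contra hpos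
    push_neg at hpos
    have hT : 0 < s + 1 := by linarith
    set η := m s / (2 * Real.exp (B * s)) with hη
    have hηpos : 0 < η := by
      apply div_pos hpos
      positivity
    have := main (s + 1) hT η hηpos s ⟨hs, by linarith⟩
    rw [hη] at this
    rw [div_mul_eq_mul_div, lt_div_iff₀ (by positivity)] at this
    nlinarith [Real.exp_pos (B * s)]
  refine ⟨?_, ?_, ?_, ?_⟩
  · exact le_trans (le_trans (le_max_left _ _) (le_max_left _ _)) hms
  · exact le_trans (le_trans (le_max_right _ _) (le_max_left _ _)) hms
  · exact le_trans (le_trans (le_max_left _ _) (le_max_right _ _)) hms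
  · exact le_trans (le_trans (le_max_right _ _) (le_max_right _ _)) hms

/-- A solution of an autonomous C¹ ODE passing through an equilibrium is constant. -/
lemma ODE_const_of_eq {F : (ℝ × ℝ × ℝ × ℝ) → (ℝ × ℝ × ℝ × ℝ)} (hF : ContDiff ℝ 1 F)
    {p : ℝ → ℝ × ℝ × ℝ × ℝ} (hp : ∀ t, HasDerivAt p (F (p t)) t)
    {x₀ : ℝ × ℝ × ℝ × ℝ} (hx₀ : F x₀ = 0) {t₀ : ℝ} (h : p t₀ = x₀) : ∀ t, p t = x₀ := by
  have hpc : Continuous p := continuous_iff_continuousAt.mpr fun t => (hp t).continuousAt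
  set E : Set ℝ := {t | p t = x₀} with hE
  have hclosed : IsClosed E := isClosed_eq hpc continuous_const
  have hopen : IsOpen E := by
    rw [isOpen_iff_mem_nhds]
    intro t₁ ht₁
    obtain ⟨K, tset, htset, hlip⟩ := (hF.contDiffAt (x := x₀)).exists_lipschitzOnWith
    have hf : ∀ᶠ t in 𝓝 t₁, HasDerivAt p ((fun _ y => F y) t (p t)) t ∧ p t ∈ (fun _ : ℝ => tset) t := by
      have hmem : ∀ᶠ t in 𝓝 t₁, p t ∈ tset := by
        have : p t₁ = x₀ := ht₁
        have := hpc.continuousAt (x := t₁)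
        rw [ContinuousAt, ht₁] at this
        exact this htset
      filter_upwards [hmem] with t ht
      exact ⟨hp t, ht⟩
    have hg : ∀ᶠ t in 𝓝 t₁, HasDerivAt (fun _ : ℝ => x₀) ((fun _ y => F y) t x₀) t ∧
        x₀ ∈ (fun _ : ℝ => tset) t := by
      apply Filter.Eventually.of_forall
      intro t
      constructor
      · simpa [hx₀] using (hasDerivAt_const t x₀)
      · exact mem_of_mem_nhds htset
    have heq : p =ᶠ[𝓝 t₁] (fun _ => x₀) :=
      ODE_solution_unique_of_eventually (Filter.Eventually.of_forall fun _ => hlip) hf hg ht₁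
    exact heq.mono fun t ht => ht
  have huniv : E = univ := by
    rcases isClopen_iff.mp ⟨hclosed, hopen⟩ with h' | h'
    · exfalso
      have ht₀ : t₀ ∈ E := h
      rw [h'] at ht₀
      exact ht₀
    · exact h'
  intro t
  have ht : t ∈ E := by rw [huniv]; trivial
  exact ht

/-- A continuous function with a limit at `-∞` is bounded on `(-∞, τ]`. -/
lemma bounded_of_tendsto_atBot {f : ℝ → ℝ} {l : ℝ} (τ : ℝ) (hf : Continuous f)
    (h : Tendsto f atBot (𝓝 l)) : ∃ M, ∀ t, t ≤ τ → |f t| ≤ M := by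
  have h1 : ∀ᶠ t in atBot, dist (f t) l < 1 := h (Metric.ball_mem_nhds l one_pos)
  rw [eventually_atBot] at h1
  obtain ⟨T, hT⟩ := h1
  set T' := min T τ with hT'
  obtain ⟨x, hx, hmax⟩ := isCompact_Icc.exists_isMaxOn (f := fun t => |f t|)
    (nonempty_Icc.mpr (min_le_right T τ)) (hf.abs.continuousOn)
  refine ⟨max (|f x|) (|l| + 1), fun t ht => ?_⟩
  rcases le_or_gt t T' with h' | h'
  · have hd : dist (f t) l < 1 := hT t (le_trans h' (min_le_left T τ))
    rw [Real.dist_eq] at hd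
    have : |f t| ≤ |f t - l| + |l| := by
      calc |f t| = |(f t - l) + l| := by ring_nf
      _ ≤ |f t - l| + |l| := abs_add_le _ _
    exact le_trans (by linarith) (le_max_right _ _)
  · have : t ∈ Icc T' τ := ⟨le_of_lt h', ht⟩
    exact le_trans (hmax this) (le_max_left _ _)

/-- If `q` tends to a positive limit at `-∞` and its derivative is `≥ ρ > 0` whenever
`q ≤ 0`, then `q` is positive everywhere. -/
lemma pos_of_tendsto_atBot {q g : ℝ → ℝ} {ρ q₀ : ℝ} (hρ : 0 < ρ)
    (hq : ∀ t, HasDerivAt q (g t) t) (hg : ∀ t, q t ≤ 0 → ρ ≤ g t)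
    (hlim : Tendsto q atBot (𝓝 q₀)) (hq₀ : 0 < q₀) : ∀ t, 0 < q t := by
  have hqc : Continuous q := continuous_iff_continuousAt.mpr fun t => (hq t).continuousAt
  by_contra hcon
  push_neg at hcon
  obtain ⟨t₁, ht₁⟩ := hcon
  -- step 1 : q ≤ 0 on (-∞, t₁]
  have hstep1 : ∀ t, t ≤ t₁ → q t ≤ 0 := by
    intro t ht
    by_contra hpos
    push_neg at hpos
    have htlt : t < t₁ := by
      rcases eq_or_lt_of_le ht with h | h
      · exfalso; rw [h] at hpos; linarith
      · exact h
    set A : Set ℝ := {y | y ∈ Icc t t₁ ∧ q y ≤ 0} with hA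
    have hAne : A.Nonempty := ⟨t₁, ⟨le_of_lt htlt, le_rfl⟩, ht₁⟩
    have hclosed : IsClosed A := by
      have : A = Icc t t₁ ∩ {y | q y ≤ 0} := rfl
      rw [this]
      exact isClosed_Icc.inter (isClosed_le hqc continuous_const)
    have hbdd : BddBelow A := ⟨t, fun y hy => hy.1.1⟩
    set t₃ := sInf A with ht₃
    have hmem : t₃ ∈ A := hclosed.csInf_mem hAne hbdd
    have htt₃ : t < t₃ := by
      rcases eq_or_lt_of_le hmem.1.1 with h | h
      · exfalso; rw [← h] at hmem; have := hmem.2; linarith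
      · exact h
    have hbefore : ∀ y, t ≤ y → y < t₃ → 0 < q y := by
      intro y hy1 hy2
      by_contra hy3
      push_neg at hy3
      have : y ∈ A := ⟨⟨hy1, le_trans (le_of_lt hy2) hmem.1.2⟩, hy3⟩
      exact absurd (csInf_le hbdd this) (not_le.mpr hy2)
    have hq₃ : q t₃ = 0 := by
      refine le_antisymm hmem.2 ?_
      have h1 : Tendsto q (𝓝[<] t₃) (𝓝 (q t₃)) :=
        (hqc.tendsto t₃).mono_left nhdsWithin_le_nhds
      have h2 : ∀ᶠ y in 𝓝[<] t₃, 0 ≤ q y := by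
        filter_upwards [Ioo_mem_nhdsLT_of_mem (⟨htt₃, le_rfl⟩ : t₃ ∈ Ioc t t₃)] with y hy
        exact le_of_lt (hbefore y (le_of_lt hy.1) hy.2)
      exact ge_of_tendsto h1 h2
    have hd : g t₃ ≤ 0 := by
      apply deriv_nonpos_of_gt_left (hq t₃) htt₃
      intro y hy1 hy2
      rw [hq₃]
      exact hbefore y hy1 hy2
    have := hg t₃ (le_of_eq hq₃)
    linarith
  -- step 2 : q grows at rate at least ρ on (-∞, t₁]
  have hstep2 : ∀ t, t ≤ t₁ → q t ≤ q t₁ + ρ * (t - t₁) := by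
    intro t ht
    have hmono : MonotoneOn (fun y => q y - ρ * y) (Iic t₁) := by
      apply monotoneOn_of_deriv_nonneg (convex_Iic t₁)
      · exact ((hqc.sub (continuous_const.mul continuous_id)).continuousOn)
      · intro x _
        exact ((hq x).sub ((hasDerivAt_id x).const_mul ρ)).differentiableAt.differentiableWithinAt
      · intro x hx
        rw [interior_Iic] at hx
        have hder : HasDerivAt (fun y => q y - ρ * y) (g x - ρ * 1) x :=
          (hq x).sub ((hasDerivAt_id x).const_mul ρ)
        rw [hder.deriv]
        have := hg x (hstep1 x (le_of_lt hx))
        linarith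
    have := hmono (mem_Iic.mpr ht) (mem_Iic.mpr le_rfl) ht
    simp only at this
    linarith
  -- contradiction with the limit
  have hev : ∀ᶠ t in atBot, q₀ / 2 < q t := by
    have : Ioi (q₀ / 2) ∈ 𝓝 q₀ := Ioi_mem_nhds (by linarith)
    exact hlim this
  rw [eventually_atBot] at hev
  obtain ⟨T, hT⟩ := hev
  set t := min T (min t₁ (t₁ - (q t₁ + 1) / ρ - 1)) with htdef
  have h1 : q₀ / 2 < q t := hT t (min_le_left _ _)
  have h2 : q t ≤ q t₁ + ρ * (t - t₁) :=
    hstep2 t (le_trans (min_le_right _ _) (min_le_left _ _))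
  have h3 : t ≤ t₁ - (q t₁ + 1) / ρ - 1 := le_trans (min_le_right _ _) (min_le_right _ _)
  have h4 : ρ * (t - t₁) ≤ ρ * (-(q t₁ + 1) / ρ - 1) := by
    apply mul_le_mul_of_nonneg_left _ (le_of_lt hρ)
    have : -(q t₁ + 1) / ρ = -((q t₁ + 1) / ρ) := by ring
    rw [this]
    linarith
  have h5 : ρ * (-(q t₁ + 1) / ρ - 1) = -(q t₁ + 1) - ρ := by
    field_simp
  nlinarith

lemma bound_arith {b β ε c Mq K M c1 c2 c3 c4 Sv dS qv : ℝ}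
    (hb : 0 < b) (hβ : 0 < β) (hc : 0 < c) (hε : 0 < ε)
    (hM : 0 < M) (hc1 : c1 ≤ M) (hc2 : c2 ≤ M) (hc3 : c3 ≤ M) (hc4 : c4 ≤ M)
    (hq : 0 < qv) (hqb : qv ≤ Mq) (hdS : 0 < dS) (hdSb : dS ≤ K)
    (hSv : 0 < Sv) (hSb : Sv < 1) :
    c2 + c1 / c ≤ (1 + 1 / c + b ^ 2 + ε / c + Mq * K / c + ε / c * (1 + β) +
        β * (Mq * K) / c) * M ∧
    b ^ 2 * c3 ≤ (1 + 1 / c + b ^ 2 + ε / c + Mq * K / c + ε / c * (1 + β) +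
        β * (Mq * K) / c) * M ∧
    c2 + (ε / c * Sv) * c4 + (qv * dS / c) * c1 ≤ (1 + 1 / c + b ^ 2 + ε / c + Mq * K / c +
        ε / c * (1 + β) + β * (Mq * K) / c) * M ∧
    (ε / c * (1 + β * Sv)) * c4 + (β * (qv * dS) / c) * c1 ≤ (1 + 1 / c + b ^ 2 + ε / c +
        Mq * K / c + ε / c * (1 + β) + β * (Mq * K) / c) * M := by
  have hM0 : 0 ≤ M := le_of_lt hM
  have hMq0 : 0 ≤ Mq := le_trans (le_of_lt hq) hqb
  have hK0 : 0 < K := lt_of_lt_of_le hdS hdSb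
  have hb2 : (0:ℝ) ≤ b ^ 2 := sq_nonneg b
  have hde : (0:ℝ) ≤ ε / c := le_of_lt (div_pos hε hc)
  have hic : (0:ℝ) ≤ 1 / c := by positivity
  have hMK : (0:ℝ) ≤ Mq * K / c := div_nonneg (mul_nonneg hMq0 (le_of_lt hK0)) (le_of_lt hc)
  have heb : (0:ℝ) ≤ ε / c * (1 + β) := mul_nonneg hde (by linarith)
  have hbMK : (0:ℝ) ≤ β * (Mq * K) / c :=
    div_nonneg (mul_nonneg (le_of_lt hβ) (mul_nonneg hMq0 (le_of_lt hK0))) (le_of_lt hc)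
  have hprod : ∀ a A x : ℝ, 0 ≤ a → a ≤ A → x ≤ M → a * x ≤ A * M := by
    intro a A x ha hA hx
    calc a * x ≤ a * M := mul_le_mul_of_nonneg_left hx ha
    _ ≤ A * M := mul_le_mul_of_nonneg_right hA hM0
  refine ⟨?_, ?_, ?_, ?_⟩
  · have e1 : c1 / c ≤ M / c := by gcongr
    have e2 : (0:ℝ) ≤ (b ^ 2 + ε / c + Mq * K / c + ε / c * (1 + β) + β * (Mq * K) / c) * M :=
      mul_nonneg (by linarith) hM0
    have e3 : (1 + 1 / c + b ^ 2 + ε / c + Mq * K / c + ε / c * (1 + β) + β * (Mq * K) / c) * M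
        = M + M / c + (b ^ 2 + ε / c + Mq * K / c + ε / c * (1 + β) + β * (Mq * K) / c) * M :=
      by ring
    linarith
  · have e1 : b ^ 2 * c3 ≤ b ^ 2 * M := mul_le_mul_of_nonneg_left hc3 hb2
    have e2 : (0:ℝ) ≤ (1 + 1 / c + ε / c + Mq * K / c + ε / c * (1 + β) + β * (Mq * K) / c) * M
      := mul_nonneg (by linarith) hM0
    have e3 : (1 + 1 / c + b ^ 2 + ε / c + Mq * K / c + ε / c * (1 + β) + β * (Mq * K) / c) * M
        = b ^ 2 * M + (1 + 1 / c + ε / c + Mq * K / c + ε / c * (1 + β) + β * (Mq * K) / c) * M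
      := by ring
    linarith
  · have e1 : (ε / c * Sv) * c4 ≤ (ε / c) * M := by
      apply hprod _ _ _ (mul_nonneg hde (le_of_lt hSv)) _ hc4
      calc ε / c * Sv ≤ ε / c * 1 := mul_le_mul_of_nonneg_left (le_of_lt hSb) hde
      _ = ε / c := mul_one _
    have e2 : (qv * dS / c) * c1 ≤ (Mq * K / c) * M := by
      apply hprod _ _ _ (by positivity) _ hc1
      gcongr
    have e3 : (0:ℝ) ≤ (1 / c + b ^ 2 + ε / c * (1 + β) + β * (Mq * K) / c) * M :=
      mul_nonneg (by linarith) hM0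
    have e4 : (1 + 1 / c + b ^ 2 + ε / c + Mq * K / c + ε / c * (1 + β) + β * (Mq * K) / c) * M
        = M + (ε / c) * M + (Mq * K / c) * M +
          (1 / c + b ^ 2 + ε / c * (1 + β) + β * (Mq * K) / c) * M := by ring
    linarith
  · have e1 : (ε / c * (1 + β * Sv)) * c4 ≤ (ε / c * (1 + β)) * M := by
      apply hprod _ _ _ _ _ hc4
      · apply mul_nonneg hde
        have : (0:ℝ) ≤ β * Sv := mul_nonneg (le_of_lt hβ) (le_of_lt hSv)
        linarith
      · apply mul_le_mul_of_nonneg_left _ hde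
        have : β * Sv ≤ β * 1 := mul_le_mul_of_nonneg_left (le_of_lt hSb) (le_of_lt hβ)
        linarith
    have e2 : (β * (qv * dS) / c) * c1 ≤ (β * (Mq * K) / c) * M := by
      apply hprod _ _ _ (by positivity) _ hc1
      gcongr
    have e3 : (0:ℝ) ≤ (1 + 1 / c + b ^ 2 + ε / c + Mq * K / c) * M :=
      mul_nonneg (by linarith) hM0
    have e4 : (1 + 1 / c + b ^ 2 + ε / c + Mq * K / c + ε / c * (1 + β) + β * (Mq * K) / c) * M
        = (ε / c * (1 + β)) * M + (β * (Mq * K) / c) * M +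
          (1 + 1 / c + b ^ 2 + ε / c + Mq * K / c) * M := by ring
    linarith

lemma core (b β ε c u₀ q₀ : ℝ) (S : ℝ → ℝ) (u v w q : ℝ → ℝ)
    (hb : 0 < b) (hβ : 0 < β) (hc : 0 < c) (hε : 0 < ε)
    (hS : ContDiff ℝ 1 S) (hS' : ∀ x, 0 < deriv S x)
    (hSpos : ∀ x, 0 < S x) (hSlt : ∀ x, S x < 1)
    (hq₀pos : 0 < q₀)
    (hp : SolOne b β S ε c u v w q) (τ σ : ℝ) (hσ : σ = 1 ∨ σ = -1)
    (hten : Tendsto (fun t => (u t, v t, w t, q t)) atBot (𝓝 (u₀, u₀, 0, q₀)))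
    (hZ0 : v τ = u τ)
    (h2 : -(σ * w τ) ≤ 0)
    (h3 : σ * (v τ - q τ * S (u τ)) ≤ 0)
    (h4 : σ * (1 - q τ - β * (q τ * S (u τ))) ≤ 0)
    (hstrict : -(σ * w τ) < 0 ∨ σ * (v τ - q τ * S (u τ)) < 0 ∨
      σ * (1 - q τ - β * (q τ * S (u τ))) < 0) :
    False := by
  have hu' : ∀ t, HasDerivAt u ((v t - u t) / c) t := fun t => (hp t).1
  have hv' : ∀ t, HasDerivAt v (w t) t := fun t => (hp t).2.1
  have hw' : ∀ t, HasDerivAt w (b ^ 2 * (v t - q t * S (u t))) t := fun t => (hp t).2.2.1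
  have hq' : ∀ t, HasDerivAt q (ε / c * (1 - q t - β * (q t * S (u t)))) t :=
    fun t => (hp t).2.2.2
  have huc : Continuous u := continuous_iff_continuousAt.mpr fun t => (hu' t).continuousAt
  have hvc : Continuous v := continuous_iff_continuousAt.mpr fun t => (hv' t).continuousAt
  have hwc : Continuous w := continuous_iff_continuousAt.mpr fun t => (hw' t).continuousAt
  have hqc : Continuous q := continuous_iff_continuousAt.mpr fun t => (hq' t).continuousAt
  -- coordinate limits
  have huB : Tendsto u atBot (𝓝 u₀) := by
    have hcf : Continuous fun p : ℝ × ℝ × ℝ × ℝ => p.1 := continuous_fst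
    exact (hcf.tendsto ((u₀, u₀, 0, q₀) : ℝ × ℝ × ℝ × ℝ)).comp hten
  have hvB : Tendsto v atBot (𝓝 u₀) := by
    have hcf : Continuous fun p : ℝ × ℝ × ℝ × ℝ => p.2.1 := continuous_fst.comp continuous_snd
    exact (hcf.tendsto ((u₀, u₀, 0, q₀) : ℝ × ℝ × ℝ × ℝ)).comp hten
  have hqB : Tendsto q atBot (𝓝 q₀) := by
    have hcf : Continuous fun p : ℝ × ℝ × ℝ × ℝ => p.2.2.2 :=
      continuous_snd.comp (continuous_snd.comp continuous_snd)
    exact (hcf.tendsto ((u₀, u₀, 0, q₀) : ℝ × ℝ × ℝ × ℝ)).comp hten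
  have hρ : 0 < ε / c := div_pos hε hc
  -- q is everywhere positive
  have hqpos : ∀ t, 0 < q t := by
    apply pos_of_tendsto_atBot hρ hq' _ hqB hq₀pos
    intro t hqt
    have hs := hSpos (u t)
    have h0 : q t * S (u t) ≤ 0 := mul_nonpos_of_nonpos_of_nonneg hqt (le_of_lt hs)
    have h0' : β * (q t * S (u t)) ≤ 0 := mul_nonpos_of_nonneg_of_nonpos (le_of_lt hβ) h0
    have h1 : (1 : ℝ) ≤ 1 - q t - β * (q t * S (u t)) := by linarith
    nlinarith
  -- bounds on q and u on (-∞, τ]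
  obtain ⟨Mq, hMq⟩ := bounded_of_tendsto_atBot τ hqc hqB
  obtain ⟨Mu, hMu⟩ := bounded_of_tendsto_atBot τ huc huB
  have hMq0 : 0 ≤ Mq := le_trans (abs_nonneg _) (hMq τ le_rfl)
  have hMu0 : 0 ≤ Mu := le_trans (abs_nonneg _) (hMu τ le_rfl)
  have hSderc : Continuous (deriv S) := hS.continuous_deriv le_rfl
  obtain ⟨x₀, hx₀, hmax⟩ := isCompact_Icc.exists_isMaxOn (f := deriv S)
    (nonempty_Icc.mpr (by linarith : -Mu ≤ Mu)) hSderc.continuousOn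
  set K := deriv S x₀ with hKdef
  have hK0 : 0 < K := hS' x₀
  have hK : ∀ t, t ≤ τ → deriv S (u t) ≤ K := by
    intro t ht
    have := abs_le.mp (hMu t ht)
    exact hmax ⟨this.1, this.2⟩
  -- reversed-time derivative helper
  have hrev : ∀ (f d : ℝ → ℝ), (∀ t, HasDerivAt f (d t) t) →
      ∀ s : ℝ, HasDerivAt (fun s => f (τ - s)) (-d (τ - s)) s := by
    intro f d hf s
    have hin : HasDerivAt (fun x : ℝ => τ - x) (-1) s := (hasDerivAt_id s).const_sub τ
    have := (hf (τ - s)).comp s hin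
    simpa [Function.comp_def, mul_comm] using this
  -- the four components in reversed time
  set C1 : ℝ → ℝ := fun s => σ * (v (τ - s) - u (τ - s)) with hC1
  set C2 : ℝ → ℝ := fun s => -(σ * w (τ - s)) with hC2
  set C3 : ℝ → ℝ := fun s => σ * (v (τ - s) - q (τ - s) * S (u (τ - s))) with hC3
  set C4 : ℝ → ℝ := fun s => σ * (1 - q (τ - s) - β * (q (τ - s) * S (u (τ - s)))) with hC4
  set D1 : ℝ → ℝ := fun s => C2 s + C1 s / c with hD1
  set D2 : ℝ → ℝ := fun s => b ^ 2 * C3 s with hD2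
  set D3 : ℝ → ℝ := fun s =>
    C2 s + (ε / c * S (u (τ - s))) * C4 s + (q (τ - s) * deriv S (u (τ - s)) / c) * C1 s with hD3
  set D4 : ℝ → ℝ := fun s =>
    (ε / c * (1 + β * S (u (τ - s)))) * C4 s +
      (β * (q (τ - s) * deriv S (u (τ - s))) / c) * C1 s with hD4
  -- auxiliary t-derivatives
  have hZd : ∀ t, HasDerivAt (fun t => v t - u t) (w t - (v t - u t) / c) t :=
    fun t => (hv' t).sub (hu' t)
  have hSu : ∀ t, HasDerivAt (fun t => S (u t)) (deriv S (u t) * ((v t - u t) / c)) t :=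
    fun t => (((hS.differentiable one_ne_zero) (u t)).hasDerivAt).comp t (hu' t)
  have hqS : ∀ t, HasDerivAt (fun t => q t * S (u t))
      ((ε / c * (1 - q t - β * (q t * S (u t)))) * S (u t) +
        q t * (deriv S (u t) * ((v t - u t) / c))) t :=
    fun t => (hq' t).mul (hSu t)
  have hGd : ∀ t, HasDerivAt (fun t => v t - q t * S (u t))
      (w t - ((ε / c * (1 - q t - β * (q t * S (u t)))) * S (u t) +
        q t * (deriv S (u t) * ((v t - u t) / c)))) t :=
    fun t => (hv' t).sub (hqS t)
  have hNd : ∀ t, HasDerivAt (fun t => 1 - q t - β * (q t * S (u t)))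
      ((0 - ε / c * (1 - q t - β * (q t * S (u t)))) -
        β * ((ε / c * (1 - q t - β * (q t * S (u t)))) * S (u t) +
          q t * (deriv S (u t) * ((v t - u t) / c)))) t := by
    intro t
    have h1 : HasDerivAt (fun t => (1 : ℝ) - q t)
        (0 - ε / c * (1 - q t - β * (q t * S (u t)))) t :=
      (hasDerivAt_const t (1 : ℝ)).sub (hq' t)
    exact h1.sub ((hqS t).const_mul β)
  -- derivatives of the reversed components
  have hC1d : ∀ s, HasDerivAt C1 (D1 s) s := by
    intro s
    have := (hrev _ _ hZd s).const_mul σ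
    refine this.congr_deriv ?_
    simp only [hD1, hC1, hC2]
    ring
  have hC2d : ∀ s, HasDerivAt C2 (D2 s) s := by
    intro s
    have := ((hrev _ _ hw' s).const_mul σ).neg
    refine this.congr_deriv ?_
    simp only [hD2, hC2, hC3]
    ring
  have hC3d : ∀ s, HasDerivAt C3 (D3 s) s := by
    intro s
    have := (hrev _ _ hGd s).const_mul σ
    refine this.congr_deriv ?_
    simp only [hD3, hC1, hC2, hC3, hC4]
    ring
  have hC4d : ∀ s, HasDerivAt C4 (D4 s) s := by
    intro s
    have := (hrev _ _ hNd s).const_mul σ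
    refine this.congr_deriv ?_
    simp only [hD4, hC1, hC4]
    ring
  -- the constant L
  set L : ℝ := 1 + 1 / c + b ^ 2 + ε / c + Mq * K / c + ε / c * (1 + β) + β * (Mq * K) / c
    with hL
  have hbound : ∀ s, 0 ≤ s → ∀ M, 0 < M → C1 s ≤ M → C2 s ≤ M → C3 s ≤ M → C4 s ≤ M →
      D1 s ≤ L * M ∧ D2 s ≤ L * M ∧ D3 s ≤ L * M ∧ D4 s ≤ L * M := by
    intro s hs M hM hc1 hc2 hc3 hc4
    have hts : τ - s ≤ τ := by linarith
    have hqb : q (τ - s) ≤ Mq := le_trans (le_abs_self _) (hMq _ hts)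
    have hqp : 0 < q (τ - s) := hqpos _
    have hKb : deriv S (u (τ - s)) ≤ K := hK _ hts
    have hKp : 0 < deriv S (u (τ - s)) := hS' _
    have hSb : S (u (τ - s)) < 1 := hSlt _
    have hSp : 0 < S (u (τ - s)) := hSpos _
    exact bound_arith hb hβ hc hε hM hc1 hc2 hc3 hc4 hqp hqb hKp hKb hSp hSb
  -- initial values
  have hC10v : C1 0 = 0 := by
    simp only [hC1, sub_zero, hZ0]
    ring
  have hC20v : C2 0 = -(σ * w τ) := by simp only [hC2, sub_zero]
  have hC30v : C3 0 = σ * (v τ - q τ * S (u τ)) := by simp only [hC3, sub_zero]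
  have hC40v : C4 0 = σ * (1 - q τ - β * (q τ * S (u τ))) := by simp only [hC4, sub_zero]
  have hbar := barrier_le_zero hC1d hC2d hC3d hC4d hbound
    (le_of_eq hC10v) (by rw [hC20v]; exact h2) (by rw [hC30v]; exact h3)
    (by rw [hC40v]; exact h4)
  -- C2 is antitone on [0, ∞)
  have hanti : AntitoneOn C2 (Ici 0) := by
    apply antitoneOn_of_deriv_nonpos (convex_Ici 0)
    · exact fun x _ => (hC2d x).continuousAt.continuousWithinAt
    · exact fun x _ => (hC2d x).differentiableAt.differentiableWithinAt
    · intro x hx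
      rw [interior_Ici] at hx
      rw [(hC2d x).deriv]
      have h3x := (hbar x (le_of_lt hx)).2.2.1
      simp only [hD2]
      exact mul_nonpos_of_nonneg_of_nonpos (sq_nonneg b) h3x
  -- find a point where C2 is strictly negative
  have hstrict2 : ∃ s₁, 0 ≤ s₁ ∧ C2 s₁ < 0 := by
    have fromC3 : ∀ s₀, 0 ≤ s₀ → C3 s₀ < 0 → ∃ s₁, 0 ≤ s₁ ∧ C2 s₁ < 0 := by
      intro s₀ hs₀ hneg
      have hd : D2 s₀ < 0 := by
        simp only [hD2]
        exact mul_neg_of_pos_of_neg (by positivity) hneg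
      rcases lt_or_eq_of_le ((hbar s₀ hs₀).2.1) with h | h
      · exact ⟨s₀, hs₀, h⟩
      · obtain ⟨y, hy1, hy2⟩ := exists_lt_of_deriv_neg' (hC2d s₀) hd
        rw [h] at hy2
        exact ⟨y, le_trans hs₀ (le_of_lt hy1), hy2⟩
    rcases hstrict with h | h | h
    · exact ⟨0, le_rfl, by rw [hC20v]; exact h⟩
    · exact fromC3 0 le_rfl (by rw [hC30v]; exact h)
    · rcases lt_or_eq_of_le ((hbar 0 le_rfl).2.2.1) with hc3 | hc3
      · exact fromC3 0 le_rfl hc3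
      · have hC2le0 : C2 0 ≤ 0 := by rw [hC20v]; exact h2
        have hd3 : D3 0 < 0 := by
          have e1 : (ε / c * S (u (τ - 0))) * C4 0 < 0 := by
            apply mul_neg_of_pos_of_neg (mul_pos hρ (hSpos _))
            rw [hC40v]
            exact h
          have e2 : (q (τ - 0) * deriv S (u (τ - 0)) / c) * C1 0 = 0 := by
            rw [hC10v, mul_zero]
          simp only [hD3]
          rw [hC10v, mul_zero, add_zero]
          exact add_neg_of_nonpos_of_neg hC2le0 e1
        obtain ⟨s₀, hs₀1, hs₀2⟩ := exists_lt_of_deriv_neg' (hC3d 0) hd3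
        rw [hc3] at hs₀2
        exact fromC3 s₀ (le_of_lt hs₀1) hs₀2
  obtain ⟨s₁, hs₁, hC2neg⟩ := hstrict2
  -- escape to -∞ for σ·v, contradicting the limit
  have hC2le : ∀ s, s₁ ≤ s → C2 s ≤ -(-C2 s₁) := by
    intro s hsge
    have := hanti (mem_Ici.mpr hs₁) (mem_Ici.mpr (le_trans hs₁ hsge)) hsge
    linarith
  have hf : ∀ s, HasDerivAt (fun s => σ * v (τ - s)) (C2 s) s := by
    intro s
    have := (hrev v w hv' s).const_mul σ
    refine this.congr_deriv ?_
    simp only [hC2]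
    ring
  have htend : Tendsto (fun s => σ * v (τ - s)) atTop (𝓝 (σ * u₀)) := by
    have h2' : Tendsto (fun s : ℝ => -s) atTop atBot := tendsto_neg_atTop_atBot
    have h3' := tendsto_atBot_add_const_right atTop τ h2'
    have h1 : Tendsto (fun s : ℝ => τ - s) atTop atBot := by
      have heqf : (fun s : ℝ => -s + τ) = fun s : ℝ => τ - s := by funext s; ring
      rw [heqf] at h3'
      exact h3'
    exact (hvB.comp h1).const_mul σ
  exact no_limit_of_deriv_le_neg hf (by linarith) hC2le htend

/-- Lemma 5a of the paper. -/
theorem not_on_unstable_manifold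
    (b β u₀ q₀ u_m uP u_knee : ℝ) (S : ℝ → ℝ)
    (hb : 0 < b) (hβ : 0 < β)
    (hS : ContDiff ℝ 1 S)
    (hS' : ∀ x : ℝ, 0 < deriv S x)
    (hSpos : ∀ x : ℝ, 0 < S x) (hSlt : ∀ x : ℝ, S x < 1)
    -- (C1): unique equilibrium p₀ = (u₀,u₀,0,q₀)
    (hq₀ : q₀ = 1 / (1 + β * S u₀)) (hu₀ : u₀ = q₀ * S u₀)
    (hC1 : ∀ u q : ℝ, u = q * S u → q = 1 / (1 + β * S u) → u = u₀ ∧ q = q₀)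
    -- (C2): h(u) = u/S(u) has one local max then one local min (at u_knee), no other critical points
    (hC2 : ∃ u_max : ℝ, u_max < u_knee ∧ IsLocalMax (fun x : ℝ => x / S x) u_max ∧
      IsLocalMin (fun x : ℝ => x / S x) u_knee ∧
      ∀ x : ℝ, deriv (fun y : ℝ => y / S y) x = 0 → x = u_max ∨ x = u_knee)
    -- (C3): h(u) = q₀ has exactly three solutions u₀ < u_m < uP
    (hlt₁ : u₀ < u_m) (hlt₂ : u_m < uP)
    (hC3 : ∀ x : ℝ, x / S x = q₀ ↔ x = u₀ ∨ x = u_m ∨ x = uP)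
    -- (C4)
    (hC4 : 0 < ∫ x in u₀..uP, (q₀ * S x - x))
    (ε c : ℝ) (hε : 0 < ε) (hc : 0 < c)
    (u v w q : ℝ → ℝ) (hp : SolOne b β S ε c u v w q)
    (hnc : Nonconst4 u v w q) (τ : ℝ)
    (hcond :
      (deriv u τ = 0 ∧ deriv v τ = 0 ∧ deriv w τ ≤ 0 ∧ deriv q τ ≤ 0 ∧ u₀ ≤ u τ) ∨
      (deriv u τ = 0 ∧ deriv v τ < 0 ∧ deriv w τ = 0 ∧ deriv q τ = 0 ∧ u₀ ≤ u τ) ∨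
      (deriv u τ = 0 ∧ deriv v τ ≤ 0 ∧ 0 < deriv q τ ∧ u τ = u₀) ∨
      (deriv u τ = 0 ∧ deriv v τ ≤ 0 ∧ 0 < deriv w τ ∧ 0 ≤ deriv q τ ∧ u₀ ≤ u τ)) :
    ¬ Tendsto (fun t => (u t, v t, w t, q t)) atBot (𝓝 (u₀, u₀, 0, q₀)) := by
  intro hten
  have hu' : ∀ t, HasDerivAt u ((v t - u t) / c) t := fun t => (hp t).1
  have hv' : ∀ t, HasDerivAt v (w t) t := fun t => (hp t).2.1
  have hw' : ∀ t, HasDerivAt w (b ^ 2 * (v t - q t * S (u t))) t := fun t => (hp t).2.2.1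
  have hq' : ∀ t, HasDerivAt q (ε / c * (1 - q t - β * (q t * S (u t)))) t :=
    fun t => (hp t).2.2.2
  have hderivu : deriv u τ = (v τ - u τ) / c := (hu' τ).deriv
  have hderivv : deriv v τ = w τ := (hv' τ).deriv
  have hderivw : deriv w τ = b ^ 2 * (v τ - q τ * S (u τ)) := (hw' τ).deriv
  have hderivq : deriv q τ = ε / c * (1 - q τ - β * (q τ * S (u τ))) := (hq' τ).deriv
  have hρ : 0 < ε / c := div_pos hε hc
  have hb2 : (0:ℝ) < b ^ 2 := by positivity
  have h1p : ∀ x : ℝ, (0:ℝ) < 1 + β * S x := by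
    intro x
    nlinarith [hSpos x]
  have hq₀pos : 0 < q₀ := by
    rw [hq₀]
    exact div_pos one_pos (h1p u₀)
  have hZof : deriv u τ = 0 → v τ = u τ := by
    intro h
    rw [hderivu, div_eq_zero_iff] at h
    rcases h with h | h
    · linarith
    · exact absurd h (ne_of_gt hc)
  rcases hcond with ⟨h1, h2, h3, h4, h5⟩ | ⟨h1, h2, h3, h4, h5⟩ |
    ⟨h1, h2, h3, h4⟩ | ⟨h1, h2, h3, h4, h5⟩
  · -- case (i) : σ = 1
    have hZτ : v τ = u τ := hZof h1
    have hwτ : w τ = 0 := by rw [hderivv] at h2; exact h2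
    have hGτ : v τ - q τ * S (u τ) ≤ 0 := by
      rw [hderivw] at h3
      by_contra hcon
      push_neg at hcon
      have := mul_pos hb2 hcon
      linarith
    have hNτ : 1 - q τ - β * (q τ * S (u τ)) ≤ 0 := by
      rw [hderivq] at h4
      by_contra hcon
      push_neg at hcon
      have := mul_pos hρ hcon
      linarith
    by_cases hboth : v τ - q τ * S (u τ) = 0 ∧ 1 - q τ - β * (q τ * S (u τ)) = 0
    · -- the point is the equilibrium : contradiction with nonconstancy
      obtain ⟨hGeq, hNeq⟩ := hboth
      have hueq : u τ = q τ * S (u τ) := by linarith [hGeq, hZτ]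
      have hqeq : q τ = 1 / (1 + β * S (u τ)) := by
        rw [eq_div_iff (ne_of_gt (h1p (u τ)))]
        nlinarith
      obtain ⟨huu, hqq⟩ := hC1 (u τ) (q τ) hueq hqeq
      set F : (ℝ × ℝ × ℝ × ℝ) → (ℝ × ℝ × ℝ × ℝ) := fun x =>
        ((x.2.1 - x.1) / c, x.2.2.1, b ^ 2 * (x.2.1 - x.2.2.2 * S x.1),
          ε / c * (1 - x.2.2.2 - β * (x.2.2.2 * S x.1))) with hFdef
      have hx1 : ContDiff ℝ 1 (fun x : ℝ × ℝ × ℝ × ℝ => x.1) := contDiff_fst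
      have hx2 : ContDiff ℝ 1 (fun x : ℝ × ℝ × ℝ × ℝ => x.2.1) :=
        contDiff_fst.comp contDiff_snd
      have hx3 : ContDiff ℝ 1 (fun x : ℝ × ℝ × ℝ × ℝ => x.2.2.1) :=
        (contDiff_fst.comp contDiff_snd).comp contDiff_snd
      have hx4 : ContDiff ℝ 1 (fun x : ℝ × ℝ × ℝ × ℝ => x.2.2.2) :=
        (contDiff_snd.comp contDiff_snd).comp contDiff_snd
      have hSx1 : ContDiff ℝ 1 (fun x : ℝ × ℝ × ℝ × ℝ => S x.1) := hS.comp hx1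
      have hF : ContDiff ℝ 1 F := by
        refine ContDiff.prodMk ?_ (ContDiff.prodMk hx3 (ContDiff.prodMk ?_ ?_))
        · exact (hx2.sub hx1).div_const c
        · exact contDiff_const.mul (hx2.sub (hx4.mul hSx1))
        · exact contDiff_const.mul ((contDiff_const.sub hx4).sub
            (contDiff_const.mul (hx4.mul hSx1)))
      have hp4 : ∀ t, HasDerivAt (fun t => (u t, v t, w t, q t))
          (F (u t, v t, w t, q t)) t :=
        fun t => ((hu' t).prodMk ((hv' t).prodMk ((hw' t).prodMk (hq' t))))
      have hN₀ : 1 - q₀ - β * (q₀ * S u₀) = 0 := by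
        have := h1p u₀
        rw [hq₀]
        field_simp
        ring
      have hFp₀ : F ((u₀, u₀, 0, q₀) : ℝ × ℝ × ℝ × ℝ) = 0 := by
        have e1 : u₀ - q₀ * S u₀ = 0 := by linarith [hu₀]
        have e2 : F ((u₀, u₀, 0, q₀) : ℝ × ℝ × ℝ × ℝ) = ((u₀ - u₀) / c, 0,
            b ^ 2 * (u₀ - q₀ * S u₀), ε / c * (1 - q₀ - β * (q₀ * S u₀))) := rfl
        rw [e2, e1, hN₀]
        simp [Prod.ext_iff]
      have hpτ : (fun t => (u t, v t, w t, q t)) τ = ((u₀, u₀, 0, q₀) : ℝ × ℝ × ℝ × ℝ) := by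
        simp only
        rw [hZτ, huu, hwτ, hqq]
      have hall := ODE_const_of_eq hF hp4 hFp₀ hpτ
      obtain ⟨t, s, hne⟩ := hnc
      exact hne (by rw [hall t, hall s])
    · -- strict case : apply the core lemma with σ = 1
      have hstrict : -((1:ℝ) * w τ) < 0 ∨ (1:ℝ) * (v τ - q τ * S (u τ)) < 0 ∨
          (1:ℝ) * (1 - q τ - β * (q τ * S (u τ))) < 0 := by
        rcases not_and_or.mp hboth with h | h
        · have := lt_of_le_of_ne hGτ h
          exact Or.inr (Or.inl (by linarith))
        · have := lt_of_le_of_ne hNτ h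
          exact Or.inr (Or.inr (by linarith))
      have a2 : -((1:ℝ) * w τ) ≤ 0 := by linarith [hwτ]
      have a3 : (1:ℝ) * (v τ - q τ * S (u τ)) ≤ 0 := by linarith [hGτ]
      have a4 : (1:ℝ) * (1 - q τ - β * (q τ * S (u τ))) ≤ 0 := by linarith [hNτ]
      exact core b β ε c u₀ q₀ S u v w q hb hβ hc hε hS hS' hSpos hSlt hq₀pos hp τ 1
        (Or.inl rfl) hten hZτ a2 a3 a4 hstrict
  · -- case (ii) : σ = -1
    have hZτ : v τ = u τ := hZof h1
    have hwτ : w τ < 0 := by rw [hderivv] at h2; exact h2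
    have hGτ : v τ - q τ * S (u τ) = 0 := by
      rw [hderivw, mul_eq_zero] at h3
      rcases h3 with h | h
      · exact absurd h (ne_of_gt hb2)
      · exact h
    have hNτ : 1 - q τ - β * (q τ * S (u τ)) = 0 := by
      rw [hderivq, mul_eq_zero] at h4
      rcases h4 with h | h
      · exact absurd h (ne_of_gt hρ)
      · exact h
    have a2 : -((-1:ℝ) * w τ) ≤ 0 := by linarith
    have a3 : (-1:ℝ) * (v τ - q τ * S (u τ)) ≤ 0 := by linarith [hGτ]
    have a4 : (-1:ℝ) * (1 - q τ - β * (q τ * S (u τ))) ≤ 0 := by linarith [hNτ]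
    have a5 : -((-1:ℝ) * w τ) < 0 := by linarith
    exact core b β ε c u₀ q₀ S u v w q hb hβ hc hε hS hS' hSpos hSlt hq₀pos hp τ (-1)
      (Or.inr rfl) hten hZτ a2 a3 a4 (Or.inl a5)
  · -- case (iii) : σ = -1, u τ = u₀
    have hZτ : v τ = u τ := hZof h1
    have hwτ : w τ ≤ 0 := by rw [hderivv] at h2; exact h2
    have hNτ : 0 < 1 - q τ - β * (q τ * S (u τ)) := by
      rw [hderivq] at h3
      by_contra hcon
      push_neg at hcon
      have := mul_nonpos_of_nonneg_of_nonpos (le_of_lt hρ) hcon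
      linarith
    have hGτ : 0 < v τ - q τ * S (u τ) := by
      rw [hZτ, h4]
      have hq₀' : q τ < q₀ := by
        rw [hq₀, lt_div_iff₀ (h1p u₀)]
        rw [h4] at hNτ
        nlinarith [hNτ]
      have : q τ * S u₀ < q₀ * S u₀ := mul_lt_mul_of_pos_right hq₀' (hSpos u₀)
      linarith [hu₀]
    have a2 : -((-1:ℝ) * w τ) ≤ 0 := by linarith [hwτ]
    have a3 : (-1:ℝ) * (v τ - q τ * S (u τ)) ≤ 0 := by linarith [hGτ]
    have a4 : (-1:ℝ) * (1 - q τ - β * (q τ * S (u τ))) ≤ 0 := by linarith [hNτ]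
    have a5 : (-1:ℝ) * (v τ - q τ * S (u τ)) < 0 := by linarith [hGτ]
    exact core b β ε c u₀ q₀ S u v w q hb hβ hc hε hS hS' hSpos hSlt hq₀pos hp τ (-1)
      (Or.inr rfl) hten hZτ a2 a3 a4 (Or.inr (Or.inl a5))
  · -- case (iv) : σ = -1
    have hZτ : v τ = u τ := hZof h1
    have hwτ : w τ ≤ 0 := by rw [hderivv] at h2; exact h2
    have hGτ : 0 < v τ - q τ * S (u τ) := by
      rw [hderivw] at h3
      by_contra hcon
      push_neg at hcon
      have := mul_nonpos_of_nonneg_of_nonpos (le_of_lt hb2) hcon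
      linarith
    have hNτ : 0 ≤ 1 - q τ - β * (q τ * S (u τ)) := by
      rw [hderivq] at h4
      by_contra hcon
      push_neg at hcon
      have := mul_neg_of_pos_of_neg hρ hcon
      linarith
    have a2 : -((-1:ℝ) * w τ) ≤ 0 := by linarith [hwτ]
    have a3 : (-1:ℝ) * (v τ - q τ * S (u τ)) ≤ 0 := by linarith [hGτ]
    have a4 : (-1:ℝ) * (1 - q τ - β * (q τ * S (u τ))) ≤ 0 := by linarith [hNτ]
    have a5 : (-1:ℝ) * (v τ - q τ * S (u τ)) < 0 := by linarith [hGτ]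
    exact core b β ε c u₀ q₀ S u v w q hb hβ hc hε hS hS' hSpos hSlt hq₀pos hp τ (-1)
      (Or.inr rfl) hten hZτ a2 a3 a4 (Or.inr (Or.inl a5))
end
end

section
/- Let c > 0 and w̄ > 0, and let u, v, w : ℝ → ℝ be differentiable functions satisfying u' = (v−u)/c and v' = w, with lim_{t→−∞} (v(t) − u(t)) = 0. If 0 < w ≤ w̄ on an interval (−∞, τ], then 0 < v − u < c·w̄ on (−∞, τ]. If instead |w| ≤ w̄ on an interval (−∞, σ], then |v − u| < c·w̄ on (−∞, σ]. -/
open Filter Topology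

private lemma monoOn_aux {τ : ℝ} {f f' : ℝ → ℝ}
    (hf : ∀ t, HasDerivAt f (f' t) t) (h0 : ∀ t ≤ τ, 0 ≤ f' t) :
    MonotoneOn f (Set.Iic τ) := by
  apply monotoneOn_of_deriv_nonneg (convex_Iic τ)
    (fun t _ => (hf t).continuousAt.continuousWithinAt)
    (fun t _ => (hf t).differentiableAt.differentiableWithinAt)
  intro t ht
  rw [interior_Iic, Set.mem_Iio] at ht
  rw [(hf t).deriv]
  exact h0 t ht.le

private lemma pos_at {τ t : ℝ} (ht : t ≤ τ) {f : ℝ → ℝ}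
    (hm : MonotoneOn f (Set.Iic τ)) (hev : ∀ᶠ s in atBot, 0 < f s) : 0 < f t := by
  obtain ⟨a, ha⟩ := eventually_atBot.1 hev
  calc (0:ℝ) < f (min a t) := ha _ (min_le_left _ _)
    _ ≤ f t := hm (le_trans (min_le_right a t) ht) ht (min_le_right a t)

/-- Lemma 15 of the paper: comparison estimate for `v − u`. -/
theorem v_sub_u_estimate (c wbar : ℝ) (hc : 0 < c) (hwbar : 0 < wbar)
    (u v w : ℝ → ℝ)
    (hu : ∀ t : ℝ, HasDerivAt u ((v t - u t) / c) t)
    (hv : ∀ t : ℝ, HasDerivAt v (w t) t)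
    (hlim : Tendsto (fun t => v t - u t) atBot (𝓝 0)) :
    (∀ τ : ℝ, (∀ t : ℝ, t ≤ τ → 0 < w t ∧ w t ≤ wbar) →
      ∀ t : ℝ, t ≤ τ → 0 < v t - u t ∧ v t - u t < c * wbar) ∧
    (∀ σ : ℝ, (∀ t : ℝ, t ≤ σ → |w t| ≤ wbar) →
      ∀ t : ℝ, t ≤ σ → |v t - u t| < c * wbar) := by
  set g : ℝ → ℝ := fun t => v t - u t with hgdef
  have hg : ∀ t, HasDerivAt g (w t - g t / c) t := fun t => (hv t).sub (hu t)
  set E : ℝ → ℝ := fun t => Real.exp (t / c) with hEdef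
  have hE : ∀ t, HasDerivAt E (E t / c) t := by
    intro t
    have := (Real.hasDerivAt_exp (t / c)).comp t
      ((hasDerivAt_id t).div_const c)
    simpa [E, div_eq_mul_inv, mul_comm, Function.comp_def] using this
  have hEpos : ∀ t, 0 < E t := fun t => Real.exp_pos _
  have hElim : Tendsto E atBot (𝓝 0) := by
    apply Real.tendsto_exp_atBot.comp
    exact Tendsto.atBot_div_const hc tendsto_id
  -- h = E * g
  have hh : ∀ t, HasDerivAt (fun t => E t * g t) (E t * w t) t := by
    intro t
    have : HasDerivAt (fun t => E t * g t) _ t := ((hE t).mul (hg t))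
    convert this using 1
    field_simp
    ring
  have hhlim : Tendsto (fun t => E t * g t) atBot (𝓝 0) := by
    simpa using hElim.mul hlim
  -- φ = E * (c*wbar - g)
  have hφ : ∀ t, HasDerivAt (fun t => E t * (c * wbar - g t)) (E t * (wbar - w t)) t := by
    intro t
    have : HasDerivAt (fun t => E t * (c * wbar - g t)) _ t := (hE t).mul ((hasDerivAt_const t (c * wbar)).sub (hg t))
    convert this using 1
    field_simp
    ring
  have hφev : ∀ᶠ s in atBot, 0 < E s * (c * wbar - g s) := by
    have : ∀ᶠ s in atBot, g s < c * wbar :=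
      hlim.eventually (Filter.Tendsto.eventually_lt_const (by positivity) tendsto_id)
    · filter_upwards [this] with s hs
      exact mul_pos (hEpos s) (by linarith)
  -- ψ = E * (g + c*wbar)
  have hψ : ∀ t, HasDerivAt (fun t => E t * (g t + c * wbar)) (E t * (w t + wbar)) t := by
    intro t
    have : HasDerivAt (fun t => E t * (g t + c * wbar)) _ t := (hE t).mul ((hg t).add (hasDerivAt_const t (c * wbar)))
    convert this using 1
    field_simp
    ring
  have hψev : ∀ᶠ s in atBot, 0 < E s * (g s + c * wbar) := by
    have : ∀ᶠ s in atBot, -(c * wbar) < g s :=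
      hlim.eventually (Filter.Tendsto.eventually_const_lt (by nlinarith [mul_pos hc hwbar]) tendsto_id)
    · filter_upwards [this] with s hs
      exact mul_pos (hEpos s) (by linarith)
  constructor
  · intro τ hw t ht
    -- upper bound via φ
    have hφmono : MonotoneOn (fun t => E t * (c * wbar - g t)) (Set.Iic τ) :=
      monoOn_aux hφ (fun s hs => by
        have := (hw s hs).2
        have := hEpos s
        nlinarith)
    have hupper : 0 < E t * (c * wbar - g t) := pos_at ht hφmono hφev
    -- lower bound via strict monotonicity of h
    have hhmono : StrictMonoOn (fun t => E t * g t) (Set.Iic τ) := by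
      apply strictMonoOn_of_deriv_pos (convex_Iic τ)
        (fun s _ => (hh s).continuousAt.continuousWithinAt)
      intro s hs
      rw [interior_Iic, Set.mem_Iio] at hs
      rw [(hh s).deriv]
      exact mul_pos (hEpos s) (hw s hs.le).1
    have hge : ∀ s ≤ τ, 0 ≤ E s * g s := by
      intro s hs
      refine le_of_tendsto hhlim ?_
      rw [eventually_atBot]
      exact ⟨s, fun b hb => (hhmono.monotoneOn) (le_trans hb hs) hs hb⟩
    have hlt : E (t - 1) * g (t - 1) < E t * g t :=
      hhmono (Set.mem_Iic.mpr (by linarith)) (Set.mem_Iic.mpr ht) (by linarith)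
    have h1 : 0 < E t * g t := lt_of_le_of_lt (hge (t - 1) (by linarith)) hlt
    have hEt := hEpos t
    show 0 < g t ∧ g t < c * wbar
    constructor
    · nlinarith [h1, hEt]
    · nlinarith [hupper, hEt]
  · intro σ hw t ht
    have hφmono : MonotoneOn (fun t => E t * (c * wbar - g t)) (Set.Iic σ) :=
      monoOn_aux hφ (fun s hs => by
        have := abs_le.1 (hw s hs)
        have := hEpos s
        nlinarith)
    have hψmono : MonotoneOn (fun t => E t * (g t + c * wbar)) (Set.Iic σ) :=
      monoOn_aux hψ (fun s hs => by
        have := abs_le.1 (hw s hs)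
        have := hEpos s
        nlinarith)
    have hupper : 0 < E t * (c * wbar - g t) := pos_at ht hφmono hφev
    have hlower : 0 < E t * (g t + c * wbar) := pos_at ht hψmono hψev
    have hEt := hEpos t
    show |g t| < c * wbar
    rw [abs_lt]
    constructor
    · nlinarith [hlower, hEt]
    · nlinarith [hupper, hEt]
end

section
/- Let b > 0, c > 0, and a ∈ (0,1). The cubic polynomial f(X) = X³ + (1/c)·X² − b²·X − (b²/c)·(1−a) has exactly three real roots, all simple: exactly one positive root, and two distinct negative roots, one lying in (−∞, −1/c) and one in (−1/c, 0). -/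
set_option maxHeartbeats 1000000 in
/-- the characteristic cubic of the fast system at the leftmost
equilibrium has three simple real roots: one positive and two negative ones,
one in `(−∞, −1/c)` and one in `(−1/c, 0)`. -/
theorem cubic_roots (b c a : ℝ) (f : ℝ → ℝ)
    (hb : 0 < b) (hc : 0 < c) (ha : 0 < a) (ha1 : a < 1)
    (hf : ∀ X : ℝ, f X = X ^ 3 + 1 / c * X ^ 2 - b ^ 2 * X - b ^ 2 / c * (1 - a)) :
    ∃ x₁ x₂ x₃ : ℝ,
      x₁ < -(1 / c) ∧ -(1 / c) < x₂ ∧ x₂ < 0 ∧ 0 < x₃ ∧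
      f x₁ = 0 ∧ f x₂ = 0 ∧ f x₃ = 0 ∧
      deriv f x₁ ≠ 0 ∧ deriv f x₂ ≠ 0 ∧ deriv f x₃ ≠ 0 ∧
      (∀ x : ℝ, f x = 0 → x = x₁ ∨ x = x₂ ∨ x = x₃) := by
  have hfe : f = fun X : ℝ => X ^ 3 + 1 / c * X ^ 2 - b ^ 2 * X - b ^ 2 / c * (1 - a) :=
    funext hf
  subst hfe
  set f : ℝ → ℝ := fun X : ℝ => X ^ 3 + 1 / c * X ^ 2 - b ^ 2 * X - b ^ 2 / c * (1 - a) with hfdef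
  have hcont : Continuous f := by fun_prop
  have hc' : (0:ℝ) < 1 / c := by positivity
  have h1a : (0:ℝ) < 1 - a := by linarith
  -- values
  have hm : f (-(1/c)) = a * b ^ 2 / c := by
    simp only [hfdef]; field_simp; ring
  have hmpos : 0 < f (-(1/c)) := by rw [hm]; positivity
  have hb2c : 0 < b ^ 2 / c * (1 - a) := by
    exact mul_pos (div_pos (pow_pos hb 2) hc) h1a
  have h0 : f 0 < 0 := by
    simp only [hfdef]; nlinarith [hb2c]
  have hT : 0 < f (b + 1) := by
    simp only [hfdef]
    have h1 : b ^ 2 / c * (1 - a) < (b+1)^2 * (1/c) := by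
      rw [div_mul_eq_mul_div, div_lt_iff₀ hc, mul_assoc, one_div, inv_mul_cancel₀ hc.ne', mul_one]
      nlinarith
    nlinarith
  have hM : (0:ℝ) < b + 1 + 1/c := by positivity
  have hS : f (-(b + 1 + 1/c)) < 0 := by
    have key : c * f (-(b+1+1/c)) =
        -(c*(b+1))*(b+1+1/c)^2 + c*b^2*(b+1+1/c) - b^2*(1-a) := by
      simp only [hfdef]; field_simp; ring
    have h2 : 0 ≤ c*(b+1+1/c)*((b+1)*(b+1+1/c) - b^2) := by
      apply mul_nonneg (mul_nonneg hc.le hM.le)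
      nlinarith
    have h3 : 0 < b^2*(1-a) := mul_pos (pow_pos hb 2) h1a
    nlinarith [key, h2, h3]
  -- roots via IVT
  obtain ⟨x₁, hx₁mem, hfx₁⟩ := intermediate_value_Ioo (by nlinarith : -(b+1+1/c) ≤ -(1/c))
    hcont.continuousOn (show (0:ℝ) ∈ Set.Ioo (f (-(b+1+1/c))) (f (-(1/c))) from ⟨hS, hmpos⟩)
  obtain ⟨x₂, hx₂mem, hfx₂⟩ := intermediate_value_Ioo' (by nlinarith : -(1/c) ≤ (0:ℝ))
    hcont.continuousOn (show (0:ℝ) ∈ Set.Ioo (f 0) (f (-(1/c))) from ⟨h0, hmpos⟩)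
  obtain ⟨x₃, hx₃mem, hfx₃⟩ := intermediate_value_Ioo (by nlinarith : (0:ℝ) ≤ b + 1)
    hcont.continuousOn (show (0:ℝ) ∈ Set.Ioo (f 0) (f (b+1)) from ⟨h0, hT⟩)
  obtain ⟨_, hx₁lt⟩ := hx₁mem
  obtain ⟨hx₂gt, hx₂lt⟩ := hx₂mem
  obtain ⟨hx₃gt, _⟩ := hx₃mem
  have h12 : x₁ < x₂ := hx₁lt.trans hx₂gt
  have h23 : x₂ < x₃ := hx₂lt.trans hx₃gt
  have h13 : x₁ < x₃ := h12.trans h23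
  have h12' : x₁ - x₂ ≠ 0 := sub_ne_zero.mpr h12.ne
  have h23' : x₂ - x₃ ≠ 0 := sub_ne_zero.mpr h23.ne
  have h13' : x₁ - x₃ ≠ 0 := sub_ne_zero.mpr h13.ne
  -- expand root equations
  have e₁ : x₁ ^ 3 + 1 / c * x₁ ^ 2 - b ^ 2 * x₁ - b ^ 2 / c * (1 - a) = 0 := hfx₁
  have e₂ : x₂ ^ 3 + 1 / c * x₂ ^ 2 - b ^ 2 * x₂ - b ^ 2 / c * (1 - a) = 0 := hfx₂
  have e₃ : x₃ ^ 3 + 1 / c * x₃ ^ 2 - b ^ 2 * x₃ - b ^ 2 / c * (1 - a) = 0 := hfx₃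
  -- Vieta via pairwise differences
  have q12 : x₁^2 + x₁*x₂ + x₂^2 + 1/c*(x₁+x₂) - b^2 = 0 := by
    have h : (x₁ - x₂) * (x₁^2 + x₁*x₂ + x₂^2 + 1/c*(x₁+x₂) - b^2) = 0 := by
      linear_combination e₁ - e₂
    exact (mul_eq_zero.mp h).resolve_left h12'
  have q23 : x₂^2 + x₂*x₃ + x₃^2 + 1/c*(x₂+x₃) - b^2 = 0 := by
    have h : (x₂ - x₃) * (x₂^2 + x₂*x₃ + x₃^2 + 1/c*(x₂+x₃) - b^2) = 0 := by
      linear_combination e₂ - e₃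
    exact (mul_eq_zero.mp h).resolve_left h23'
  have hA : x₁ + x₂ + x₃ = -(1/c) := by
    have h : (x₁ - x₃) * (x₁ + x₂ + x₃ + 1/c) = 0 := by linear_combination q12 - q23
    have := (mul_eq_zero.mp h).resolve_left h13'
    linarith
  have hB : x₁*x₂ + x₁*x₃ + x₂*x₃ = -b^2 := by
    linear_combination (x₁ + x₂) * hA - q12
  have hC : x₁*x₂*x₃ = b^2/c*(1-a) := by
    linear_combination e₁ + x₁ * hB - x₁ ^ 2 * hA
  -- factorization
  have hfac : ∀ x : ℝ, f x = (x - x₁) * (x - x₂) * (x - x₃) := by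
    intro x
    simp only [hfdef]
    linear_combination x ^ 2 * hA - x * hB + hC
  -- derivative
  have hd : ∀ x : ℝ, HasDerivAt f (3*x^2 + 1/c*(2*x) - b^2) x := by
    intro x
    have h := (((hasDerivAt_pow 3 x).add ((hasDerivAt_pow 2 x).const_mul (1/c))).sub
      ((hasDerivAt_id x).const_mul (b^2))).sub_const (b^2/c*(1-a))
    exact h.congr_deriv (by norm_num)
  have d₁ : deriv f x₁ = (x₁ - x₂) * (x₁ - x₃) := by
    rw [(hd x₁).deriv]; linear_combination 2*x₁*hA - hB
  have d₂ : deriv f x₂ = (x₂ - x₁) * (x₂ - x₃) := by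
    rw [(hd x₂).deriv]; linear_combination 2*x₂*hA - hB
  have d₃ : deriv f x₃ = (x₃ - x₁) * (x₃ - x₂) := by
    rw [(hd x₃).deriv]; linear_combination 2*x₃*hA - hB
  refine ⟨x₁, x₂, x₃, hx₁lt, hx₂gt, hx₂lt, hx₃gt, hfx₁, hfx₂, hfx₃, ?_, ?_, ?_, ?_⟩
  · rw [d₁]; exact mul_ne_zero h12' h13'
  · rw [d₂]
    exact mul_ne_zero (sub_ne_zero.mpr h12.ne') h23'
  · rw [d₃]
    exact mul_ne_zero (sub_ne_zero.mpr h13.ne') (sub_ne_zero.mpr h23.ne')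
  · intro x hx
    have h := (hfac x) ▸ hx
    rcases mul_eq_zero.mp h with h' | h'
    · rcases mul_eq_zero.mp h' with h'' | h''
      · exact Or.inl (sub_eq_zero.mp h'')
      · exact Or.inr (Or.inl (sub_eq_zero.mp h''))
    · exact Or.inr (Or.inr (sub_eq_zero.mp h'))
end

section
/- Let b > 0 and a ∈ (0,1). For each c > 0 let λ₁(c) denote the unique positive real root of the cubic f_c(X) = X³ + (1/c)·X² − b²·X − (b²/c)·(1−a). Then λ₁(c) < b for every c > 0, and λ₁ is a strictly increasing function of c on (0,∞). -/
/-- the positive eigenvalue `λ₁(c)` of the fast linearization is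
less than `b` and strictly increasing in `c`. -/
theorem positive_root_lt_b_and_strictMono (b a : ℝ) (hb : 0 < b)
    (ha : 0 < a) (ha1 : a < 1)
    (lam : ℝ → ℝ)
    (hlam : ∀ c : ℝ, 0 < c →
      0 < lam c ∧
      (lam c) ^ 3 + 1 / c * (lam c) ^ 2 - b ^ 2 * lam c - b ^ 2 / c * (1 - a) = 0 ∧
      ∀ x : ℝ, 0 < x →
        x ^ 3 + 1 / c * x ^ 2 - b ^ 2 * x - b ^ 2 / c * (1 - a) = 0 → x = lam c) :
    (∀ c : ℝ, 0 < c → lam c < b) ∧ StrictMonoOn lam (Set.Ioi 0) := by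
  have hltb : ∀ c : ℝ, 0 < c → lam c < b := by
    intro c hc
    obtain ⟨hpos, heq, -⟩ := hlam c hc
    by_contra h
    push_neg at h
    have ht : 0 < 1 / c := by positivity
    have h2 : 0 ≤ lam c ^ 3 - b ^ 2 * lam c := by
      nlinarith [mul_nonneg (mul_nonneg hpos.le (sub_nonneg.2 h))
        (by linarith : (0:ℝ) ≤ lam c + b)]
    have h3 : 0 ≤ 1 / c * lam c ^ 2 - b ^ 2 / c := by
      have hsq : b ^ 2 ≤ lam c ^ 2 := by nlinarith
      have := mul_le_mul_of_nonneg_left hsq ht.le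
      calc (0:ℝ) ≤ 1 / c * lam c ^ 2 - 1 / c * b ^ 2 := by linarith
      _ = 1 / c * lam c ^ 2 - b ^ 2 / c := by ring
    have h4 : 0 < b ^ 2 / c * a := by positivity
    have hexp : b ^ 2 / c * (1 - a) = b ^ 2 / c - b ^ 2 / c * a := by ring
    rw [hexp] at heq
    linarith
  refine ⟨hltb, ?_⟩
  intro c₁ hc₁ c₂ hc₂ h12
  simp only [Set.mem_Ioi] at hc₁ hc₂
  obtain ⟨hp1, heq1, -⟩ := hlam c₁ hc₁
  obtain ⟨hp2, heq2, huniq2⟩ := hlam c₂ hc₂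
  have hb1 := hltb c₁ hc₁
  -- key : lam c₁ ^ 2 - b^2*(1-a) > 0
  have key : 0 < (lam c₁) ^ 2 - b ^ 2 * (1 - a) := by
    have hc1' : c₁ ≠ 0 := ne_of_gt hc₁
    have heq1' := heq1
    field_simp at heq1'
    have h1 : (lam c₁) ^ 2 - b ^ 2 * (1 - a) = c₁ * (b ^ 2 * lam c₁ - (lam c₁) ^ 3) := by
      linear_combination heq1'
    have h2 : 0 < b ^ 2 * lam c₁ - (lam c₁) ^ 3 := by
      nlinarith [mul_pos hp1 (mul_pos (sub_pos.2 hb1) (by linarith : (0:ℝ) < lam c₁ + b))]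
    rw [h1]
    exact mul_pos hc₁ h2
  have hdiff : 0 < 1 / c₁ - 1 / c₂ := by
    have := one_div_lt_one_div_of_lt hc₁ h12
    linarith
  -- f c₂ at lam c₁ is negative
  set f : ℝ → ℝ := fun x => x ^ 3 + 1 / c₂ * x ^ 2 - b ^ 2 * x - b ^ 2 / c₂ * (1 - a) with hf
  have hfneg : f (lam c₁) < 0 := by
    have hexp : f (lam c₁) =
        ((lam c₁) ^ 3 + 1 / c₁ * (lam c₁) ^ 2 - b ^ 2 * lam c₁ - b ^ 2 / c₁ * (1 - a))
        - (1 / c₁ - 1 / c₂) * ((lam c₁) ^ 2 - b ^ 2 * (1 - a)) := by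
      simp only [hf]
      field_simp
      ring
    rw [hexp, heq1]
    nlinarith [mul_pos hdiff key]
  have hfb : 0 < f b := by
    have : f b = a * b ^ 2 / c₂ := by simp only [hf]; field_simp; ring
    rw [this]; positivity
  have hcont : ContinuousOn f (Set.Icc (lam c₁) b) := by
    apply Continuous.continuousOn; fun_prop
  have hivt := intermediate_value_Icc (le_of_lt hb1) hcont
  have h0mem : (0 : ℝ) ∈ Set.Icc (f (lam c₁)) (f b) := ⟨le_of_lt hfneg, le_of_lt hfb⟩
  obtain ⟨x, hxmem, hfx⟩ := hivt h0mem
  have hxpos : 0 < x := lt_of_lt_of_le hp1 hxmem.1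
  have hxeq : x = lam c₂ := huniq2 x hxpos hfx
  have hxne : x ≠ lam c₁ := by
    intro h; rw [h] at hfx; rw [hfx] at hfneg; exact lt_irrefl 0 hfneg
  rw [← hxeq]
  exact lt_of_le_of_ne hxmem.1 (Ne.symm hxne)
end

section
/- Let b > 0, β > 0, c > 0, ε > 0, s₀ ∈ (0,1), and a ∈ (0,1). The quartic polynomial g(X) = X⁴ + (1/c)·(1 + ε·(β·s₀ + 1))·X³ + (−b² + (ε/c²)·(β·s₀ + 1))·X² + (b²/c)·(a − 1 − ε·(β·s₀ + 1))·X + (b²·ε/c²)·(a − 1 − β·s₀) has exactly one complex root with positive real part; this root is real, and it is strictly greater than the unique positive real root λ₁ of the cubic f(X) = X³ + (1/c)·X² − b²·X − (b²/c)·(1−a). -/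
set_option maxHeartbeats 1000000 in
/-- A monic cubic `X³+pX²+qX+r` with `p,q,r > 0` and `pq > r` has no root
with positive real part (real/imag part equations lead to contradiction). -/
lemma aux_cubic_stable (p q r x u : ℝ) (hp : 0 < p) (hq : 0 < q) (hr : 0 < r)
    (hpq : 0 < p * q - r) (hx : 0 < x)
    (E1 : x ^ 3 - 3 * x * u ^ 2 + p * x ^ 2 - p * u ^ 2 + q * x + r = 0)
    (E2 : u * (3 * x ^ 2 - u ^ 2 + 2 * p * x + q) = 0) : False := by
  rcases eq_or_ne u 0 with hu | hu
  · rw [hu] at E1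
    nlinarith [E1, mul_pos (mul_pos hx hx) hx, mul_pos hp (mul_pos hx hx),
      mul_pos hq hx, hr]
  · have hq2 : 3 * x ^ 2 - u ^ 2 + 2 * p * x + q = 0 :=
      (mul_eq_zero.mp E2).resolve_left hu
    have hq3 : q = u ^ 2 - 3 * x ^ 2 - 2 * p * x := by linarith
    have hr2 : r = 2 * x ^ 3 + 2 * x * u ^ 2 + p * x ^ 2 + p * u ^ 2 := by
      linear_combination E1 - x * hq2
    have hfin : p * q - r = -(2 * x * ((x + p) ^ 2 + u ^ 2)) := by
      rw [hq3, hr2]; ring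
    nlinarith [hpq, hfin,
      mul_nonneg hx.le (add_nonneg (sq_nonneg (x + p)) (sq_nonneg u))]

set_option maxHeartbeats 1000000 in
/-- Positivity of the (rescaled) Routh–Hurwitz quantity. -/
lemma aux_T_pos (b c lam E a : ℝ) (hb : 0 < b) (hc : 0 < c) (hE : 0 < E)
    (ha : 0 < a) (ha1 : a < 1) (hlam : 0 < lam)
    (hf : 0 < c * lam ^ 3 + lam ^ 2 - b ^ 2 * c * lam - b ^ 2 * (1 - a)) :
    0 < E * (1 + E) - a * b ^ 2 * c ^ 2 + c * (1 + E) * lam * ((1 + E) + lam * c) := by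
  have hs1 : 0 < lam * (c * lam ^ 2 + lam - b ^ 2 * c) := by
    nlinarith [hf, mul_nonneg (sq_nonneg b) (by linarith : (0:ℝ) ≤ 1 - a)]
  have hs2 : 0 < c * lam ^ 2 + lam - b ^ 2 * c := by
    by_contra h
    push_neg at h
    have := mul_nonpos_of_nonneg_of_nonpos hlam.le h
    linarith
  have t1 : b ^ 2 * c ^ 2 < c * lam + c ^ 2 * lam ^ 2 := by nlinarith [hs2, hc]
  have t2 : c * lam * (1 * (1 + lam * c)) ≤
      c * lam * ((1 + E) * ((1 + E) + lam * c)) := by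
    apply mul_le_mul_of_nonneg_left _ (mul_pos hc hlam).le
    nlinarith [hE, mul_pos hE hE, mul_pos hE (mul_pos hc hlam)]
  have t3 : a * b ^ 2 * c ^ 2 < b ^ 2 * c ^ 2 := by
    nlinarith [mul_pos (mul_pos hb hb) (mul_pos hc hc)]
  have t4 : 0 < E * (1 + E) := mul_pos hE (by linarith)
  nlinarith [t1, t2, t3, t4]

set_option maxHeartbeats 1000000 in
/-- The quartic is positive at `M = lam1 + 1 + |A| + |B| + |C| + |D|`. -/
lemma aux_big_pos (A B C D lam1 M : ℝ) (hlam1 : 0 < lam1)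
    (hM : M = lam1 + 1 + |A| + |B| + |C| + |D|) :
    0 < M ^ 4 + A * M ^ 3 + B * M ^ 2 + C * M + D := by
  have h0A := abs_nonneg A
  have h0B := abs_nonneg B
  have h0C := abs_nonneg C
  have h0D := abs_nonneg D
  have hM1 : 1 ≤ M := by rw [hM]; linarith
  have hM0 : 0 < M := by linarith
  have hM3 : (0:ℝ) < M ^ 3 := pow_pos hM0 3
  have h2 : M ^ 2 ≤ M ^ 3 := by nlinarith
  have h1 : M ≤ M ^ 3 := by nlinarith
  have h0 : (1:ℝ) ≤ M ^ 3 := by nlinarith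
  have hA' : -|A| * M ^ 3 ≤ A * M ^ 3 :=
    mul_le_mul_of_nonneg_right (neg_abs_le A) hM3.le
  have hB' : -|B| * M ^ 3 ≤ B * M ^ 2 := by
    have e1 : |B| * M ^ 2 ≤ |B| * M ^ 3 := mul_le_mul_of_nonneg_left h2 h0B
    have e2 : -|B| * M ^ 2 ≤ B * M ^ 2 :=
      mul_le_mul_of_nonneg_right (neg_abs_le B) (by positivity)
    linarith
  have hC' : -|C| * M ^ 3 ≤ C * M := by
    have e1 : |C| * M ≤ |C| * M ^ 3 := mul_le_mul_of_nonneg_left h1 h0C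
    have e2 : -|C| * M ≤ C * M := mul_le_mul_of_nonneg_right (neg_abs_le C) hM0.le
    linarith
  have hD' : -|D| * M ^ 3 ≤ D := by
    have e1 : |D| * 1 ≤ |D| * M ^ 3 := mul_le_mul_of_nonneg_left h0 h0D
    have e2 : -|D| ≤ D := neg_abs_le D
    linarith
  have e3 : M ^ 4 = M * M ^ 3 := by ring
  have e4 : M * M ^ 3 = (lam1 + 1) * M ^ 3 + (|A| + |B| + |C| + |D|) * M ^ 3 := by
    rw [hM]; ring
  nlinarith [hA', hB', hC', hD', mul_pos (show (0:ℝ) < lam1 + 1 by linarith) hM3]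



set_option maxHeartbeats 2000000 in
/-- the characteristic quartic of the linearization of the full
system (1) at the equilibrium has exactly one root with positive real part;
this root is real and exceeds the positive root `lam1` of the `ε = 0` cubic. -/
theorem quartic_unique_unstable_root (b β c ε s₀ a lam1 : ℝ) (g : ℂ → ℂ)
    (hb : 0 < b) (hβ : 0 < β) (hc : 0 < c) (hε : 0 < ε)
    (hs₀ : 0 < s₀) (hs₀1 : s₀ < 1) (ha : 0 < a) (ha1 : a < 1)
    (hlam1pos : 0 < lam1)
    (hlam1root : lam1 ^ 3 + 1 / c * lam1 ^ 2 - b ^ 2 * lam1 - b ^ 2 / c * (1 - a) = 0)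
    (hlam1uniq : ∀ x : ℝ, 0 < x →
      x ^ 3 + 1 / c * x ^ 2 - b ^ 2 * x - b ^ 2 / c * (1 - a) = 0 → x = lam1)
    (hg : ∀ X : ℂ, g X =
      X ^ 4 + (((1 + ε * (β * s₀ + 1)) / c : ℝ) : ℂ) * X ^ 3 +
      (((-(b ^ 2) + ε / c ^ 2 * (β * s₀ + 1)) : ℝ) : ℂ) * X ^ 2 +
      ((b ^ 2 / c * (a - 1 - ε * (β * s₀ + 1)) : ℝ) : ℂ) * X +
      ((b ^ 2 * ε / c ^ 2 * (a - 1 - β * s₀) : ℝ) : ℂ)) :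
    ∃ z : ℂ, g z = 0 ∧ 0 < z.re ∧ (∀ y : ℂ, g y = 0 → 0 < y.re → y = z) ∧
      z.im = 0 ∧ lam1 < z.re := by
  have hc0 : c ≠ 0 := ne_of_gt hc
  set A : ℝ := (1 + ε * (β * s₀ + 1)) / c with hAdef
  set B : ℝ := -(b ^ 2) + ε / c ^ 2 * (β * s₀ + 1) with hBdef
  set C : ℝ := b ^ 2 / c * (a - 1 - ε * (β * s₀ + 1)) with hCdef
  set D : ℝ := b ^ 2 * ε / c ^ 2 * (a - 1 - β * s₀) with hDdef
  set G : ℝ → ℝ := fun x => x ^ 4 + A * x ^ 3 + B * x ^ 2 + C * x + D with hGdef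
  have hfac : ∀ x : ℝ, G x = (x + ε * (β * s₀ + 1) / c) *
      (x ^ 3 + 1 / c * x ^ 2 - b ^ 2 * x - b ^ 2 / c * (1 - a))
      - a * b ^ 2 * ε * β * s₀ / c ^ 2 := by
    intro x
    simp only [hGdef, hAdef, hBdef, hCdef, hDdef]
    field_simp
    ring
  have hk : 0 < a * b ^ 2 * ε * β * s₀ / c ^ 2 := by positivity
  have hGlam1 : G lam1 < 0 := by
    rw [hfac lam1, hlam1root]
    simp
    positivity
  set M : ℝ := lam1 + 1 + |A| + |B| + |C| + |D| with hMdef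
  have hMlam : lam1 < M := by
    have := abs_nonneg A; have := abs_nonneg B; have := abs_nonneg C; have := abs_nonneg D
    simp only [hMdef]; linarith
  have hGM : 0 < G M := aux_big_pos A B C D lam1 M hlam1pos hMdef
  have hcont : ContinuousOn G (Set.Icc lam1 M) := by
    apply Continuous.continuousOn
    simp only [hGdef]
    exact ((((continuous_pow 4).add (continuous_const.mul (continuous_pow 3))).add
      (continuous_const.mul (continuous_pow 2))).add
      (continuous_const.mul continuous_id)).add continuous_const
  obtain ⟨lam, hlammem, hGlam⟩ : ∃ lam ∈ Set.Icc lam1 M, G lam = 0 := by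
    have h := intermediate_value_Icc (le_of_lt hMlam) hcont
    have h0 : (0 : ℝ) ∈ Set.Icc (G lam1) (G M) := ⟨le_of_lt hGlam1, le_of_lt hGM⟩
    obtain ⟨lam, hmem, heq⟩ := h h0
    exact ⟨lam, hmem, heq⟩
  have hlamgt : lam1 < lam := by
    rcases lt_or_eq_of_le hlammem.1 with h | h
    · exact h
    · exfalso; rw [← h] at hGlam; linarith
  have hlampos : 0 < lam := lt_trans hlam1pos hlamgt
  have hE : 0 < ε * (β * s₀ + 1) := mul_pos hε (by nlinarith [mul_pos hβ hs₀])
  have hApos : 0 < A := by rw [hAdef]; exact div_pos (by linarith) hc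
  have hDneg : D < 0 := by
    rw [hDdef]
    have h1 : 0 < b ^ 2 * ε / c ^ 2 := by positivity
    have h2 : a - 1 - β * s₀ < 0 := by nlinarith [mul_pos hβ hs₀]
    exact mul_neg_of_pos_of_neg h1 h2
  have hGlam' : lam ^ 4 + A * lam ^ 3 + B * lam ^ 2 + C * lam + D = 0 := hGlam
  set p : ℝ := A + lam with hpdef
  set q : ℝ := B + lam * p with hqdef
  set r : ℝ := C + lam * q with hrdef
  have hDr : lam * r = -D := by
    simp only [hrdef, hqdef, hpdef]
    linear_combination hGlam'
  have hppos : 0 < p := by rw [hpdef]; linarith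
  have hrpos : 0 < r := by
    by_contra h
    push_neg at h
    have : lam * r ≤ 0 := mul_nonpos_of_nonneg_of_nonpos hlampos.le h
    linarith
  have hprod : (lam + ε * (β * s₀ + 1) / c) *
      (lam ^ 3 + 1 / c * lam ^ 2 - b ^ 2 * lam - b ^ 2 / c * (1 - a))
      = a * b ^ 2 * ε * β * s₀ / c ^ 2 := by
    have h1 := hfac lam
    rw [hGlam] at h1
    linarith
  have hμpos : 0 < lam + ε * (β * s₀ + 1) / c := by
    have := div_pos hE hc; linarith
  have hflam : 0 < lam ^ 3 + 1 / c * lam ^ 2 - b ^ 2 * lam - b ^ 2 / c * (1 - a) := by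
    by_contra h
    push_neg at h
    have := mul_nonpos_of_nonneg_of_nonpos hμpos.le h
    linarith
  have hflam2 : 0 < c * lam ^ 3 + lam ^ 2 - b ^ 2 * c * lam - b ^ 2 * (1 - a) := by
    have h1 := mul_pos hc hflam
    have h2 : c * (lam ^ 3 + 1 / c * lam ^ 2 - b ^ 2 * lam - b ^ 2 / c * (1 - a))
        = c * lam ^ 3 + lam ^ 2 - b ^ 2 * c * lam - b ^ 2 * (1 - a) := by
      field_simp
    linarith [h2 ▸ h1]
  have hT := aux_T_pos b c lam (ε * (β * s₀ + 1)) a hb hc hE ha ha1 hlampos hflam2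
  have hc3 : (0:ℝ) < c ^ 3 := pow_pos hc 3
  have hconv : c ^ 3 * (A * q - C) = ε * (β * s₀ + 1) * (1 + ε * (β * s₀ + 1))
      - a * b ^ 2 * c ^ 2
      + c * (1 + ε * (β * s₀ + 1)) * lam * ((1 + ε * (β * s₀ + 1)) + lam * c) := by
    simp only [hqdef, hpdef, hAdef, hBdef, hCdef]
    field_simp
    ring
  have hAqC : 0 < A * q - C := by
    by_contra h
    push_neg at h
    have := mul_nonpos_of_nonneg_of_nonpos hc3.le h
    linarith [hconv ▸ this]
  have hpq : 0 < p * q - r := by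
    have h1 : p * q - r = A * q - C := by simp only [hpdef, hrdef]; ring
    linarith
  have hqpos : 0 < q := by
    by_contra h
    push_neg at h
    have : p * q ≤ 0 := mul_nonpos_of_nonneg_of_nonpos hppos.le h
    linarith
  refine ⟨(lam : ℂ), ?_, by simpa using hlampos, ?_, by simp, by simpa using hlamgt⟩
  · rw [hg]
    exact_mod_cast hGlam'
  · intro y hy hyre
    rw [hg] at hy
    by_contra hne
    have e1 : (p : ℂ) - (lam : ℂ) = ((A : ℝ) : ℂ) := by
      rw [hpdef]; push_cast; ring
    have e2 : (q : ℂ) - (lam : ℂ) * (p : ℂ) = ((B : ℝ) : ℂ) := by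
      rw [hqdef]; push_cast; ring
    have e3 : (r : ℂ) - (lam : ℂ) * (q : ℂ) = ((C : ℝ) : ℂ) := by
      rw [hrdef]; push_cast; ring
    have e4 : (lam : ℂ) * (r : ℂ) = -((D : ℝ) : ℂ) := by exact_mod_cast hDr
    have hfac2 : (y - (lam : ℂ)) * (y ^ 3 + (p : ℂ) * y ^ 2 + (q : ℂ) * y + (r : ℂ)) = 0 := by
      linear_combination hy + y ^ 3 * e1 + y ^ 2 * e2 + y * e3 - e4
    have hcub : y ^ 3 + (p : ℂ) * y ^ 2 + (q : ℂ) * y + (r : ℂ) = 0 := by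
      rcases mul_eq_zero.mp hfac2 with h | h
      · exact absurd (by linear_combination h) hne
      · exact h
    have hre : (y ^ 3 + (p : ℂ) * y ^ 2 + (q : ℂ) * y + (r : ℂ)).re = 0 := by rw [hcub]; rfl
    have him : (y ^ 3 + (p : ℂ) * y ^ 2 + (q : ℂ) * y + (r : ℂ)).im = 0 := by rw [hcub]; rfl
    simp only [pow_succ, pow_zero, one_mul, Complex.add_re, Complex.add_im, Complex.mul_re,
      Complex.mul_im, Complex.ofReal_re, Complex.ofReal_im, zero_mul, mul_zero, sub_zero,
      zero_add, add_zero, zero_sub] at hre him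
    have E1 : y.re ^ 3 - 3 * y.re * y.im ^ 2 + p * y.re ^ 2 - p * y.im ^ 2
        + q * y.re + r = 0 := by linear_combination hre
    have E2 : y.im * (3 * y.re ^ 2 - y.im ^ 2 + 2 * p * y.re + q) = 0 := by
      linear_combination him
    exact aux_cubic_stable p q r y.re y.im hppos hqpos hrpos hpq hyre E1 E2
end
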